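/- arXiv:2207.07544 — 5 statements merged into one kernel-verified Lean document; each statement's English description precedes it below -/
import Mathlib

section
/- A stochastic kernel Ψ on S1×S2 given S3 is semi-uniform Feller if and only if the following holds: for each s3 ∈ S3 the topology of S1 has a countable base τ_b^{s3} such that (i) S1 ∈ τ_b^{s3}, and (ii) for each finite intersection O = O_1 ∩ ⋯ ∩ O_k of sets O_1, …, O_k ∈ τ_b^{s3}, the family of functions { s ↦ Ψ(O×B|s) : B ∈ B(S2) } is equicontinuous at s3, i.e., lim_{s→s3} sup_{B ∈ B(S2)} | Ψ(O×B|s) − Ψ(O×B|s3) | = 0. -/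
open MeasureTheory ProbabilityTheory Filter Topology

/-- A stochastic kernel `Ψ` on `X × Y` given `T` is *semi-uniform Feller* if for every
sequence `t n → t` in `T` and every bounded continuous `f : X → ℝ`,
`sup_{B ∈ B(Y)} |∫ f dΨ(·, B | t n) − ∫ f dΨ(·, B | t)| → 0`, where `Ψ(A, B | t) = Ψ(A × B | t)`. -/
def SemiUniformFeller {X Y T : Type*} [TopologicalSpace X] [MeasurableSpace X]
    [MeasurableSpace Y] [TopologicalSpace T] [MeasurableSpace T]
    (Ψ : Kernel T (X × Y)) : Prop :=
  ∀ (s : ℕ → T) (t : T), Tendsto s atTop (𝓝 t) → ∀ f : BoundedContinuousFunction X ℝ,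
    Tendsto (fun n => ⨆ B : {B : Set Y // MeasurableSet B},
      |(∫ x in Set.univ ×ˢ B.1, f x.1 ∂(Ψ (s n))) - ∫ x in Set.univ ×ˢ B.1, f x.1 ∂(Ψ t)|)
      atTop (𝓝 0)


section SUFAuxSection

set_option linter.unusedSectionVars false
set_option linter.unusedVariables false
set_option maxHeartbeats 1000000

open Set Metric TopologicalSpace BoundedContinuousFunction

namespace SUFAux



variable {S1 S2 S3 : Type*}
    [MetricSpace S1] [MeasurableSpace S1] [BorelSpace S1]
    [MetricSpace S2] [MeasurableSpace S2] [BorelSpace S2]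
    [MetricSpace S3] [MeasurableSpace S3] [BorelSpace S3]

noncomputable def D (Ψ : Kernel S3 (S1 × S2)) (t s : S3) (U : Set S1) : ℝ :=
  ⨆ B : {B : Set S2 // MeasurableSet B},
    |((Ψ s) (U ×ˢ B.1)).toReal - ((Ψ t) (U ×ˢ B.1)).toReal|

variable (Ψ : Kernel S3 (S1 × S2)) [IsMarkovKernel Ψ]

instance : Nonempty {B : Set S2 // MeasurableSet B} := ⟨⟨∅, MeasurableSet.empty⟩⟩

lemma abs_term_le_two (t s : S3) (U : Set S1) (B : Set S2) :
    |((Ψ s) (U ×ˢ B)).toReal - ((Ψ t) (U ×ˢ B)).toReal| ≤ 2 := by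
  have h1 : ((Ψ s) (U ×ˢ B)).toReal ≤ 1 := by
    refine ENNReal.toReal_le_of_le_ofReal zero_le_one ?_
    simpa using prob_le_one
  have h1' : (0:ℝ) ≤ ((Ψ s) (U ×ˢ B)).toReal := ENNReal.toReal_nonneg
  have h2 : ((Ψ t) (U ×ˢ B)).toReal ≤ 1 := by
    refine ENNReal.toReal_le_of_le_ofReal zero_le_one ?_
    simpa using prob_le_one
  have h2' : (0:ℝ) ≤ ((Ψ t) (U ×ˢ B)).toReal := ENNReal.toReal_nonneg
  rw [abs_sub_le_iff]; constructor <;> linarith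

lemma bddAbove_term (t s : S3) (U : Set S1) :
    BddAbove (Set.range fun B : {B : Set S2 // MeasurableSet B} =>
      |((Ψ s) (U ×ˢ B.1)).toReal - ((Ψ t) (U ×ˢ B.1)).toReal|) := by
  refine ⟨2, ?_⟩
  rintro x ⟨B, rfl⟩
  exact abs_term_le_two Ψ t s U B.1

lemma D_nonneg (t s : S3) (U : Set S1) : 0 ≤ D Ψ t s U := by
  refine Real.iSup_nonneg fun B => abs_nonneg _

lemma le_D (t s : S3) (U : Set S1) (B : Set S2) (hB : MeasurableSet B) :
    |((Ψ s) (U ×ˢ B)).toReal - ((Ψ t) (U ×ˢ B)).toReal| ≤ D Ψ t s U :=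
  le_ciSup (bddAbove_term Ψ t s U) (⟨B, hB⟩ : {B : Set S2 // MeasurableSet B})

lemma D_le (t s : S3) (U : Set S1) {c : ℝ}
    (h : ∀ B : Set S2, MeasurableSet B →
      |((Ψ s) (U ×ˢ B)).toReal - ((Ψ t) (U ×ˢ B)).toReal| ≤ c) : D Ψ t s U ≤ c :=
  ciSup_le fun B => h B.1 B.2


end SUFAux


lemma tendsto_zero_of_eventually_lt {α : Type*} {l : Filter α} {u : α → ℝ}
    (h0 : ∀ n, 0 ≤ u n) (h : ∀ ε > (0:ℝ), ∀ᶠ n in l, u n < ε) :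
    Tendsto u l (𝓝 0) := by
  rw [NormedAddCommGroup.tendsto_nhds_zero]
  intro ε hε
  filter_upwards [h ε hε] with n hn
  rwa [Real.norm_eq_abs, abs_of_nonneg (h0 n)]

namespace SUFAux


variable {S1 S2 S3 : Type*}
    [MetricSpace S1] [SeparableSpace S1] [MeasurableSpace S1] [BorelSpace S1]
    [SecondCountableTopology S1]
    [MetricSpace S2] [MeasurableSpace S2] [BorelSpace S2]
    [MetricSpace S3] [MeasurableSpace S3] [BorelSpace S3]

noncomputable def J (Ψ : Kernel S3 (S1 × S2)) (s : S3) (B : Set S2) (f : S1 → ℝ) : ℝ :=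
  ∫ x in univ ×ˢ B, f x.1 ∂(Ψ s)

variable (Ψ : Kernel S3 (S1 × S2)) [IsMarkovKernel Ψ]

lemma integrable_comp_fst (f : S1 →ᵇ ℝ) (μ : Measure (S1 × S2)) [IsFiniteMeasure μ] :
    Integrable (fun x : S1 × S2 => f x.1) μ :=
  (f.compContinuous (⟨Prod.fst, continuous_fst⟩ : C(S1 × S2, S1))).integrable μ

lemma indicator_fst (O : Set S1) :
    (fun x : S1 × S2 => O.indicator (fun _ => (1:ℝ)) x.1)
      = (O ×ˢ (univ : Set S2)).indicator (fun _ => (1:ℝ)) := by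
  funext x
  by_cases hx : x.1 ∈ O
  · rw [Set.indicator_of_mem hx, Set.indicator_of_mem (by simp [hx])]
  · rw [Set.indicator_of_notMem hx, Set.indicator_of_notMem (by simp [hx])]

lemma J_indicator (s : S3) {O : Set S1} (hO : MeasurableSet O) {B : Set S2}
    (hB : MeasurableSet B) :
    J Ψ s B (O.indicator fun _ => (1:ℝ)) = ((Ψ s) (O ×ˢ B)).toReal := by
  unfold J
  rw [indicator_fst]
  rw [integral_indicator_const (1:ℝ) (hO.prod MeasurableSet.univ),
    measureReal_restrict_apply (hO.prod MeasurableSet.univ)]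
  rw [Set.prod_inter_prod, Set.inter_univ, Set.univ_inter, smul_eq_mul, mul_one, measureReal_def]

lemma meas_le_J (s : S3) {O : Set S1} (hO : MeasurableSet O) {B : Set S2}
    (hB : MeasurableSet B) (g : S1 →ᵇ ℝ) (hg0 : ∀ x, 0 ≤ g x) (hg1 : ∀ x ∈ O, 1 ≤ g x) :
    ((Ψ s) (O ×ˢ B)).toReal ≤ J Ψ s B g := by
  rw [← J_indicator Ψ s hO hB]
  refine integral_mono ?_ ?_ ?_
  · rw [indicator_fst]
    exact (integrable_const (1:ℝ)).indicator (hO.prod MeasurableSet.univ)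
  · exact integrable_comp_fst g _
  · intro x
    by_cases hx : x.1 ∈ O
    · simpa [Set.indicator_of_mem hx] using hg1 x.1 hx
    · simpa [Set.indicator_of_notMem hx] using hg0 x.1

lemma J_le_meas (s : S3) {O : Set S1} (hO : MeasurableSet O) {B : Set S2}
    (hB : MeasurableSet B) (f : S1 →ᵇ ℝ) (hf : ∀ x, f x ≤ O.indicator (fun _ => (1:ℝ)) x) :
    J Ψ s B f ≤ ((Ψ s) (O ×ˢ B)).toReal := by
  rw [← J_indicator Ψ s hO hB]
  refine integral_mono (integrable_comp_fst f _) ?_ ?_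
  · rw [indicator_fst]
    exact (integrable_const (1:ℝ)).indicator (hO.prod MeasurableSet.univ)
  · exact fun x => hf x.1

lemma J_mono_set (s : S3) {B : Set S2} (f : S1 →ᵇ ℝ) (hf0 : ∀ x, 0 ≤ f x) :
    J Ψ s B f ≤ J Ψ s univ f := by
  refine setIntegral_mono_set (integrable_comp_fst f _).integrableOn ?_ ?_
  · exact Filter.Eventually.of_forall fun x => hf0 x.1
  · exact HasSubset.Subset.eventuallyLE (by intro x hx; simp)

lemma J_sub (s : S3) {B : Set S2} (f g : S1 →ᵇ ℝ) :
    J Ψ s B g - J Ψ s B f = J Ψ s B (g - f) := by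
  unfold J
  rw [← integral_sub (integrable_comp_fst g _) (integrable_comp_fst f _)]
  rfl



variable {S1 : Type*} [MetricSpace S1]

/-- inner approximation to the indicator of an open set `O`: `min 1 (m * infDist x Oᶜ)`. -/
noncomputable def apprIn (O : Set S1) (m : ℕ) : S1 →ᵇ ℝ :=
  BoundedContinuousFunction.mkOfBound
    ⟨fun x => min 1 ((m:ℝ) * infDist x Oᶜ),
      continuous_const.min (continuous_const.mul (continuous_infDist_pt _))⟩ 1
    (fun x y => Real.dist_le_of_mem_Icc_01
      ⟨le_min zero_le_one (mul_nonneg (Nat.cast_nonneg _) infDist_nonneg), min_le_left _ _⟩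
      ⟨le_min zero_le_one (mul_nonneg (Nat.cast_nonneg _) infDist_nonneg), min_le_left _ _⟩)

/-- outer approximation to the indicator of a closed set `C`: `max 0 (1 - m * infDist x C)`. -/
noncomputable def apprOut (C : Set S1) (m : ℕ) : S1 →ᵇ ℝ :=
  BoundedContinuousFunction.mkOfBound
    ⟨fun x => max 0 (1 - (m:ℝ) * infDist x C),
      continuous_const.max (continuous_const.sub (continuous_const.mul (continuous_infDist_pt _)))⟩ 1
    (fun x y => Real.dist_le_of_mem_Icc_01
      ⟨le_max_left _ _, max_le zero_le_one
        (sub_le_self _ (mul_nonneg (Nat.cast_nonneg _) infDist_nonneg))⟩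
      ⟨le_max_left _ _, max_le zero_le_one
        (sub_le_self _ (mul_nonneg (Nat.cast_nonneg _) infDist_nonneg))⟩)

lemma apprIn_apply (O : Set S1) (m : ℕ) (x : S1) :
    apprIn O m x = min 1 ((m:ℝ) * infDist x Oᶜ) := rfl

lemma apprOut_apply (C : Set S1) (m : ℕ) (x : S1) :
    apprOut C m x = max 0 (1 - (m:ℝ) * infDist x C) := rfl

lemma apprIn_nonneg (O : Set S1) (m : ℕ) (x : S1) : 0 ≤ apprIn O m x :=
  le_min zero_le_one (mul_nonneg (Nat.cast_nonneg _) infDist_nonneg)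

lemma apprIn_le_indicator (O : Set S1) (m : ℕ) (x : S1) :
    apprIn O m x ≤ O.indicator (fun _ => (1:ℝ)) x := by
  by_cases hx : x ∈ O
  · rw [Set.indicator_of_mem hx, apprIn_apply]; exact min_le_left _ _
  · rw [Set.indicator_of_notMem hx, apprIn_apply,
      infDist_zero_of_mem (by simpa using hx : x ∈ Oᶜ)]
    simp

lemma apprOut_nonneg (C : Set S1) (m : ℕ) (x : S1) : 0 ≤ apprOut C m x := le_max_left _ _

lemma apprOut_le_one (C : Set S1) (m : ℕ) (x : S1) : apprOut C m x ≤ 1 :=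
  max_le zero_le_one (sub_le_self _ (mul_nonneg (Nat.cast_nonneg _) infDist_nonneg))

lemma indicator_le_apprOut (C : Set S1) (m : ℕ) (x : S1) :
    C.indicator (fun _ => (1:ℝ)) x ≤ apprOut C m x := by
  by_cases hx : x ∈ C
  · rw [Set.indicator_of_mem hx, apprOut_apply, infDist_zero_of_mem hx]
    simp
  · rw [Set.indicator_of_notMem hx]; exact le_max_left _ _

lemma one_le_apprOut_of_mem (C : Set S1) (m : ℕ) {x : S1} (hx : x ∈ C) :
    1 ≤ apprOut C m x := by
  have := indicator_le_apprOut C m x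
  rwa [Set.indicator_of_mem hx] at this

lemma apprIn_le_apprOut {O C : Set S1} (hsub : O ⊆ C) (m m' : ℕ) (x : S1) :
    apprIn O m x ≤ apprOut C m' x :=
  (apprIn_le_indicator O m x).trans ((Set.indicator_le_indicator_of_subset hsub
    (fun _ => zero_le_one) x).trans (indicator_le_apprOut C m' x))

lemma apprIn_tendsto {O : Set S1} (hO : IsOpen O) (hc : Oᶜ.Nonempty) (x : S1) :
    Tendsto (fun m => apprIn O m x) atTop (𝓝 (O.indicator (fun _ => (1:ℝ)) x)) := by
  by_cases hx : x ∈ O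
  · rw [Set.indicator_of_mem hx]
    have hd : 0 < infDist x Oᶜ :=
      (hO.isClosed_compl.notMem_iff_infDist_pos hc).1 (by simpa using hx)
    obtain ⟨N, hN⟩ := exists_nat_ge (1 / infDist x Oᶜ)
    refine tendsto_atTop_of_eventually_const (i₀ := N) fun m hm => ?_
    have h1 : (1:ℝ) ≤ (m:ℝ) * infDist x Oᶜ :=
      (div_le_iff₀ hd).1 (hN.trans (Nat.cast_le.2 hm))
    rw [apprIn_apply]
    exact min_eq_left h1
  · rw [Set.indicator_of_notMem hx]
    have heq : ∀ m : ℕ, apprIn O m x = 0 := by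
      intro m
      rw [apprIn_apply, infDist_zero_of_mem (by simpa using hx : x ∈ Oᶜ)]
      simp
    simp only [heq]; exact tendsto_const_nhds

lemma apprOut_tendsto {C : Set S1} (hC : IsClosed C) (hc : C.Nonempty) (x : S1) :
    Tendsto (fun m => apprOut C m x) atTop (𝓝 (C.indicator (fun _ => (1:ℝ)) x)) := by
  by_cases hx : x ∈ C
  · rw [Set.indicator_of_mem hx]
    have heq : ∀ m : ℕ, apprOut C m x = 1 := by
      intro m; rw [apprOut_apply, infDist_zero_of_mem hx]; simp
    simp only [heq]; exact tendsto_const_nhds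
  · rw [Set.indicator_of_notMem hx]
    have hd : 0 < infDist x C := (hC.notMem_iff_infDist_pos hc).1 hx
    obtain ⟨N, hN⟩ := exists_nat_ge (1 / infDist x C)
    refine tendsto_atTop_of_eventually_const (i₀ := N) fun m hm => ?_
    have h1 : (1:ℝ) ≤ (m:ℝ) * infDist x C :=
      (div_le_iff₀ hd).1 (hN.trans (Nat.cast_le.2 hm))
    rw [apprOut_apply]
    exact max_eq_left (by linarith)



variable {S1 S2 S3 : Type*}
    [MetricSpace S1] [SeparableSpace S1] [MeasurableSpace S1] [BorelSpace S1]
    [SecondCountableTopology S1]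
    [MetricSpace S2] [MeasurableSpace S2] [BorelSpace S2]
    [MetricSpace S3] [MeasurableSpace S3] [BorelSpace S3]
    (Ψ : Kernel S3 (S1 × S2)) [IsMarkovKernel Ψ]

lemma tendsto_J_apprIn (t : S3) {O : Set S1} (hO : IsOpen O) (hc : Oᶜ.Nonempty) :
    Tendsto (fun m => J Ψ t univ (apprIn O m)) atTop (𝓝 (((Ψ t) (O ×ˢ univ)).toReal)) := by
  rw [← J_indicator Ψ t hO.measurableSet MeasurableSet.univ]
  unfold J
  refine tendsto_integral_of_dominated_convergence (fun _ => (1:ℝ)) ?_ ?_ ?_ ?_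
  · exact fun m => ((apprIn O m).continuous.comp continuous_fst).aestronglyMeasurable
  · exact integrable_const 1
  · intro m
    refine Eventually.of_forall fun x => ?_
    rw [Real.norm_eq_abs, abs_of_nonneg (apprIn_nonneg O m x.1)]
    rw [apprIn_apply]; exact min_le_left _ _
  · exact Eventually.of_forall fun x => apprIn_tendsto hO hc x.1

lemma tendsto_J_apprOut (t : S3) {O : Set S1} (hne : O.Nonempty) :
    Tendsto (fun m => J Ψ t univ (apprOut (closure O) m)) atTop
      (𝓝 (((Ψ t) ((closure O) ×ˢ univ)).toReal)) := by
  rw [← J_indicator Ψ t isClosed_closure.measurableSet MeasurableSet.univ]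
  unfold J
  refine tendsto_integral_of_dominated_convergence (fun _ => (1:ℝ)) ?_ ?_ ?_ ?_
  · exact fun m => ((apprOut (closure O) m).continuous.comp continuous_fst).aestronglyMeasurable
  · exact integrable_const 1
  · intro m
    refine Eventually.of_forall fun x => ?_
    rw [Real.norm_eq_abs, abs_of_nonneg (apprOut_nonneg _ m x.1)]
    exact apprOut_le_one _ m x.1
  · exact Eventually.of_forall fun x =>
      apprOut_tendsto isClosed_closure (hne.mono subset_closure) x.1

lemma abs_J_le (s : S3) (B : Set S2) (f : S1 →ᵇ ℝ) : |J Ψ s B f| ≤ ‖f‖ := by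
  unfold J
  rw [← Real.norm_eq_abs]
  refine le_trans (norm_integral_le_of_norm_le_const
    (Eventually.of_forall fun x => f.norm_coe_le_norm x.1)) ?_
  rw [measureReal_restrict_apply_univ, measureReal_def]
  refine mul_le_of_le_one_right (norm_nonneg f) ?_
  refine ENNReal.toReal_le_of_le_ofReal zero_le_one (by simpa using prob_le_one)

lemma le_supJ (s t : S3) {B : Set S2} (hB : MeasurableSet B) (f : S1 →ᵇ ℝ) :
    |J Ψ s B f - J Ψ t B f| ≤ ⨆ B' : {B : Set S2 // MeasurableSet B},
      |(∫ x in Set.univ ×ˢ B'.1, f x.1 ∂(Ψ s)) - ∫ x in Set.univ ×ˢ B'.1, f x.1 ∂(Ψ t)| := by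
  refine le_ciSup (f := fun B' : {B : Set S2 // MeasurableSet B} =>
    |(∫ x in Set.univ ×ˢ B'.1, f x.1 ∂(Ψ s)) - ∫ x in Set.univ ×ˢ B'.1, f x.1 ∂(Ψ t)|)
    ⟨2 * ‖f‖, ?_⟩ (⟨B, hB⟩ : {B : Set S2 // MeasurableSet B})
  rintro x ⟨B', rfl⟩
  have h1 := abs_J_le Ψ s B'.1 f
  have h2 := abs_J_le Ψ t B'.1 f
  have := abs_sub (J Ψ s B'.1 f) (J Ψ t B'.1 f)
  calc |J Ψ s B'.1 f - J Ψ t B'.1 f| ≤ |J Ψ s B'.1 f| + |J Ψ t B'.1 f| := abs_sub _ _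
    _ ≤ 2 * ‖f‖ := by linarith

lemma D_empty (t s : S3) : D Ψ t s (∅ : Set S1) = 0 := by
  unfold D
  simp [Set.empty_prod]

lemma D_univ_tendsto (hSUF : SemiUniformFeller Ψ) (t : S3) (sq : ℕ → S3)
    (hsq : Tendsto sq atTop (𝓝 t)) :
    Tendsto (fun n => D Ψ t (sq n) (univ : Set S1)) atTop (𝓝 0) := by
  have key : ∀ (s : S3) (B : Set S2),
      (∫ x in Set.univ ×ˢ B, ((BoundedContinuousFunction.const S1 (1:ℝ)) x.1) ∂(Ψ s))
        = ((Ψ s) ((univ : Set S1) ×ˢ B)).toReal := by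
    intro s B
    simp [setIntegral_const, measureReal_def]
  have h := hSUF sq t hsq (BoundedContinuousFunction.const S1 (1:ℝ))
  refine (tendsto_congr fun n => ?_).2 h
  unfold D
  exact iSup_congr fun B => by rw [key, key]

lemma tendsto_D_of_nullFrontier (hSUF : SemiUniformFeller Ψ) (t : S3) (sq : ℕ → S3)
    (hsq : Tendsto sq atTop (𝓝 t)) {O : Set S1} (hO : IsOpen O)
    (hfr : (Ψ t) ((frontier O) ×ˢ univ) = 0) :
    Tendsto (fun n => D Ψ t (sq n) O) atTop (𝓝 0) := by
  rcases eq_empty_or_nonempty O with rfl | hne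
  · simpa [D_empty] using tendsto_const_nhds
  by_cases hc : Oᶜ.Nonempty
  swap
  · rw [Set.not_nonempty_iff_eq_empty, compl_empty_iff] at hc
    subst hc
    exact D_univ_tendsto Ψ hSUF t sq hsq
  have hclm : (Ψ t) ((closure O) ×ˢ univ) = (Ψ t) (O ×ˢ univ) := by
    refine le_antisymm ?_ (measure_mono (Set.prod_mono subset_closure le_rfl))
    calc (Ψ t) ((closure O) ×ˢ univ)
        ≤ (Ψ t) ((O ×ˢ univ) ∪ ((frontier O) ×ˢ univ)) := by
          refine measure_mono ?_
          rw [← Set.union_prod]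
          refine Set.prod_mono ?_ le_rfl
          intro x hx
          by_cases h : x ∈ O
          · exact Or.inl h
          · exact Or.inr ⟨hx, by rwa [hO.interior_eq]⟩
      _ ≤ (Ψ t) (O ×ˢ univ) + (Ψ t) ((frontier O) ×ˢ univ) := measure_union_le _ _
      _ = (Ψ t) (O ×ˢ univ) := by rw [hfr, add_zero]
  set L := ((Ψ t) (O ×ˢ univ)).toReal with hL
  refine tendsto_zero_of_eventually_lt (fun n => D_nonneg Ψ t (sq n) O) fun ε hε => ?_
  have hIn := tendsto_J_apprIn Ψ t hO hc
  have hOut := tendsto_J_apprOut Ψ t hne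
  rw [hclm] at hOut
  obtain ⟨m1, hm1⟩ := (hIn.eventually (eventually_gt_nhds
    (by linarith : L - ε/8 < L))).exists
  obtain ⟨m2, hm2⟩ := (hOut.eventually (eventually_lt_nhds
    (by linarith : L < L + ε/8))).exists
  set F := apprIn O m1 with hF
  set G := apprOut (closure O) m2 with hG
  have hFG : J Ψ t univ G - J Ψ t univ F < ε/4 := by linarith
  have hSF := hSUF sq t hsq F
  have hSG := hSUF sq t hsq G
  filter_upwards [hSF.eventually (eventually_lt_nhds (by linarith : (0:ℝ) < ε/4)),
    hSG.eventually (eventually_lt_nhds (by linarith : (0:ℝ) < ε/4))] with n hnF hnG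
  refine lt_of_le_of_lt (D_le Ψ t (sq n) O fun B hB => ?_) (by linarith : (3:ℝ)*ε/4 < ε)
  have f1 : ((Ψ (sq n)) (O ×ˢ B)).toReal ≤ J Ψ (sq n) B G :=
    meas_le_J Ψ (sq n) hO.measurableSet hB G (apprOut_nonneg _ m2)
      (fun x hx => one_le_apprOut_of_mem _ m2 (subset_closure hx))
  have f2 : J Ψ (sq n) B F ≤ ((Ψ (sq n)) (O ×ˢ B)).toReal :=
    J_le_meas Ψ (sq n) hO.measurableSet hB F (apprIn_le_indicator O m1)
  have f3 : ((Ψ t) (O ×ˢ B)).toReal ≤ J Ψ t B G :=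
    meas_le_J Ψ t hO.measurableSet hB G (apprOut_nonneg _ m2)
      (fun x hx => one_le_apprOut_of_mem _ m2 (subset_closure hx))
  have f4 : J Ψ t B F ≤ ((Ψ t) (O ×ˢ B)).toReal :=
    J_le_meas Ψ t hO.measurableSet hB F (apprIn_le_indicator O m1)
  have f5 : |J Ψ (sq n) B G - J Ψ t B G| < ε/4 := lt_of_le_of_lt (le_supJ Ψ (sq n) t hB G) hnG
  have f6 : |J Ψ (sq n) B F - J Ψ t B F| < ε/4 := lt_of_le_of_lt (le_supJ Ψ (sq n) t hB F) hnF
  have f7 : J Ψ t B G - J Ψ t B F ≤ J Ψ t univ G - J Ψ t univ F := by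
    rw [J_sub, J_sub]
    refine J_mono_set Ψ t (G - F) fun x => ?_
    rw [BoundedContinuousFunction.sub_apply, sub_nonneg]
    exact apprIn_le_apprOut subset_closure m1 m2 x
  rw [abs_sub_le_iff]
  have f5' := abs_lt.1 f5
  have f6' := abs_lt.1 f6
  constructor <;> [skip; skip] <;> obtain ⟨f5a, f5b⟩ := f5' <;> obtain ⟨f6a, f6b⟩ := f6' <;> linarith



lemma exists_nullFrontier_basis (μ : Measure S1) [IsFiniteMeasure μ] :
    ∃ τ : Set (Set S1), τ.Countable ∧ IsTopologicalBasis τ ∧ (univ : Set S1) ∈ τ ∧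
      ∀ U ∈ τ, IsOpen U ∧ μ (frontier U) = 0 := by
  obtain ⟨Ds, hDc, hDd⟩ := TopologicalSpace.exists_countable_dense S1
  have hball : ∀ (x : S1) (q : ℚ), 0 < q →
      ∃ r : ℝ, r ∈ Set.Ioo ((q:ℝ)/2) (q:ℝ) ∧ μ (frontier (ball x r)) = 0 := by
    intro x q hq
    have hq' : (0:ℝ) < (q:ℝ) := by exact_mod_cast hq
    obtain ⟨r, hr, h0⟩ := exists_null_frontier_thickening μ ({x} : Set S1)
      (half_lt_self hq')
    rw [thickening_singleton] at h0
    exact ⟨r, hr, h0⟩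
  classical
  let rad : S1 → ℚ → ℝ := fun x q => if h : 0 < q then (hball x q h).choose else 1
  have hrad : ∀ (x : S1) (q : ℚ) (h : 0 < q),
      rad x q ∈ Set.Ioo ((q:ℝ)/2) (q:ℝ) ∧ μ (frontier (ball x (rad x q))) = 0 := by
    intro x q h
    simp only [rad, dif_pos h]
    exact (hball x q h).choose_spec
  refine ⟨insert univ ((fun p : S1 × ℚ => ball p.1 (rad p.1 p.2)) ''
      (Ds ×ˢ {q : ℚ | 0 < q})), ?_, ?_, Set.mem_insert _ _, ?_⟩
  · exact Set.Countable.insert _ ((hDc.prod (Set.to_countable _)).image _)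
  · refine isTopologicalBasis_of_isOpen_of_nhds ?_ ?_
    · rintro U (rfl | ⟨⟨x, q⟩, _, rfl⟩)
      · exact isOpen_univ
      · exact isOpen_ball
    · intro x U hxU hU
      obtain ⟨ε, hε, hbU⟩ := Metric.isOpen_iff.1 hU x hxU
      obtain ⟨q, hq0, hqε⟩ := exists_rat_btwn (by linarith : (0:ℝ) < ε/2)
      have hq0' : 0 < q := by exact_mod_cast hq0
      obtain ⟨d, hd, hdx⟩ := hDd.exists_dist_lt x (by positivity : (0:ℝ) < (q:ℝ)/2)
      obtain ⟨⟨hr1, hr2⟩, _⟩ := hrad d q hq0'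
      refine ⟨ball d (rad d q), Set.mem_insert_of_mem _
        ⟨(d, q), ⟨hd, hq0'⟩, rfl⟩, ?_, fun y hy => hbU ?_⟩
      · rw [mem_ball]
        exact lt_trans hdx hr1
      · rw [mem_ball]
        calc dist y x ≤ dist y d + dist d x := dist_triangle _ _ _
          _ < rad d q + (q:ℝ)/2 := by
              rw [dist_comm d x]; exact add_lt_add hy hdx
          _ < (q:ℝ) + (q:ℝ)/2 := by linarith
          _ < ε := by linarith
  · rintro U (rfl | ⟨⟨x, q⟩, ⟨_, hq⟩, rfl⟩)
    · simp
    · exact ⟨isOpen_ball, (hrad x q hq).2⟩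

lemma frontier_iInter_subset {k : ℕ} (O : Fin k → Set S1) (hO : ∀ i, IsOpen (O i)) :
    frontier (⋂ i, O i) ⊆ ⋃ i, frontier (O i) := by
  intro x hx
  have hcl : x ∈ closure (⋂ i, O i) := hx.1
  have hint : x ∉ ⋂ i, O i := by
    have := hx.2
    rwa [(isOpen_iInter_of_finite hO).interior_eq] at this
  obtain ⟨i, hi⟩ : ∃ i, x ∉ O i := by
    by_contra h
    push_neg at h
    exact hint (Set.mem_iInter.2 h)
  refine Set.mem_iUnion.2 ⟨i, ?_, ?_⟩
  · exact closure_mono (Set.iInter_subset _ i) hcl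
  · rwa [(hO i).interior_eq]

variable (Ψ : Kernel S3 (S1 × S2)) [IsMarkovKernel Ψ]

lemma forward_direction (hSUF : SemiUniformFeller Ψ) (t : S3) :
    ∃ τ : Set (Set S1), τ.Countable ∧ IsTopologicalBasis τ ∧
      (Set.univ : Set S1) ∈ τ ∧
      ∀ (k : ℕ) (O : Fin k → Set S1), 0 < k → (∀ i, O i ∈ τ) →
        Tendsto (fun s => ⨆ B : {B : Set S2 // MeasurableSet B},
          |((Ψ s) ((⋂ i, O i) ×ˢ B.1)).toReal - ((Ψ t) ((⋂ i, O i) ×ˢ B.1)).toReal|)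
          (𝓝 t) (𝓝 0) := by
  have hfst : ∀ A : Set S1, Prod.fst ⁻¹' A = A ×ˢ (univ : Set S2) := by
    intro A; ext x; simp [Set.mem_prod]
  set μ : Measure S1 := (Ψ t).map Prod.fst with hμ
  haveI : IsProbabilityMeasure μ := Measure.isProbabilityMeasure_map measurable_fst.aemeasurable
  obtain ⟨τ, hτc, hτb, hτu, hτn⟩ := exists_nullFrontier_basis μ
  refine ⟨τ, hτc, hτb, hτu, fun k O hk hO => ?_⟩
  have hop : IsOpen (⋂ i, O i) := isOpen_iInter_of_finite fun i => (hτn _ (hO i)).1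
  have hnull : (Ψ t) ((frontier (⋂ i, O i)) ×ˢ univ) = 0 := by
    rw [← hfst, ← Measure.map_apply measurable_fst isClosed_frontier.measurableSet]
    refine measure_mono_null (frontier_iInter_subset O fun i => (hτn _ (hO i)).1) ?_
    exact measure_iUnion_null fun i => (hτn _ (hO i)).2
  refine tendsto_of_seq_tendsto fun sq hsq => ?_
  exact tendsto_D_of_nullFrontier Ψ hSUF t sq hsq hop hnull




def listInter (L : List (Set S1)) : Set S1 := L.foldr (· ∩ ·) Set.univ

def listUnion (L : List (Set S1)) : Set S1 := L.foldr (· ∪ ·) ∅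

@[simp] lemma listInter_nil : listInter ([] : List (Set S1)) = univ := rfl
@[simp] lemma listInter_cons (a : Set S1) (L : List (Set S1)) :
    listInter (a :: L) = a ∩ listInter L := rfl
@[simp] lemma listUnion_nil : listUnion ([] : List (Set S1)) = ∅ := rfl
@[simp] lemma listUnion_cons (a : Set S1) (L : List (Set S1)) :
    listUnion (a :: L) = a ∪ listUnion L := rfl

lemma listInter_append (L1 L2 : List (Set S1)) :
    listInter (L1 ++ L2) = listInter L1 ∩ listInter L2 := by
  induction L1 with
  | nil => simp
  | cons a tl ih => simp [ih, Set.inter_assoc]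

lemma mem_listUnion {x : S1} {L : List (Set S1)} :
    x ∈ listUnion L ↔ ∃ U ∈ L, x ∈ U := by
  induction L with
  | nil => simp
  | cons a tl ih => simp [ih]

lemma listInter_open {L : List (Set S1)} (h : ∀ U ∈ L, IsOpen U) :
    IsOpen (listInter L) := by
  induction L with
  | nil => simpa using isOpen_univ
  | cons a tl ih =>
    simp only [listInter_cons]
    exact (h a (by simp)).inter (ih fun U hU => h U (by simp [hU]))

lemma listUnion_open {L : List (Set S1)} (h : ∀ U ∈ L, IsOpen U) :
    IsOpen (listUnion L) := by
  induction L with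
  | nil => simpa using isOpen_empty
  | cons a tl ih =>
    simp only [listUnion_cons]
    exact (h a (by simp)).union (ih fun U hU => h U (by simp [hU]))

lemma mem_listInter {x : S1} {L : List (Set S1)} :
    x ∈ listInter L ↔ ∀ U ∈ L, x ∈ U := by
  induction L with
  | nil => simp
  | cons a tl ih => simp [ih]

lemma iInter_get_eq_listInter (L : List (Set S1)) :
    (⋂ i : Fin L.length, L.get i) = listInter L := by
  ext x
  rw [Set.mem_iInter, mem_listInter]
  constructor
  · intro h U hU
    obtain ⟨i, rfl⟩ := List.mem_iff_get.1 hU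
    exact h i
  · intro h i
    exact h _ (List.get_mem L i)

/-- nice sets: nonempty finite intersections of elements of `τ` -/
def NiceOf (τ : Set (Set S1)) (U : Set S1) : Prop :=
  ∃ L : List (Set S1), L ≠ [] ∧ (∀ V ∈ L, V ∈ τ) ∧ U = listInter L

lemma NiceOf.inter {τ : Set (Set S1)} {U V : Set S1} (hU : NiceOf τ U) (hV : NiceOf τ V) :
    NiceOf τ (U ∩ V) := by
  obtain ⟨L1, h1, h1τ, rfl⟩ := hU
  obtain ⟨L2, h2, h2τ, rfl⟩ := hV
  refine ⟨L1 ++ L2, by simp [h1], ?_, (listInter_append L1 L2).symm⟩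
  intro W hW
  rcases List.mem_append.1 hW with h | h
  · exact h1τ W h
  · exact h2τ W h

lemma NiceOf.isOpen {τ : Set (Set S1)} (hτ : ∀ V ∈ τ, IsOpen V) {U : Set S1}
    (hU : NiceOf τ U) : IsOpen U := by
  obtain ⟨L, _, hLτ, rfl⟩ := hU
  exact listInter_open fun V hV => hτ V (hLτ V hV)

variable (Ψ : Kernel S3 (S1 × S2)) [IsMarkovKernel Ψ]

/-- convergence of the `B`-uniform differences along the sequence `sq` -/
def Conv (t : S3) (sq : ℕ → S3) (U : Set S1) : Prop :=
  Tendsto (fun n => D Ψ t (sq n) U) atTop (𝓝 0)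

lemma conv_empty (t : S3) (sq : ℕ → S3) : Conv Ψ t sq (∅ : Set S1) := by
  unfold Conv
  simp only [D_empty]
  exact tendsto_const_nhds

lemma D_union_le (t s : S3) {U V : Set S1} (hU : MeasurableSet U) (hV : MeasurableSet V) :
    D Ψ t s (U ∪ V) ≤ D Ψ t s U + D Ψ t s V + D Ψ t s (U ∩ V) := by
  refine D_le Ψ t s _ fun B hB => ?_
  have key : ∀ s' : S3, ((Ψ s') ((U ∪ V) ×ˢ B)).toReal
      = ((Ψ s') (U ×ˢ B)).toReal + ((Ψ s') (V ×ˢ B)).toReal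
        - ((Ψ s') ((U ∩ V) ×ˢ B)).toReal := by
    intro s'
    have h := measure_union_add_inter (μ := Ψ s') (U ×ˢ B) ((hV.prod hB))
    rw [Set.union_prod.symm] at h
    rw [show (U ×ˢ B) ∩ (V ×ˢ B) = (U ∩ V) ×ˢ B by
      rw [Set.prod_inter_prod, Set.inter_self]] at h
    have h' := congrArg ENNReal.toReal h
    rw [ENNReal.toReal_add (measure_ne_top _ _) (measure_ne_top _ _),
      ENNReal.toReal_add (measure_ne_top _ _) (measure_ne_top _ _)] at h'
    linarith
  rw [key s, key t]
  have b1 := le_D Ψ t s U B hB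
  have b2 := le_D Ψ t s V B hB
  have b3 := le_D Ψ t s (U ∩ V) B hB
  have a1 := abs_le.1 b1
  have a2 := abs_le.1 b2
  have a3 := abs_le.1 b3
  rw [abs_le]
  constructor <;> linarith [a1.1, a1.2, a2.1, a2.2, a3.1, a3.2]

lemma conv_add3 {t : S3} {sq : ℕ → S3} {U : Set S1} {v w z : ℕ → ℝ}
    (hb : ∀ n, D Ψ t (sq n) U ≤ v n + w n + z n)
    (hv : Tendsto v atTop (𝓝 0)) (hw : Tendsto w atTop (𝓝 0))
    (hz : Tendsto z atTop (𝓝 0)) : Conv Ψ t sq U := by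
  have : Tendsto (fun n => v n + w n + z n) atTop (𝓝 0) := by
    simpa using (hv.add hw).add hz
  exact squeeze_zero (fun n => D_nonneg Ψ t (sq n) U) hb this

lemma inter_listUnion (a : Set S1) (M : List (Set S1)) :
    a ∩ listUnion M = listUnion (M.map (fun V => a ∩ V)) := by
  induction M with
  | nil => simp
  | cons b tl ih => simp only [listUnion_cons, List.map_cons,
      Set.inter_union_distrib_left, ih]

lemma conv_listUnion {τ : Set (Set S1)} (hτo : ∀ V ∈ τ, IsOpen V) {t : S3} {sq : ℕ → S3}
    (hNice : ∀ U, NiceOf τ U → Conv Ψ t sq U) :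
    ∀ (n : ℕ) (M : List (Set S1)), M.length = n → (∀ U ∈ M, NiceOf τ U) →
      Conv Ψ t sq (listUnion M) := by
  intro n
  induction n using Nat.strong_induction_on with
  | _ n ih =>
    intro M hlen hM
    match M, hlen with
    | [], _ => simpa using conv_empty Ψ t sq
    | (a :: M'), hlen =>
      have ha : NiceOf τ a := hM a (by simp)
      have hM' : ∀ U ∈ M', NiceOf τ U := fun U hU => hM U (by simp [hU])
      have hMap : ∀ U ∈ M'.map (fun V => a ∩ V), NiceOf τ U := by
        intro U hU
        obtain ⟨V, hV, rfl⟩ := List.mem_map.1 hU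
        exact ha.inter (hM' V hV)
      have hlen' : M'.length < n := by rw [← hlen]; simp
      have c1 : Conv Ψ t sq a := hNice a ha
      have c2 : Conv Ψ t sq (listUnion M') := ih M'.length hlen' M' rfl hM'
      have c3 : Conv Ψ t sq (a ∩ listUnion M') := by
        rw [inter_listUnion]
        exact ih _ (by simpa using hlen') _ rfl hMap
      have hma : MeasurableSet a := (ha.isOpen hτo).measurableSet
      have hmu : MeasurableSet (listUnion M') :=
        (listUnion_open fun U hU => (hM' U hU).isOpen hτo).measurableSet
      simp only [listUnion_cons]
      exact conv_add3 Ψ (fun n => D_union_le Ψ t (sq n) hma hmu) c1 c2 c3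



lemma toReal_mono_meas (s' : S3) {A A' : Set (S1 × S2)} (h : A ⊆ A') :
    ((Ψ s') A).toReal ≤ ((Ψ s') A').toReal :=
  ENNReal.toReal_mono (measure_ne_top _ _) (measure_mono h)

lemma real_diff_bound (s' : S3) {U V : Set S1} (hU : MeasurableSet U) (hV : MeasurableSet V)
    (hsub : V ⊆ U) {B : Set S2} (hB : MeasurableSet B) :
    ((Ψ s') (U ×ˢ B)).toReal ≤ ((Ψ s') (V ×ˢ B)).toReal
      + (((Ψ s') (U ×ˢ univ)).toReal - ((Ψ s') (V ×ˢ univ)).toReal) := by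
  have e1 : (Ψ s') (U ×ˢ B) ≤ (Ψ s') (V ×ˢ B) + (Ψ s') ((U \ V) ×ˢ univ) := by
    refine le_trans (measure_mono ?_) (measure_union_le _ _)
    rintro ⟨x, y⟩ ⟨hx, hy⟩
    by_cases hxV : x ∈ V
    · exact Or.inl ⟨hxV, hy⟩
    · exact Or.inr ⟨⟨hx, hxV⟩, trivial⟩
  have e2 : (Ψ s') (V ×ˢ univ) + (Ψ s') ((U \ V) ×ˢ univ) = (Ψ s') (U ×ˢ univ) := by
    rw [← measure_union ?_ ((hU.diff hV).prod MeasurableSet.univ)]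
    · rw [← Set.union_prod, Set.union_diff_cancel hsub]
    · refine Set.disjoint_left.2 ?_
      rintro ⟨x, y⟩ ⟨hx, -⟩ ⟨⟨-, hx'⟩, -⟩
      exact hx' hx
  have e1' : ((Ψ s') (U ×ˢ B)).toReal
      ≤ ((Ψ s') (V ×ˢ B)).toReal + ((Ψ s') ((U \ V) ×ˢ univ)).toReal := by
    refine le_trans (ENNReal.toReal_mono ?_ e1) ?_
    · exact ENNReal.add_ne_top.2 ⟨measure_ne_top _ _, measure_ne_top _ _⟩
    · rw [ENNReal.toReal_add (measure_ne_top _ _) (measure_ne_top _ _)]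
  have e2' : ((Ψ s') (V ×ˢ univ)).toReal + ((Ψ s') ((U \ V) ×ˢ univ)).toReal
      = ((Ψ s') (U ×ˢ univ)).toReal := by
    rw [← ENNReal.toReal_add (measure_ne_top _ _) (measure_ne_top _ _), e2]
  linarith

lemma real_compl_decomp (s' : S3) {C : Set S1} (hC : MeasurableSet C) {B : Set S2}
    (hB : MeasurableSet B) :
    ((Ψ s') ((univ : Set S1) ×ˢ B)).toReal
      = ((Ψ s') (C ×ˢ B)).toReal + ((Ψ s') (Cᶜ ×ˢ B)).toReal := by
  rw [← ENNReal.toReal_add (measure_ne_top _ _) (measure_ne_top _ _)]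
  congr 1
  rw [← measure_union ?_ (hC.compl.prod hB)]
  · rw [← Set.union_prod, Set.union_compl_self]
  · refine Set.disjoint_left.2 ?_
    rintro ⟨x, y⟩ ⟨hx, -⟩ ⟨hx', -⟩
    exact hx' hx

lemma exists_conv_approx {t : S3} {sq : ℕ → S3} {τ : Set (Set S1)} (hτc : τ.Countable)
    (hτb : IsTopologicalBasis τ) (hτo : ∀ V ∈ τ, IsOpen V)
    (hNice : ∀ U, NiceOf τ U → Conv Ψ t sq U) {G : Set S1} (hG : IsOpen G) :
    ∀ ε > (0:ℝ), ∃ V : Set S1, IsOpen V ∧ V ⊆ G ∧ Conv Ψ t sq V ∧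
      ((Ψ t) (G ×ˢ univ)).toReal - ((Ψ t) (V ×ˢ univ)).toReal < ε := by
  intro ε hε
  set 𝒞 := {b | b ∈ τ ∧ b ⊆ G} with h𝒞
  by_cases hne : 𝒞.Nonempty
  · obtain ⟨e, he⟩ := Set.Countable.exists_eq_range (hτc.mono fun b hb => hb.1) hne
    have hei : ∀ i, e i ∈ 𝒞 := fun i => he ▸ Set.mem_range_self i
    set V : ℕ → Set S1 := fun m => listUnion ((List.range (m+1)).map e) with hV
    have hmem : ∀ m x, x ∈ V m ↔ ∃ i < m + 1, x ∈ e i := by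
      intro m x
      rw [hV]
      simp only [mem_listUnion, List.mem_map, List.mem_range]
      constructor
      · rintro ⟨U, ⟨i, hi, rfl⟩, hx⟩; exact ⟨i, hi, hx⟩
      · rintro ⟨i, hi, hx⟩; exact ⟨e i, ⟨i, hi, rfl⟩, hx⟩
    have hVnice : ∀ m, ∀ U ∈ (List.range (m+1)).map e, NiceOf τ U := by
      rintro m U hU
      obtain ⟨i, _, rfl⟩ := List.mem_map.1 hU
      exact ⟨[e i], by simp, by simp [(hei i).1], by simp⟩
    have hVconv : ∀ m, Conv Ψ t sq (V m) := fun m =>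
      conv_listUnion Ψ hτo hNice _ _ rfl (hVnice m)
    have hVopen : ∀ m, IsOpen (V m) := fun m =>
      listUnion_open fun U hU => (hVnice m U hU).isOpen hτo
    have hVsub : ∀ m, V m ⊆ G := by
      intro m x hx
      obtain ⟨i, _, hxi⟩ := (hmem m x).1 hx
      exact (hei i).2 hxi
    have hmono : Monotone fun m => (V m) ×ˢ (univ : Set S2) := by
      intro m m' hmm'
      refine Set.prod_mono ?_ le_rfl
      intro x hx
      obtain ⟨i, hi, hxi⟩ := (hmem m x).1 hx
      exact (hmem m' x).2 ⟨i, lt_of_lt_of_le hi (by omega), hxi⟩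
    have hunion : ⋃ m, ((V m) ×ˢ (univ : Set S2)) = G ×ˢ univ := by
      rw [← Set.iUnion_prod_const]
      congr 1
      apply Set.Subset.antisymm
      · exact Set.iUnion_subset hVsub
      · intro x hx
        obtain ⟨b, hbτ, hxb, hbG⟩ := hτb.exists_subset_of_mem_open hx hG
        obtain ⟨i, rfl⟩ : ∃ i, e i = b := by
          have : b ∈ 𝒞 := ⟨hbτ, hbG⟩
          rwa [he, Set.mem_range] at this
        exact Set.mem_iUnion.2 ⟨i, (hmem i x).2 ⟨i, by omega, hxb⟩⟩
    have hm := tendsto_measure_iUnion_atTop (μ := Ψ t) hmono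
    rw [hunion] at hm
    have hm' : Tendsto (fun m => ((Ψ t) ((V m) ×ˢ (univ : Set S2))).toReal) atTop
        (𝓝 (((Ψ t) (G ×ˢ (univ : Set S2))).toReal)) :=
      (ENNReal.tendsto_toReal (measure_ne_top _ _)).comp hm
    obtain ⟨m, hm2⟩ := (hm'.eventually (eventually_gt_nhds
      (sub_lt_self _ hε))).exists
    exact ⟨V m, hVopen m, hVsub m, hVconv m, by linarith⟩
  · have hGe : G = ∅ := by
      rw [Set.eq_empty_iff_forall_notMem]
      intro x hx
      obtain ⟨b, hbτ, hxb, hbG⟩ := hτb.exists_subset_of_mem_open hx hG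
      exact hne ⟨b, hbτ, hbG⟩
    refine ⟨∅, isOpen_empty, by simp, conv_empty Ψ t sq, ?_⟩
    rw [hGe]
    simpa using hε

lemma conv_open {t : S3} {sq : ℕ → S3} {τ : Set (Set S1)} (hτc : τ.Countable)
    (hτb : IsTopologicalBasis τ) (hτo : ∀ V ∈ τ, IsOpen V)
    (hconvu : Conv Ψ t sq (univ : Set S1))
    (hNice : ∀ U, NiceOf τ U → Conv Ψ t sq U) {O : Set S1} (hO : IsOpen O)
    (hnull : (Ψ t) ((frontier O) ×ˢ univ) = 0) : Conv Ψ t sq O := by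
  refine tendsto_zero_of_eventually_lt (fun n => D_nonneg Ψ t (sq n) O) fun ε hε => ?_
  obtain ⟨V, hVo, hVsub, hVconv, hVless⟩ :=
    exists_conv_approx Ψ hτc hτb hτo hNice hO (ε/8) (by linarith)
  obtain ⟨V', hV'o, hV'sub, hV'conv, hV'less⟩ :=
    exists_conv_approx Ψ hτc hτb hτo hNice (isClosed_closure (s := O)).isOpen_compl (ε/8) (by linarith)
  filter_upwards [hVconv.eventually (eventually_lt_nhds (by linarith : (0:ℝ) < ε/8)),
    hV'conv.eventually (eventually_lt_nhds (by linarith : (0:ℝ) < ε/8)),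
    hconvu.eventually (eventually_lt_nhds (by linarith : (0:ℝ) < ε/8))] with n h1 h2 h3
  have hDV := D_nonneg Ψ t (sq n) V
  have hDV' := D_nonneg Ψ t (sq n) V'
  have hDu := D_nonneg Ψ t (sq n) (univ : Set S1)
  refine lt_of_le_of_lt (D_le Ψ t (sq n) O fun B hB => ?_)
    (by linarith : D Ψ t (sq n) V + D Ψ t (sq n) V' + D Ψ t (sq n) (univ : Set S1) + ε/8 < ε)
  -- notation
  have F1 : ((Ψ t) (O ×ˢ B)).toReal ≤ ((Ψ t) (V ×ˢ B)).toReal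
      + (((Ψ t) (O ×ˢ univ)).toReal - ((Ψ t) (V ×ˢ univ)).toReal) :=
    real_diff_bound Ψ t hO.measurableSet hVo.measurableSet hVsub hB
  have F2 : ((Ψ (sq n)) (V ×ˢ B)).toReal ≤ ((Ψ (sq n)) (O ×ˢ B)).toReal :=
    toReal_mono_meas Ψ (sq n) (Set.prod_mono hVsub le_rfl)
  have F3 := abs_le.1 (le_D Ψ t (sq n) V B hB)
  have F5 : ((Ψ (sq n)) (O ×ˢ B)).toReal ≤ ((Ψ (sq n)) ((closure O) ×ˢ B)).toReal :=
    toReal_mono_meas Ψ (sq n) (Set.prod_mono subset_closure le_rfl)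
  have F6 := real_compl_decomp Ψ (sq n) (C := closure O) isClosed_closure.measurableSet hB
  have F7 := real_compl_decomp Ψ t (C := closure O) isClosed_closure.measurableSet hB
  have F8 : ((Ψ t) ((closure O)ᶜ ×ˢ B)).toReal ≤ ((Ψ t) (V' ×ˢ B)).toReal
      + (((Ψ t) ((closure O)ᶜ ×ˢ univ)).toReal - ((Ψ t) (V' ×ˢ univ)).toReal) :=
    real_diff_bound Ψ t isClosed_closure.isOpen_compl.measurableSet hV'o.measurableSet hV'sub hB
  have F10 : ((Ψ (sq n)) (V' ×ˢ B)).toReal ≤ ((Ψ (sq n)) ((closure O)ᶜ ×ˢ B)).toReal :=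
    toReal_mono_meas Ψ (sq n) (Set.prod_mono hV'sub le_rfl)
  have F10' := abs_le.1 (le_D Ψ t (sq n) V' B hB)
  have F11 := abs_le.1 (le_D Ψ t (sq n) (univ : Set S1) B hB)
  have F12 : ((Ψ t) ((closure O) ×ˢ B)).toReal ≤ ((Ψ t) (O ×ˢ B)).toReal := by
    have step : (Ψ t) ((closure O) ×ˢ B) ≤ (Ψ t) (O ×ˢ B) := by
      calc (Ψ t) ((closure O) ×ˢ B)
          ≤ (Ψ t) ((O ×ˢ B) ∪ ((frontier O) ×ˢ univ)) := by
            refine measure_mono ?_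
            rintro ⟨x, y⟩ ⟨hx, hy⟩
            by_cases hxO : x ∈ O
            · exact Or.inl ⟨hxO, hy⟩
            · refine Or.inr ⟨⟨hx, ?_⟩, trivial⟩
              rwa [hO.interior_eq]
        _ ≤ (Ψ t) (O ×ˢ B) + (Ψ t) ((frontier O) ×ˢ univ) := measure_union_le _ _
        _ = (Ψ t) (O ×ˢ B) := by rw [hnull, add_zero]
    exact ENNReal.toReal_mono (measure_ne_top _ _) step
  rw [abs_le]
  constructor
  · -- lower bound : -(...) ≤ a_O - b_O, i.e. b_O - a_O ≤ ...
    linarith [F1, F2, F3.1, F3.2, hVless, hDV', hDu]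
  · -- upper bound
    linarith [F5, F6, F7, F8, F10, F10'.1, F10'.2, F11.1, F11.2, F12, hV'less, hDV]


lemma partition_sum_bounds {c : ℕ → ℝ} {δ : ℝ} (hδ : 0 < δ) (h0 : c 0 = 0)
    (hmono : ∀ n, c n < c (n+1)) (hgap : ∀ n, c (n+1) - c n < 2*δ) {y : ℝ} (hy : 0 ≤ y) :
    ∀ n, (c n < y →
        (∑ i ∈ Finset.range n, (c (i+1) - c i) * (if c (i+1) < y then (1:ℝ) else 0)) = c n)
      ∧ (¬ c n < y →
        ((∑ i ∈ Finset.range n, (c (i+1) - c i) * (if c (i+1) < y then (1:ℝ) else 0)) ≤ y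
          ∧ y ≤ (∑ i ∈ Finset.range n,
              (c (i+1) - c i) * (if c (i+1) < y then (1:ℝ) else 0)) + 2*δ)) := by
  intro n
  induction n with
  | zero =>
    refine ⟨fun _ => by simp [h0], fun hn => ?_⟩
    rw [h0, not_lt] at hn
    have : y = 0 := le_antisymm hn hy
    simp [this]
    linarith
  | succ n ih =>
    rw [Finset.sum_range_succ]
    by_cases hlt : c (n+1) < y
    · refine ⟨fun _ => ?_, fun hn => absurd hlt hn⟩
      have hcn : c n < y := (hmono n).trans hlt
      rw [ih.1 hcn, if_pos hlt]
      ring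
    · rw [if_neg hlt, mul_zero, add_zero]
      refine ⟨fun h' => absurd h' hlt, fun _ => ?_⟩
      by_cases hcn : c n < y
      · rw [ih.1 hcn]
        rw [not_lt] at hlt
        constructor
        · exact le_of_lt hcn
        · have := hgap n
          linarith
      · exact ih.2 hcn

lemma toReal_le_one (s' : S3) (A : Set (S1 × S2)) : ((Ψ s') A).toReal ≤ 1 :=
  ENNReal.toReal_le_of_le_ofReal zero_le_one (by simpa using prob_le_one)

lemma conv_sup_integral {t : S3} {sq : ℕ → S3}
    (hopen : ∀ O : Set S1, IsOpen O → (Ψ t) ((frontier O) ×ˢ univ) = 0 → Conv Ψ t sq O)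
    (h : S1 →ᵇ ℝ) (h0 : ∀ x, 0 ≤ h x) :
    Tendsto (fun n => ⨆ B : {B : Set S2 // MeasurableSet B},
      |(∫ x in Set.univ ×ˢ B.1, h x.1 ∂(Ψ (sq n))) - ∫ x in Set.univ ×ˢ B.1, h x.1 ∂(Ψ t)|)
      atTop (𝓝 0) := by
  have hfst : ∀ A : Set S1, Prod.fst ⁻¹' A = A ×ˢ (univ : Set S2) := by
    intro A; ext x; simp [Set.mem_prod]
  set μ : Measure S1 := (Ψ t).map Prod.fst with hμ
  haveI : IsProbabilityMeasure μ := Measure.isProbabilityMeasure_map measurable_fst.aemeasurable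
  have hDlev : Set.Countable {r : ℝ | 0 < μ {a : S1 | h a = r}} :=
    Measure.countable_meas_level_set_pos (h.continuous.measurable)
  refine tendsto_zero_of_eventually_lt
    (fun n => Real.iSup_nonneg fun B => abs_nonneg _) fun ε hε => ?_
  set M : ℝ := ‖h‖ + 1 with hM
  have hM0 : 0 < M := by positivity
  have hhM : ∀ x, h x < M := fun x =>
    lt_of_le_of_lt ((le_abs_self _).trans (h.norm_coe_le_norm x)) (by rw [hM]; linarith)
  set δ : ℝ := ε/4 with hδdef
  have hδ : 0 < δ := by positivity
  set K : ℕ := ⌈M/δ⌉₊ with hK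
  have hMK : M ≤ K * δ := by
    rw [← div_le_iff₀ hδ]
    exact Nat.le_ceil _
  -- choose the levels
  have hch : ∀ j : ℕ, ∃ r : ℝ, r ∈ Set.Ioo ((j:ℝ)*δ) (((j:ℝ)+1)*δ) ∧
      μ {a : S1 | h a = r} = 0 := by
    intro j
    have hlt : (j:ℝ)*δ < ((j:ℝ)+1)*δ := by nlinarith
    have aux := measure_diff_null (s := Set.Ioo ((j:ℝ)*δ) (((j:ℝ)+1)*δ))
      (Set.Countable.measure_zero hDlev volume)
    have len_pos : 0 < volume (Set.Ioo ((j:ℝ)*δ) (((j:ℝ)+1)*δ)) := by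
      rw [Real.volume_Ioo]
      simp only [hlt, ENNReal.ofReal_pos, sub_pos]
    rw [← aux] at len_pos
    rcases nonempty_of_measure_ne_zero len_pos.ne.symm with ⟨r, ⟨hr_in, hr⟩⟩
    refine ⟨r, hr_in, ?_⟩
    simp only [Set.mem_setOf_eq, not_lt, le_zero_iff] at hr
    exact hr
  choose cs hcs1 hcs2 using hch
  set c : ℕ → ℝ := fun j => if j = 0 then 0 else cs j with hc
  have hc0 : c 0 = 0 := by simp [hc]
  have hcpos : ∀ j : ℕ, j ≠ 0 → (j:ℝ)*δ < c j ∧ c j < ((j:ℝ)+1)*δ := by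
    intro j hj
    rw [hc]
    simp only [hj, if_false]
    exact ⟨(hcs1 j).1, (hcs1 j).2⟩
  have hmono : ∀ n, c n < c (n+1) := by
    intro n
    rcases Nat.eq_zero_or_pos n with rfl | hn
    · rw [hc0]
      have h1 := (hcpos 1 one_ne_zero).1
      push_cast at h1
      linarith
    · have h1 := (hcpos n (Nat.pos_iff_ne_zero.1 hn)).2
      have h2 := (hcpos (n+1) (Nat.succ_ne_zero n)).1
      push_cast at h1 h2 ⊢
      linarith
  have hgap : ∀ n, c (n+1) - c n < 2*δ := by
    intro n
    have h2 := (hcpos (n+1) (Nat.succ_ne_zero n)).2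
    push_cast at h2
    rcases Nat.eq_zero_or_pos n with rfl | hn
    · rw [hc0]; push_cast at h2 ⊢; linarith
    · have h1 := (hcpos n (Nat.pos_iff_ne_zero.1 hn)).1
      push_cast at h1
      linarith
  have hcKM : M ≤ c K := by
    have hKpos : K ≠ 0 := by
      rw [hK]
      refine Nat.pos_iff_ne_zero.1 (Nat.ceil_pos.2 (by positivity))
    have := (hcpos K hKpos).1
    linarith
  -- the open level sets
  set O : ℕ → Set S1 := fun i => {x : S1 | c (i+1) < h x} with hO
  have hOopen : ∀ i, IsOpen (O i) := fun i => isOpen_lt continuous_const h.continuous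
  have hOconv : ∀ i, Conv Ψ t sq (O i) := by
    intro i
    refine hopen (O i) (hOopen i) ?_
    have hsub : frontier (O i) ⊆ {a : S1 | h a = c (i+1)} := by
      refine subset_trans (frontier_lt_subset_eq continuous_const h.continuous) ?_
      intro a ha
      exact (Set.mem_setOf_eq ▸ ha).symm
    have hlev : μ {a : S1 | h a = c (i+1)} = 0 := by
      rw [hc]
      simp only [Nat.succ_ne_zero, if_false]
      exact hcs2 (i+1)
    have hmeas : MeasurableSet {a : S1 | h a = c (i+1)} :=
      h.continuous.measurable (measurableSet_singleton _)
    refine measure_mono_null (Set.prod_mono hsub le_rfl) ?_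
    rw [← hfst]
    rw [hμ, Measure.map_apply measurable_fst hmeas] at hlev
    exact hlev
  -- integrability facts
  have hind_int : ∀ (ν : Measure (S1 × S2)) (i : ℕ), IsFiniteMeasure ν →
      Integrable (fun x : S1 × S2 => (O i).indicator (fun _ => (1:ℝ)) x.1) ν := by
    intro ν i hν
    rw [indicator_fst]
    exact (integrable_const (1:ℝ)).indicator ((hOopen i).measurableSet.prod MeasurableSet.univ)
  have hsum_int : ∀ (ν : Measure (S1 × S2)), IsFiniteMeasure ν →
      Integrable (fun x : S1 × S2 =>
        ∑ i ∈ Finset.range K, (c (i+1) - c i) * (O i).indicator (fun _ => (1:ℝ)) x.1) ν := by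
    intro ν hν
    refine integrable_finset_sum _ fun i _ => ?_
    exact ((hind_int ν i hν).const_mul _)
  -- the integral of the simple approximation
  have hgint : ∀ (s' : S3) (B : Set S2), MeasurableSet B →
      ∫ x in univ ×ˢ B, (∑ i ∈ Finset.range K,
          (c (i+1) - c i) * (O i).indicator (fun _ => (1:ℝ)) x.1) ∂(Ψ s')
        = ∑ i ∈ Finset.range K, (c (i+1) - c i) * ((Ψ s') ((O i) ×ˢ B)).toReal := by
    intro s' B hB
    rw [integral_finset_sum _ fun i _ => ((hind_int _ i inferInstance).const_mul _).integrableOn]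
    refine Finset.sum_congr rfl fun i _ => ?_
    rw [integral_const_mul]
    congr 1
    exact J_indicator Ψ s' (hOopen i).measurableSet hB
  -- pointwise bounds between h and the simple approximation
  have hptA : ∀ x : S1, (∑ i ∈ Finset.range K,
      (c (i+1) - c i) * (O i).indicator (fun _ => (1:ℝ)) x) ≤ h x := by
    intro x
    have key := (partition_sum_bounds hδ hc0 hmono hgap (h0 x) K).2
      (by push_neg; exact le_of_lt (lt_of_lt_of_le (hhM x) hcKM))
    have hrw : ∀ i, (O i).indicator (fun _ => (1:ℝ)) x = if c (i+1) < h x then (1:ℝ) else 0 := by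
      intro i
      by_cases hx : x ∈ O i
      · rw [Set.indicator_of_mem hx, if_pos (by exact hx)]
      · rw [Set.indicator_of_notMem hx, if_neg (by exact hx)]
    simp only [hrw]
    exact key.1
  have hptB : ∀ x : S1, h x ≤ (∑ i ∈ Finset.range K,
      (c (i+1) - c i) * (O i).indicator (fun _ => (1:ℝ)) x) + 2*δ := by
    intro x
    have key := (partition_sum_bounds hδ hc0 hmono hgap (h0 x) K).2
      (by push_neg; exact le_of_lt (lt_of_lt_of_le (hhM x) hcKM))
    have hrw : ∀ i, (O i).indicator (fun _ => (1:ℝ)) x = if c (i+1) < h x then (1:ℝ) else 0 := by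
      intro i
      by_cases hx : x ∈ O i
      · rw [Set.indicator_of_mem hx, if_pos (by exact hx)]
      · rw [Set.indicator_of_notMem hx, if_neg (by exact hx)]
    simp only [hrw]
    exact key.2
  -- gap positivity
  have hgap0 : ∀ i, 0 ≤ c (i+1) - c i := fun i => le_of_lt (sub_pos.2 (hmono i))
  -- eventual smallness
  set ε₂ : ℝ := ε / (4 * ((K:ℝ)+1) * δ) with hε₂
  have hε₂0 : 0 < ε₂ := by positivity
  have hev : ∀ᶠ n in atTop, ∀ i ∈ Finset.range K, D Ψ t (sq n) (O i) < ε₂ := by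
    rw [Filter.eventually_all_finset]
    exact fun i _ => (hOconv i).eventually (eventually_lt_nhds hε₂0)
  filter_upwards [hev] with n hn
  have hbound : ∀ (B : Set S2), MeasurableSet B →
      |(∫ x in Set.univ ×ˢ B, h x.1 ∂(Ψ (sq n))) - ∫ x in Set.univ ×ˢ B, h x.1 ∂(Ψ t)|
        ≤ (∑ i ∈ Finset.range K, (c (i+1) - c i) * D Ψ t (sq n) (O i)) + 2*δ := by
    intro B hB
    have hl1 : (∑ i ∈ Finset.range K, (c (i+1) - c i) * ((Ψ (sq n)) ((O i) ×ˢ B)).toReal)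
        ≤ ∫ x in Set.univ ×ˢ B, h x.1 ∂(Ψ (sq n)) := by
      rw [← hgint (sq n) B hB]
      exact integral_mono (hsum_int _ inferInstance).integrableOn
        (integrable_comp_fst h _) (fun x => hptA x.1)
    have hl2 : (∑ i ∈ Finset.range K, (c (i+1) - c i) * ((Ψ t) ((O i) ×ˢ B)).toReal)
        ≤ ∫ x in Set.univ ×ˢ B, h x.1 ∂(Ψ t) := by
      rw [← hgint t B hB]
      exact integral_mono (hsum_int _ inferInstance).integrableOn
        (integrable_comp_fst h _) (fun x => hptA x.1)
    have hu1 : (∫ x in Set.univ ×ˢ B, h x.1 ∂(Ψ (sq n)))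
        ≤ (∑ i ∈ Finset.range K, (c (i+1) - c i) * ((Ψ (sq n)) ((O i) ×ˢ B)).toReal) + 2*δ := by
      have hint1 : IntegrableOn (fun x : S1 × S2 => ∑ i ∈ Finset.range K,
          (c (i+1) - c i) * (O i).indicator (fun _ => (1:ℝ)) x.1) (univ ×ˢ B) (Ψ (sq n)) :=
        (hsum_int _ inferInstance).integrableOn
      have hmono' : (∫ x in Set.univ ×ˢ B, h x.1 ∂(Ψ (sq n)))
          ≤ ∫ x in Set.univ ×ˢ B, ((∑ i ∈ Finset.range K,
            (c (i+1) - c i) * (O i).indicator (fun _ => (1:ℝ)) x.1) + 2*δ) ∂(Ψ (sq n)) :=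
        integral_mono (integrable_comp_fst h _)
          (hint1.add (integrable_const (2*δ)).integrableOn) (fun x => hptB x.1)
      have hadd : (∫ x in Set.univ ×ˢ B, ((∑ i ∈ Finset.range K,
            (c (i+1) - c i) * (O i).indicator (fun _ => (1:ℝ)) x.1) + 2*δ) ∂(Ψ (sq n)))
          = (∫ x in Set.univ ×ˢ B, (∑ i ∈ Finset.range K,
            (c (i+1) - c i) * (O i).indicator (fun _ => (1:ℝ)) x.1) ∂(Ψ (sq n)))
            + ∫ _x in Set.univ ×ˢ B, (2*δ:ℝ) ∂(Ψ (sq n)) :=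
        integral_add hint1 (integrable_const (2*δ)).integrableOn
      rw [hgint (sq n) B hB, setIntegral_const, smul_eq_mul, measureReal_def] at hadd
      have hp1 := toReal_le_one Ψ (sq n) ((univ : Set S1) ×ˢ B)
      have hp0 := ENNReal.toReal_nonneg (a := (Ψ (sq n)) ((univ : Set S1) ×ˢ B))
      rw [hadd] at hmono'
      nlinarith [hmono', hδ]
    have hu2 : (∫ x in Set.univ ×ˢ B, h x.1 ∂(Ψ t))
        ≤ (∑ i ∈ Finset.range K, (c (i+1) - c i) * ((Ψ t) ((O i) ×ˢ B)).toReal) + 2*δ := by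
      have hint1 : IntegrableOn (fun x : S1 × S2 => ∑ i ∈ Finset.range K,
          (c (i+1) - c i) * (O i).indicator (fun _ => (1:ℝ)) x.1) (univ ×ˢ B) (Ψ t) :=
        (hsum_int _ inferInstance).integrableOn
      have hmono' : (∫ x in Set.univ ×ˢ B, h x.1 ∂(Ψ t))
          ≤ ∫ x in Set.univ ×ˢ B, ((∑ i ∈ Finset.range K,
            (c (i+1) - c i) * (O i).indicator (fun _ => (1:ℝ)) x.1) + 2*δ) ∂(Ψ t) :=
        integral_mono (integrable_comp_fst h _)
          (hint1.add (integrable_const (2*δ)).integrableOn) (fun x => hptB x.1)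
      have hadd : (∫ x in Set.univ ×ˢ B, ((∑ i ∈ Finset.range K,
            (c (i+1) - c i) * (O i).indicator (fun _ => (1:ℝ)) x.1) + 2*δ) ∂(Ψ t))
          = (∫ x in Set.univ ×ˢ B, (∑ i ∈ Finset.range K,
            (c (i+1) - c i) * (O i).indicator (fun _ => (1:ℝ)) x.1) ∂(Ψ t))
            + ∫ _x in Set.univ ×ˢ B, (2*δ:ℝ) ∂(Ψ t) :=
        integral_add hint1 (integrable_const (2*δ)).integrableOn
      rw [hgint t B hB, setIntegral_const, smul_eq_mul, measureReal_def] at hadd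
      have hp1 := toReal_le_one Ψ t ((univ : Set S1) ×ˢ B)
      have hp0 := ENNReal.toReal_nonneg (a := (Ψ t) ((univ : Set S1) ×ˢ B))
      rw [hadd] at hmono'
      nlinarith [hmono', hδ]
    have hsd : (∑ i ∈ Finset.range K, (c (i+1) - c i) * ((Ψ (sq n)) ((O i) ×ˢ B)).toReal)
        - (∑ i ∈ Finset.range K, (c (i+1) - c i) * ((Ψ t) ((O i) ×ˢ B)).toReal)
        ≤ ∑ i ∈ Finset.range K, (c (i+1) - c i) * D Ψ t (sq n) (O i) := by
      rw [← Finset.sum_sub_distrib]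
      refine Finset.sum_le_sum fun i _ => ?_
      rw [← mul_sub]
      refine mul_le_mul_of_nonneg_left ?_ (hgap0 i)
      exact (le_abs_self _).trans (le_D Ψ t (sq n) (O i) B hB)
    have hsd' : (∑ i ∈ Finset.range K, (c (i+1) - c i) * ((Ψ t) ((O i) ×ˢ B)).toReal)
        - (∑ i ∈ Finset.range K, (c (i+1) - c i) * ((Ψ (sq n)) ((O i) ×ˢ B)).toReal)
        ≤ ∑ i ∈ Finset.range K, (c (i+1) - c i) * D Ψ t (sq n) (O i) := by
      rw [← Finset.sum_sub_distrib]
      refine Finset.sum_le_sum fun i _ => ?_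
      rw [← mul_sub]
      refine mul_le_mul_of_nonneg_left ?_ (hgap0 i)
      refine le_trans (le_abs_self _) ?_
      rw [abs_sub_comm]
      exact le_D Ψ t (sq n) (O i) B hB
    rw [abs_le]
    constructor <;> linarith
  refine lt_of_le_of_lt (ciSup_le fun B => hbound B.1 B.2) ?_
  -- final numeric estimate
  have hsum_le : (∑ i ∈ Finset.range K, (c (i+1) - c i) * D Ψ t (sq n) (O i))
      ≤ ((K:ℝ)+1)*δ * ε₂ := by
    calc (∑ i ∈ Finset.range K, (c (i+1) - c i) * D Ψ t (sq n) (O i))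
        ≤ ∑ i ∈ Finset.range K, (c (i+1) - c i) * ε₂ :=
          Finset.sum_le_sum fun i hi => mul_le_mul_of_nonneg_left (le_of_lt (hn i hi)) (hgap0 i)
      _ = (c K - c 0) * ε₂ := by rw [← Finset.sum_mul, Finset.sum_range_sub]
      _ ≤ ((K:ℝ)+1)*δ * ε₂ := by
          refine mul_le_mul_of_nonneg_right ?_ (le_of_lt hε₂0)
          rw [hc0, sub_zero]
          by_cases hKz : K = 0
          · rw [hKz, hc0]
            positivity
          · exact le_of_lt (hcpos K hKz).2
  have hfin : ((K:ℝ)+1)*δ * ε₂ = ε/4 := by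
    rw [hε₂]
    field_simp
  linarith [hsum_le, hfin, hδdef.le, hδdef.ge]


lemma abs_shift_bound {A B a b cn S Du : ℝ} (h1 : |A - B| ≤ S) (h2 : |a - b| ≤ Du)
    (hc : 0 ≤ cn) : |(A - a*cn) - (B - b*cn)| ≤ S + cn*Du := by
  have e : (A - a*cn) - (B - b*cn) = (A - B) - (a - b)*cn := by ring
  rw [e]
  refine (abs_sub _ _).trans ?_
  rw [abs_mul, abs_of_nonneg hc]
  have h3 := mul_le_mul_of_nonneg_right h2 hc
  linarith

lemma backward_direction
    (hyp : ∀ t : S3, ∃ τ : Set (Set S1), τ.Countable ∧ IsTopologicalBasis τ ∧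
        (Set.univ : Set S1) ∈ τ ∧
        ∀ (k : ℕ) (O : Fin k → Set S1), 0 < k → (∀ i, O i ∈ τ) →
          Tendsto (fun s => ⨆ B : {B : Set S2 // MeasurableSet B},
            |((Ψ s) ((⋂ i, O i) ×ˢ B.1)).toReal - ((Ψ t) ((⋂ i, O i) ×ˢ B.1)).toReal|)
            (𝓝 t) (𝓝 0)) :
    SemiUniformFeller Ψ := by
  intro sq t hsq f
  obtain ⟨τ, hτc, hτb, hτu, hconv0⟩ := hyp t
  have hτo : ∀ V ∈ τ, IsOpen V := fun V hV => hτb.isOpen hV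
  have hconv : ∀ (k : ℕ) (O : Fin k → Set S1), 0 < k → (∀ i, O i ∈ τ) →
      Conv Ψ t sq (⋂ i, O i) := fun k O hk hO => (hconv0 k O hk hO).comp hsq
  have hNice : ∀ U, NiceOf τ U → Conv Ψ t sq U := by
    rintro U ⟨L, hL0, hLτ, rfl⟩
    have hlen : 0 < L.length := List.length_pos_iff.2 hL0
    have := hconv L.length (fun i => L.get i) hlen (fun i => hLτ _ (List.get_mem L i))
    rwa [iInter_get_eq_listInter] at this
  have hconvu : Conv Ψ t sq (univ : Set S1) := by
    have := hconv 1 (fun _ => (univ : Set S1)) one_pos (fun _ => hτu)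
    rwa [Set.iInter_const] at this
  have hopen : ∀ O : Set S1, IsOpen O → (Ψ t) ((frontier O) ×ˢ univ) = 0 →
      Conv Ψ t sq O :=
    fun O hO hnull => conv_open Ψ hτc hτb hτo hconvu hNice hO hnull
  set cnorm := ‖f‖ with hcn
  have hc0 : 0 ≤ cnorm := norm_nonneg f
  set h : S1 →ᵇ ℝ := f + BoundedContinuousFunction.const S1 cnorm with hh
  have hh0 : ∀ x, 0 ≤ h x := by
    intro x
    have h1 : |f x| ≤ cnorm := by
      rw [← Real.norm_eq_abs]
      exact f.norm_coe_le_norm x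
    have h2 := (abs_le.1 h1).1
    rw [hh]
    simp only [BoundedContinuousFunction.coe_add, Pi.add_apply,
      BoundedContinuousFunction.const_apply]
    linarith
  have hmain := conv_sup_integral Ψ hopen h hh0
  have hrel : ∀ (s' : S3) (B : Set S2), MeasurableSet B →
      (∫ x in Set.univ ×ˢ B, f x.1 ∂(Ψ s'))
        = (∫ x in Set.univ ×ˢ B, h x.1 ∂(Ψ s'))
          - ((Ψ s') ((univ : Set S1) ×ˢ B)).toReal * cnorm := by
    intro s' B hB
    have hco : (fun x : S1 × S2 => h x.1) = fun x : S1 × S2 => f x.1 + cnorm := by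
      funext x
      rw [hh]
      simp
    rw [hco, integral_add (integrable_comp_fst f _) (integrable_const cnorm),
      setIntegral_const, smul_eq_mul, measureReal_def]
    ring
  refine squeeze_zero (fun n => Real.iSup_nonneg fun B => abs_nonneg _)
    (g := fun n => (⨆ B : {B : Set S2 // MeasurableSet B},
      |(∫ x in Set.univ ×ˢ B.1, h x.1 ∂(Ψ (sq n))) - ∫ x in Set.univ ×ˢ B.1, h x.1 ∂(Ψ t)|)
      + cnorm * D Ψ t (sq n) (univ : Set S1)) ?_ ?_
  · intro n
    refine ciSup_le fun B => ?_
    rw [hrel (sq n) B.1 B.2, hrel t B.1 B.2]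
    exact abs_shift_bound (le_supJ Ψ (sq n) t B.2 h)
      (le_D Ψ t (sq n) (univ : Set S1) B.1 B.2) hc0
  · have := hmain.add (hconvu.const_mul cnorm)
    simpa using this

end SUFAux

end SUFAuxSection

set_option maxHeartbeats 1000000

/-- A stochastic kernel `Ψ` on `S1 × S2` given `S3` is semi-uniform Feller if and only if for
each `s3 ∈ S3` the topology of `S1` has a countable base `τ` with `S1 ∈ τ` such that for each
finite intersection `O` of elements of `τ`, the family `{s ↦ Ψ(O × B | s) : B ∈ B(S2)}` is
equicontinuous at `s3`. -/

theorem semiUniformFeller_iff_countable_base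
    {S1 S2 S3 : Type*}
    [MetricSpace S1] [TopologicalSpace.SeparableSpace S1] [MeasurableSpace S1] [BorelSpace S1]
    [StandardBorelSpace S1] [Nonempty S1]
    [MetricSpace S2] [TopologicalSpace.SeparableSpace S2] [MeasurableSpace S2] [BorelSpace S2]
    [StandardBorelSpace S2] [Nonempty S2]
    [MetricSpace S3] [TopologicalSpace.SeparableSpace S3] [MeasurableSpace S3] [BorelSpace S3]
    [StandardBorelSpace S3] [Nonempty S3]
    (Ψ : Kernel S3 (S1 × S2)) [IsMarkovKernel Ψ] :
    SemiUniformFeller Ψ ↔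
      ∀ t : S3, ∃ τ : Set (Set S1), τ.Countable ∧ TopologicalSpace.IsTopologicalBasis τ ∧
        (Set.univ : Set S1) ∈ τ ∧
        ∀ (k : ℕ) (O : Fin k → Set S1), 0 < k → (∀ i, O i ∈ τ) →
          Tendsto (fun s => ⨆ B : {B : Set S2 // MeasurableSet B},
            |((Ψ s) ((⋂ i, O i) ×ˢ B.1)).toReal - ((Ψ t) ((⋂ i, O i) ×ˢ B.1)).toReal|)
            (𝓝 t) (𝓝 0) := by
  
  haveI : SecondCountableTopology S1 := UniformSpace.secondCountable_of_separable S1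
  constructor
  · intro hSUF t
    exact SUFAux.forward_direction Ψ hSUF t
  · intro hyp
    exact SUFAux.backward_direction Ψ hyp
end

section
/- A stochastic kernel Ψ on S1×S2 given S3 is semi-uniform Feller if and only if there exists a countable set F(S1) of bounded continuous real-valued functions on S1 such that: (i) the constant function 1 belongs to F(S1); (ii) F(S1) determines weak convergence on P(S1), i.e., a sequence of Borel probability measures μ^(n) on S1 converges weakly to μ if and only if ∫ f dμ^(n) → ∫ f dμ for all f ∈ F(S1); and (iii) for every f ∈ F(S1) and every sequence s3^(n) converging to s3 in S3, sup_{B ∈ B(S2)} |∫_{S1} f(s1) Ψ(ds1,B|s3^(n)) − ∫_{S1} f(s1) Ψ(ds1,B|s3)| → 0 as n → ∞. -/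
open MeasureTheory ProbabilityTheory Filter Topology

open BoundedContinuousFunction
open scoped NNReal ENNReal


section gdef
variable {S : Type*} [MetricSpace S]

noncomputable def gBCF (c : S) (q : ℚ) (m : ℕ) : BoundedContinuousFunction S ℝ :=
  BoundedContinuousFunction.mkOfBound
    ⟨fun x => min 1 (max 0 ((m + 1) * ((q : ℝ) - dist x c))), by
      apply Continuous.min continuous_const
      exact Continuous.max continuous_const (by fun_prop)⟩ 1
    (by
      intro x y
      rw [Real.dist_eq]
      have h1 : ∀ z : S, 0 ≤ min 1 (max 0 ((m + 1) * ((q : ℝ) - dist z c))) := fun z =>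
        le_min zero_le_one (le_max_left _ _)
      have h2 : ∀ z : S, min 1 (max 0 ((m + 1) * ((q : ℝ) - dist z c))) ≤ 1 := fun z =>
        min_le_left _ _
      have := h1 x; have := h2 x; have := h1 y; have := h2 y
      simp only [ContinuousMap.coe_mk]
      rw [abs_le]; constructor <;> linarith)

lemma gBCF_nonneg (c : S) (q : ℚ) (m : ℕ) (x : S) : 0 ≤ gBCF c q m x :=
  le_min zero_le_one (le_max_left _ _)

lemma gBCF_le_one (c : S) (q : ℚ) (m : ℕ) (x : S) : gBCF c q m x ≤ 1 := min_le_left _ _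

lemma gBCF_eq_zero (c : S) (q : ℚ) (m : ℕ) (x : S) (h : (q : ℝ) ≤ dist x c) :
    gBCF c q m x = 0 := by
  have : ((m : ℝ) + 1) * ((q : ℝ) - dist x c) ≤ 0 :=
    mul_nonpos_of_nonneg_of_nonpos (by positivity) (by linarith)
  have e : gBCF c q m x = min 1 (max 0 (((m:ℝ) + 1) * ((q : ℝ) - dist x c))) := rfl
  rw [e, max_eq_left this, min_eq_right zero_le_one]

lemma gBCF_eq_one (c : S) (q : ℚ) (m : ℕ) (x : S) (h : 1 ≤ ((m : ℝ) + 1) * ((q : ℝ) - dist x c)) :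
    gBCF c q m x = 1 := by
  have e : gBCF c q m x = min 1 (max 0 (((m:ℝ) + 1) * ((q : ℝ) - dist x c))) := rfl
  rw [e, min_eq_left (le_max_of_le_right h)]

end gdef


section determining
variable {S : Type*} [MetricSpace S] [TopologicalSpace.SeparableSpace S] [Nonempty S]
  [MeasurableSpace S] [OpensMeasurableSpace S]

noncomputable def hSeq (S : Type*) [MetricSpace S] [TopologicalSpace.SeparableSpace S]
    [Nonempty S] (n : ℕ) : BoundedContinuousFunction S ℝ :=
  gBCF (TopologicalSpace.denseSeq S ((Denumerable.eqv (ℕ × ℚ × ℕ)).symm n).1)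
    ((Denumerable.eqv (ℕ × ℚ × ℕ)).symm n).2.1 ((Denumerable.eqv (ℕ × ℚ × ℕ)).symm n).2.2

noncomputable def MList (S : Type*) [MetricSpace S] [TopologicalSpace.SeparableSpace S]
    [Nonempty S] (L : List ℕ) : BoundedContinuousFunction S ℝ :=
  L.foldr (fun n acc => hSeq S n ⊔ acc) 0

omit [MeasurableSpace S] [OpensMeasurableSpace S] in
lemma MList_cons (a : ℕ) (L : List ℕ) (x : S) :
    MList S (a :: L) x = hSeq S a x ⊔ MList S L x := rfl

omit [MeasurableSpace S] [OpensMeasurableSpace S] in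
lemma MList_nil (x : S) : MList S ([] : List ℕ) x = 0 := rfl

omit [MeasurableSpace S] [OpensMeasurableSpace S] in
lemma MList_nonneg (L : List ℕ) (x : S) : 0 ≤ MList S L x := by
  induction L with
  | nil => simp [MList_nil]
  | cons a L ih => rw [MList_cons]; exact le_trans ih (le_sup_right)

omit [MeasurableSpace S] [OpensMeasurableSpace S] in
lemma MList_le {L : List ℕ} {x : S} {c : ℝ} (hc : 0 ≤ c) (h : ∀ n ∈ L, hSeq S n x ≤ c) :
    MList S L x ≤ c := by
  induction L with
  | nil => simpa [MList_nil] using hc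
  | cons a L ih =>
    rw [MList_cons]
    exact sup_le (h a (by simp)) (ih fun n hn => h n (by simp [hn]))

omit [MeasurableSpace S] [OpensMeasurableSpace S] in
lemma le_MList {L : List ℕ} {x : S} {n : ℕ} (hn : n ∈ L) : hSeq S n x ≤ MList S L x := by
  induction L with
  | nil => simp at hn
  | cons a L ih =>
    rw [MList_cons]
    rcases List.mem_cons.mp hn with h | h
    · subst h; exact le_sup_left
    · exact le_trans (ih h) le_sup_right

omit [MeasurableSpace S] [OpensMeasurableSpace S] in
lemma MList_le_of_subset {L L' : List ℕ} {x : S} (h : ∀ n ∈ L, n ∈ L') :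
    MList S L x ≤ MList S L' x :=
  MList_le (MList_nonneg _ _) fun n hn => le_MList (h n hn)

omit [MeasurableSpace S] [OpensMeasurableSpace S] in
lemma MList_le_one (L : List ℕ) (x : S) : MList S L x ≤ 1 :=
  MList_le zero_le_one fun n _ => gBCF_le_one _ _ _ _

theorem exists_detFamily :
    ∃ F : Set (BoundedContinuousFunction S ℝ), F.Countable ∧
      (1 : BoundedContinuousFunction S ℝ) ∈ F ∧
      (∀ (μ : ℕ → ProbabilityMeasure S) (μ₀ : ProbabilityMeasure S),
        Tendsto μ atTop (𝓝 μ₀) ↔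
          ∀ f ∈ F, Tendsto (fun n => ∫ x, f x ∂(μ n : Measure S)) atTop
            (𝓝 (∫ x, f x ∂(μ₀ : Measure S)))) := by
  classical
  refine ⟨{1} ∪ Set.range (MList S),
    (Set.countable_singleton _).union (Set.countable_range _), Or.inl rfl, ?_⟩
  intro μ μ₀
  constructor
  · intro h f _
    exact ProbabilityMeasure.tendsto_iff_forall_integral_tendsto.mp h f
  intro hint
  apply MeasureTheory.tendsto_of_forall_isOpen_le_liminf
  intro G hG
  set u := TopologicalSpace.denseSeq S with hu
  set P : ℕ → Prop := fun n => Metric.ball (u ((Denumerable.eqv (ℕ × ℚ × ℕ)).symm n).1)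
    ((((Denumerable.eqv (ℕ × ℚ × ℕ)).symm n).2.1 : ℝ)) ⊆ G with hP
  set L : ℕ → List ℕ := fun k => (List.range k).filter fun n => P n with hL
  set ψ : ℕ → BoundedContinuousFunction S ℝ := fun k => MList S (L k) with hψ
  have hLmem : ∀ k n, n ∈ L k ↔ n < k ∧ P n := by
    intro k n
    simp [hL, List.mem_filter, List.mem_range]
  have hψ_zero : ∀ k, ∀ x ∉ G, ψ k x = 0 := by
    intro k x hx
    refine le_antisymm (MList_le le_rfl ?_) (MList_nonneg _ _)
    intro n hn
    have hPn : P n := ((hLmem k n).mp hn).2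
    have hxball : x ∉ Metric.ball (u ((Denumerable.eqv (ℕ × ℚ × ℕ)).symm n).1)
        ((((Denumerable.eqv (ℕ × ℚ × ℕ)).symm n).2.1 : ℝ)) := fun hxb => hx (hPn hxb)
    have hdist : ((((Denumerable.eqv (ℕ × ℚ × ℕ)).symm n).2.1 : ℚ) : ℝ) ≤
        dist x (u ((Denumerable.eqv (ℕ × ℚ × ℕ)).symm n).1) :=
      not_lt.mp (by simpa [Metric.mem_ball] using hxball)
    exact le_of_eq (gBCF_eq_zero _ _ _ _ hdist)
  have hψ_le_ind : ∀ k x, ψ k x ≤ Set.indicator G (fun _ => (1 : ℝ)) x := by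
    intro k x
    by_cases hx : x ∈ G
    · rw [Set.indicator_of_mem hx]; exact MList_le_one _ _
    · rw [Set.indicator_of_notMem hx, hψ_zero k x hx]
  have hx1 : ∀ x ∈ G, ∃ n, P n ∧ hSeq S n x = 1 := by
    intro x hx
    obtain ⟨r, hr0, hrG⟩ := Metric.isOpen_iff.mp hG x hx
    obtain ⟨q, hq0, hqr⟩ : ∃ q : ℚ, 0 < (q : ℝ) ∧ (q : ℝ) < r / 2 := by
      obtain ⟨q, h1, h2⟩ := exists_rat_btwn (by positivity : (0 : ℝ) < r / 2)
      exact ⟨q, h1, h2⟩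
    obtain ⟨i, hi⟩ := Metric.denseRange_iff.mp (TopologicalSpace.denseRange_denseSeq S) x
      ((q : ℝ) / 2) (by positivity)
    rw [← hu] at hi
    have hdpos : 0 < (q : ℝ) - dist x (u i) := by
      have : dist x (u i) < (q : ℝ) / 2 := hi
      linarith
    obtain ⟨m, hm⟩ := exists_nat_ge (((q : ℝ) - dist x (u i))⁻¹)
    refine ⟨Denumerable.eqv (ℕ × ℚ × ℕ) (i, q, m), ?_, ?_⟩
    · simp only [hP, Equiv.symm_apply_apply]
      intro y hy
      apply hrG
      have h1 : dist y (u i) < (q : ℝ) := hy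
      have h2 : dist x (u i) < (q : ℝ) / 2 := hi
      show dist y x < r
      calc dist y x ≤ dist y (u i) + dist (u i) x := dist_triangle _ _ _
        _ = dist y (u i) + dist x (u i) := by rw [dist_comm (u i) x]
        _ < r := by linarith
    · simp only [hSeq, Equiv.symm_apply_apply, ← hu]
      apply gBCF_eq_one
      have h1 : 1 ≤ (m : ℝ) * ((q : ℝ) - dist x (u i)) := by
        rw [← inv_mul_cancel₀ (ne_of_gt hdpos)]
        exact mul_le_mul_of_nonneg_right hm (le_of_lt hdpos)
      nlinarith [hdpos]
  have hψ_mono : ∀ x : S, Monotone fun k => ψ k x := by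
    intro x
    apply monotone_nat_of_le_succ
    intro k
    apply MList_le_of_subset
    intro n hn
    rw [hLmem] at hn ⊢
    exact ⟨Nat.lt_succ_of_lt hn.1, hn.2⟩
  have hψ_tendsto : ∀ x : S, Tendsto (fun k => ψ k x) atTop
      (𝓝 (Set.indicator G (fun _ => (1 : ℝ)) x)) := by
    intro x
    by_cases hx : x ∈ G
    · rw [Set.indicator_of_mem hx]
      obtain ⟨n, hPn, hn1⟩ := hx1 x hx
      apply Tendsto.congr' _ tendsto_const_nhds
      filter_upwards [eventually_ge_atTop (n + 1)] with k hk
      exact (le_antisymm (MList_le_one _ _)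
        (le_trans (le_of_eq hn1.symm) (le_MList ((hLmem k n).mpr ⟨hk, hPn⟩)))).symm
    · rw [Set.indicator_of_notMem hx]
      apply Tendsto.congr' _ tendsto_const_nhds
      exact Eventually.of_forall fun k => (hψ_zero k x hx).symm
  have hIψ : ∀ (k : ℕ) (ν : ProbabilityMeasure S), Integrable (ψ k) (ν : Measure S) :=
    fun k ν => (ψ k).integrable _
  have hInd : Integrable (Set.indicator G fun _ => (1 : ℝ)) (μ₀ : Measure S) :=
    (integrable_const (1 : ℝ)).indicator hG.measurableSet
  have hmc : Tendsto (fun k => ∫ x, ψ k x ∂(μ₀ : Measure S)) atTop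
      (𝓝 (∫ x, Set.indicator G (fun _ => (1 : ℝ)) x ∂(μ₀ : Measure S))) :=
    integral_tendsto_of_tendsto_of_monotone (fun k => hIψ k μ₀) hInd
      (Eventually.of_forall hψ_mono) (Eventually.of_forall hψ_tendsto)
  have hIndInt : ∀ ν : ProbabilityMeasure S,
      ∫ x, Set.indicator G (fun _ => (1 : ℝ)) x ∂(ν : Measure S) = ((ν G : ℝ≥0) : ℝ) := by
    intro ν
    rw [integral_indicator_const (1 : ℝ) hG.measurableSet]
    simp only [smul_eq_mul, mul_one]
    rfl
  have hbd1 : ∀ ν : ProbabilityMeasure S, ((ν G : ℝ≥0) : ℝ) ≤ 1 := by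
    intro ν
    exact_mod_cast ProbabilityMeasure.apply_le_one ν G
  have key : ∀ k, ∫ x, ψ k x ∂(μ₀ : Measure S) ≤
      liminf (fun n => ((μ n G : ℝ≥0) : ℝ)) atTop := by
    intro k
    have hmem : ψ k ∈ ({1} ∪ Set.range (MList S) : Set (BoundedContinuousFunction S ℝ)) :=
      Or.inr ⟨L k, rfl⟩
    have h1 := hint (ψ k) hmem
    have h2 : ∀ n, ∫ x, ψ k x ∂(μ n : Measure S) ≤ ((μ n G : ℝ≥0) : ℝ) := by
      intro n
      calc ∫ x, ψ k x ∂(μ n : Measure S)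
          ≤ ∫ x, Set.indicator G (fun _ => (1 : ℝ)) x ∂(μ n : Measure S) :=
            integral_mono (hIψ k (μ n)) ((integrable_const (1 : ℝ)).indicator hG.measurableSet)
              (hψ_le_ind k)
        _ = _ := hIndInt (μ n)
    rw [← h1.liminf_eq]
    refine liminf_le_liminf (Eventually.of_forall h2) ?_ ?_
    · exact ⟨0, Filter.eventually_map.mpr (Eventually.of_forall fun n =>
        integral_nonneg fun x => MList_nonneg _ _)⟩
    · exact IsBoundedUnder.isCoboundedUnder_ge
        ⟨1, Filter.eventually_map.mpr (Eventually.of_forall fun n => hbd1 (μ n))⟩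
  have hfinal : ((μ₀ G : ℝ≥0) : ℝ) ≤ liminf (fun n => ((μ n G : ℝ≥0) : ℝ)) atTop := by
    rw [← hIndInt μ₀]
    exact le_of_tendsto hmc (Eventually.of_forall key)
  have hbddAbove : IsBoundedUnder (· ≤ ·) atTop fun n => μ n G :=
    ⟨1, Filter.eventually_map.mpr (Eventually.of_forall fun n =>
      ProbabilityMeasure.apply_le_one (μ n) G)⟩
  have hco : IsCoboundedUnder (· ≥ ·) atTop fun n => μ n G :=
    hbddAbove.isCoboundedUnder_ge
  have hcoe : ((liminf (fun n => μ n G) atTop : ℝ≥0) : ℝ) =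
      liminf (fun n => ((μ n G : ℝ≥0) : ℝ)) atTop :=
    NNReal.coe_mono.map_liminf_of_continuousAt (fun n => μ n G)
      (NNReal.continuous_coe.continuousAt) hco
      ⟨0, Filter.eventually_map.mpr (Eventually.of_forall fun n => bot_le)⟩
  rw [← NNReal.coe_le_coe, hcoe]
  exact hfinal

end determining

instance (priority := 100) _root_.secondCountableOfSeparableMetric {α : Type*} [MetricSpace α]
    [TopologicalSpace.SeparableSpace α] : SecondCountableTopology α :=
  UniformSpace.secondCountable_of_separable α

section kernelhelpers
variable {X Y : Type*} [MetricSpace X] [TopologicalSpace.SeparableSpace X] [MeasurableSpace X]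
  [BorelSpace X] [MetricSpace Y] [TopologicalSpace.SeparableSpace Y] [MeasurableSpace Y]
  [BorelSpace Y]

noncomputable def fstBCF (g : BoundedContinuousFunction X ℝ) :
    BoundedContinuousFunction (X × Y) ℝ :=
  g.compContinuous (ContinuousMap.fst)

lemma integrable_fst_bcf (g : BoundedContinuousFunction X ℝ) (μ : Measure (X × Y))
    [IsFiniteMeasure μ] : Integrable (fun x : X × Y => g x.1) μ :=
  (fstBCF g).integrable μ

lemma abs_setIntegral_le (g : BoundedContinuousFunction X ℝ) (μ : Measure (X × Y))
    [IsProbabilityMeasure μ] (s : Set (X × Y)) :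
    |∫ x in s, g x.1 ∂μ| ≤ ‖g‖ := by
  rw [← Real.norm_eq_abs]
  refine (norm_integral_le_of_norm_le_const (C := ‖g‖)
    (Eventually.of_forall fun x => g.norm_coe_le_norm _)).trans ?_
  have h1 : ((μ.restrict s) Set.univ).toReal ≤ 1 := by
    rw [Measure.restrict_apply_univ]
    simpa using ENNReal.toReal_mono (by simp) (prob_le_one (μ := μ) (s := s))
  calc ‖g‖ * ((μ.restrict s) Set.univ).toReal ≤ ‖g‖ * 1 :=
        mul_le_mul_of_nonneg_left h1 (norm_nonneg g)
    _ = ‖g‖ := mul_one _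

lemma compl_univ_prod (B : Set Y) : (Set.univ ×ˢ B : Set (X × Y))ᶜ = Set.univ ×ˢ Bᶜ := by
  ext ⟨a, b⟩
  simp

lemma decomp_integral (g : BoundedContinuousFunction X ℝ) (μ : Measure (X × Y))
    [IsProbabilityMeasure μ] {B : Set Y} (hB : MeasurableSet B) :
    (∫ x in Set.univ ×ˢ B, g x.1 ∂μ) + ∫ x in Set.univ ×ˢ Bᶜ, g x.1 ∂μ = ∫ x, g x.1 ∂μ := by
  rw [← compl_univ_prod B]
  exact integral_add_compl (MeasurableSet.univ.prod hB) (integrable_fst_bcf g μ)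

lemma integral_map_fst (g : BoundedContinuousFunction X ℝ) (μ : Measure (X × Y)) :
    ∫ x, g x ∂(μ.map Prod.fst) = ∫ x, g x.1 ∂μ :=
  integral_map measurable_fst.aemeasurable (g.continuous.measurable.aestronglyMeasurable)

end kernelhelpers

section mainthm
open ProbabilityTheory
variable {S1 S2 S3 : Type*}
    [MetricSpace S1] [TopologicalSpace.SeparableSpace S1] [MeasurableSpace S1] [BorelSpace S1]
    [StandardBorelSpace S1] [Nonempty S1]
    [MetricSpace S2] [TopologicalSpace.SeparableSpace S2] [MeasurableSpace S2] [BorelSpace S2]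
    [StandardBorelSpace S2] [Nonempty S2]
    [MetricSpace S3] [TopologicalSpace.SeparableSpace S3] [MeasurableSpace S3] [BorelSpace S3]
    [StandardBorelSpace S3] [Nonempty S3]

theorem semiUniformFeller_of_family (Ψ : Kernel S3 (S1 × S2)) [IsMarkovKernel Ψ]
    (F : Set (BoundedContinuousFunction S1 ℝ))
    (h1F : (1 : BoundedContinuousFunction S1 ℝ) ∈ F)
    (hdet : ∀ (μ : ℕ → ProbabilityMeasure S1) (μ₀ : ProbabilityMeasure S1),
      Tendsto μ atTop (𝓝 μ₀) ↔
        ∀ f ∈ F, Tendsto (fun n => ∫ x, f x ∂(μ n : Measure S1)) atTop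
          (𝓝 (∫ x, f x ∂(μ₀ : Measure S1))))
    (hsf : ∀ f ∈ F, ∀ (s : ℕ → S3) (t : S3), Tendsto s atTop (𝓝 t) →
      Tendsto (fun n => ⨆ B : {B : Set S2 // MeasurableSet B},
        |(∫ x in Set.univ ×ˢ B.1, f x.1 ∂(Ψ (s n))) -
          ∫ x in Set.univ ×ˢ B.1, f x.1 ∂(Ψ t)|) atTop (𝓝 0)) :
    ∀ (s : ℕ → S3) (t : S3), Tendsto s atTop (𝓝 t) →
      ∀ f : BoundedContinuousFunction S1 ℝ,
      Tendsto (fun n => ⨆ B : {B : Set S2 // MeasurableSet B},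
        |(∫ x in Set.univ ×ˢ B.1, f x.1 ∂(Ψ (s n))) -
          ∫ x in Set.univ ×ˢ B.1, f x.1 ∂(Ψ t)|) atTop (𝓝 0) := by
  classical
  intro s t hst f
  by_contra hcon
  -- boundedness of the families
  have hbdd : ∀ (g : BoundedContinuousFunction S1 ℝ) (r r' : S3),
      BddAbove (Set.range fun B : {B : Set S2 // MeasurableSet B} =>
        |(∫ x in Set.univ ×ˢ B.1, g x.1 ∂(Ψ r)) - ∫ x in Set.univ ×ˢ B.1, g x.1 ∂(Ψ r')|) := by
    intro g r r'
    refine ⟨2 * ‖g‖, ?_⟩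
    rintro x ⟨B, rfl⟩
    calc |(∫ x in Set.univ ×ˢ B.1, g x.1 ∂(Ψ r)) - ∫ x in Set.univ ×ˢ B.1, g x.1 ∂(Ψ r')|
        ≤ |∫ x in Set.univ ×ˢ B.1, g x.1 ∂(Ψ r)| + |∫ x in Set.univ ×ˢ B.1, g x.1 ∂(Ψ r')| :=
          abs_sub _ _
      _ ≤ ‖g‖ + ‖g‖ := add_le_add (abs_setIntegral_le g _ _) (abs_setIntegral_le g _ _)
      _ = 2 * ‖g‖ := by ring
  -- extract a subsequence and bad sets
  rw [Metric.tendsto_atTop] at hcon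
  push_neg at hcon
  obtain ⟨ε, hε, hfreq⟩ := hcon
  obtain ⟨φ, hφ, hφε⟩ := extraction_of_frequently_atTop
    (frequently_atTop.mpr fun N => (hfreq N).imp fun n ⟨hn, h⟩ => ⟨hn, h⟩)
  have hD : ∀ k, ε ≤ ⨆ B : {B : Set S2 // MeasurableSet B},
      |(∫ x in Set.univ ×ˢ B.1, f x.1 ∂(Ψ (s (φ k)))) -
        ∫ x in Set.univ ×ˢ B.1, f x.1 ∂(Ψ t)| := by
    intro k
    have := hφε k
    rw [Real.dist_eq, sub_zero] at this
    refine le_trans this (le_of_eq (abs_of_nonneg ?_))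
    refine le_trans (abs_nonneg _) (le_ciSup (hbdd f _ _) ⟨∅, MeasurableSet.empty⟩)
  have hB : ∀ k, ∃ B : {B : Set S2 // MeasurableSet B},
      ε / 2 < |(∫ x in Set.univ ×ˢ B.1, f x.1 ∂(Ψ (s (φ k)))) -
        ∫ x in Set.univ ×ˢ B.1, f x.1 ∂(Ψ t)| := by
    intro k
    exact exists_lt_of_lt_ciSup (lt_of_lt_of_le (by linarith) (hD k))
  choose B hBgt using hB
  -- the auxiliary measures
  set ν₁ : ℕ → Measure S1 := fun k =>
    Measure.map Prod.fst ((Ψ (s (φ k))).restrict (Set.univ ×ˢ (B k).1)) with hν₁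
  set ν₂ : ℕ → Measure S1 := fun k =>
    Measure.map Prod.fst ((Ψ t).restrict (Set.univ ×ˢ ((B k).1)ᶜ)) with hν₂
  set ν₀ : Measure S1 := Measure.map Prod.fst (Ψ t) with hν₀
  haveI hprob : IsProbabilityMeasure ν₀ := Measure.isProbabilityMeasure_map measurable_fst.aemeasurable
  haveI hfin1 : ∀ k, IsFiniteMeasure (ν₁ k) := fun k =>
    Measure.isFiniteMeasure_map _ _
  haveI hfin2 : ∀ k, IsFiniteMeasure (ν₂ k) := fun k =>
    Measure.isFiniteMeasure_map _ _
  set P : ℕ → Measure S1 := fun k => ν₁ k + ν₂ k with hPdef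
  haveI hPfin : ∀ k, IsFiniteMeasure (P k) := fun k => by
    haveI := hfin1 k; haveI := hfin2 k
    exact inferInstance
  -- the key identity
  set Δ : BoundedContinuousFunction S1 ℝ → ℕ → ℝ := fun g k =>
    (∫ x, g x ∂(P k)) - ∫ x, g x ∂ν₀ with hΔdef
  have hkey : ∀ (g : BoundedContinuousFunction S1 ℝ) (k : ℕ),
      Δ g k = (∫ x in Set.univ ×ˢ (B k).1, g x.1 ∂(Ψ (s (φ k)))) -
        ∫ x in Set.univ ×ˢ (B k).1, g x.1 ∂(Ψ t) := by
    intro g k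
    haveI := hfin1 k; haveI := hfin2 k
    have e1 : ∫ x, g x ∂(P k) = (∫ x, g x ∂(ν₁ k)) + ∫ x, g x ∂(ν₂ k) :=
      integral_add_measure (g.integrable _) (g.integrable _)
    have e2 : ∫ x, g x ∂(ν₁ k) = ∫ x in Set.univ ×ˢ (B k).1, g x.1 ∂(Ψ (s (φ k))) :=
      integral_map_fst g _
    have e3 : ∫ x, g x ∂(ν₂ k) = ∫ x in Set.univ ×ˢ ((B k).1)ᶜ, g x.1 ∂(Ψ t) :=
      integral_map_fst g _
    have e4 : ∫ x, g x ∂ν₀ = ∫ x, g x.1 ∂(Ψ t) := integral_map_fst g _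
    have e5 := decomp_integral g (Ψ t) (B k).2
    rw [hΔdef]
    simp only [e1, e2, e3, e4, ← e5]
    ring
  -- Δ g → 0 for g ∈ F
  have hΔ0 : ∀ g ∈ F, Tendsto (fun k => Δ g k) atTop (𝓝 0) := by
    intro g hg
    have hsup := hsf g hg (fun k => s (φ k)) t (hst.comp hφ.tendsto_atTop)
    refine squeeze_zero_norm (fun k => ?_) hsup
    rw [Real.norm_eq_abs, hkey g k]
    exact le_ciSup (hbdd g _ _) (B k)
  -- masses
  have hmass_int : ∀ k, ∫ x, (1 : BoundedContinuousFunction S1 ℝ) x ∂(P k) =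
      ((P k) Set.univ).toReal := by
    intro k
    haveI := hPfin k
    simp [integral_const]
    rfl
  have hν₀one : ∫ x, (1 : BoundedContinuousFunction S1 ℝ) x ∂ν₀ = 1 := by
    simp [integral_const]
  set m : ℕ → ℝ := fun k => ((P k) Set.univ).toReal with hm
  have hm1 : Tendsto m atTop (𝓝 1) := by
    have := hΔ0 1 h1F
    have heq : ∀ k, Δ 1 k = m k - 1 := by
      intro k
      rw [hΔdef]
      simp only [hmass_int k, hν₀one, hm]
    have h2 : Tendsto (fun k => (m k - 1) + 1) atTop (𝓝 (0 + 1)) :=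
      Tendsto.add (this.congr fun k => heq k) tendsto_const_nhds
    simpa using h2
  have hpos : ∀ᶠ k in atTop, (1 : ℝ) / 2 < m k := hm1.eventually (eventually_gt_nhds (by norm_num))
  have hne : ∀ᶠ k in atTop, (P k) Set.univ ≠ 0 := by
    filter_upwards [hpos] with k hk h0
    simp only [hm, h0, ENNReal.toReal_zero] at hk
    norm_num at hk
  -- the normalized probability measures
  set Q : ℕ → ProbabilityMeasure S1 := fun k =>
    if h : IsProbabilityMeasure ((((P k) Set.univ)⁻¹ : ℝ≥0∞) • P k) then ⟨_, h⟩
    else ⟨Measure.dirac (Classical.arbitrary S1), inferInstance⟩ with hQdef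
  have hQev : ∀ᶠ k in atTop, (Q k : Measure S1) = (((P k) Set.univ)⁻¹ : ℝ≥0∞) • P k := by
    filter_upwards [hne] with k hk
    haveI := hPfin k
    have hfin : (P k) Set.univ ≠ ∞ := measure_ne_top _ _
    have hp : IsProbabilityMeasure ((((P k) Set.univ)⁻¹ : ℝ≥0∞) • P k) := by
      constructor
      simp [Measure.smul_apply, smul_eq_mul, ENNReal.inv_mul_cancel hk hfin]
    simp only [hQdef, dif_pos hp]
    exact congrArg Subtype.val (dif_pos hp)
  have hQint : ∀ (g : BoundedContinuousFunction S1 ℝ), ∀ᶠ k in atTop,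
      ∫ x, g x ∂(Q k : Measure S1) = (m k)⁻¹ * ∫ x, g x ∂(P k) := by
    intro g
    filter_upwards [hQev] with k hk
    rw [hk, integral_smul_measure, ENNReal.toReal_inv, smul_eq_mul, hm]
  -- convergence of Q to ν₀ tested against F
  have hQconv : ∀ g ∈ F, Tendsto (fun k => ∫ x, g x ∂(Q k : Measure S1)) atTop
      (𝓝 (∫ x, g x ∂ν₀)) := by
    intro g hg
    have hlim : Tendsto (fun k => (m k)⁻¹ * ((∫ x, g x ∂ν₀) + Δ g k)) atTop
        (𝓝 (1⁻¹ * ((∫ x, g x ∂ν₀) + 0))) :=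
      Tendsto.mul (hm1.inv₀ one_ne_zero) (tendsto_const_nhds.add (hΔ0 g hg))
    have hlim' : Tendsto (fun k => (m k)⁻¹ * ((∫ x, g x ∂ν₀) + Δ g k)) atTop
        (𝓝 (∫ x, g x ∂ν₀)) := by simpa using hlim
    refine Tendsto.congr' ?_ hlim'
    filter_upwards [hQint g] with k hk
    rw [hk]
    congr 1
    simp only [hΔdef]
    ring
  -- apply the determining property
  set ν₀P : ProbabilityMeasure S1 := ⟨ν₀, hprob⟩ with hν₀P
  have hQ : Tendsto Q atTop (𝓝 ν₀P) := (hdet Q ν₀P).mpr (fun g hg => hQconv g hg)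
  have hflim : Tendsto (fun k => ∫ x, f x ∂(Q k : Measure S1)) atTop (𝓝 (∫ x, f x ∂ν₀)) :=
    ProbabilityMeasure.tendsto_iff_forall_integral_tendsto.mp hQ f
  have hfP : Tendsto (fun k => ∫ x, f x ∂(P k)) atTop (𝓝 (∫ x, f x ∂ν₀)) := by
    have hmul : Tendsto (fun k => m k * ∫ x, f x ∂(Q k : Measure S1)) atTop
        (𝓝 (1 * ∫ x, f x ∂ν₀)) := hm1.mul hflim
    refine Tendsto.congr' ?_ (by simpa using hmul)
    filter_upwards [hQint f, hpos] with k hk hkpos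
    rw [hk, ← mul_assoc, mul_inv_cancel₀ (by linarith), one_mul]
  have hΔf : Tendsto (fun k => Δ f k) atTop (𝓝 0) := by
    have h9 := hfP.sub (tendsto_const_nhds (x := ∫ x, f x ∂ν₀))
    simpa [hΔdef] using h9
  have hnb : ∀ᶠ x in 𝓝 (0 : ℝ), |x| < ε / 2 := by
    have := eventually_abs_sub_lt (0 : ℝ) (show 0 < ε / 2 by linarith)
    simpa using this
  obtain ⟨k, hk⟩ := (hΔf.eventually hnb).exists
  have hgt := hBgt k
  rw [← hkey f k] at hgt
  linarith

end mainthm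

/-- A stochastic kernel `Ψ` on `S1 × S2` given `S3` is semi-uniform Feller if and only if there
exists a countable set `F` of bounded continuous functions on `S1` containing the constant
function `1`, determining weak convergence on `P(S1)`, and such that the semi-uniform Feller
convergence property holds for every `f ∈ F`. -/
theorem semiUniformFeller_iff_assumptionM
    {S1 S2 S3 : Type*}
    [MetricSpace S1] [TopologicalSpace.SeparableSpace S1] [MeasurableSpace S1] [BorelSpace S1]
    [StandardBorelSpace S1] [Nonempty S1]
    [MetricSpace S2] [TopologicalSpace.SeparableSpace S2] [MeasurableSpace S2] [BorelSpace S2]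
    [StandardBorelSpace S2] [Nonempty S2]
    [MetricSpace S3] [TopologicalSpace.SeparableSpace S3] [MeasurableSpace S3] [BorelSpace S3]
    [StandardBorelSpace S3] [Nonempty S3]
    (Ψ : Kernel S3 (S1 × S2)) [IsMarkovKernel Ψ] :
    SemiUniformFeller Ψ ↔
      ∃ F : Set (BoundedContinuousFunction S1 ℝ), F.Countable ∧
        (1 : BoundedContinuousFunction S1 ℝ) ∈ F ∧
        (∀ (μ : ℕ → ProbabilityMeasure S1) (μ₀ : ProbabilityMeasure S1),
          Tendsto μ atTop (𝓝 μ₀) ↔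
            ∀ f ∈ F, Tendsto (fun n => ∫ x, f x ∂(μ n : Measure S1)) atTop
              (𝓝 (∫ x, f x ∂(μ₀ : Measure S1)))) ∧
        (∀ f ∈ F, ∀ (s : ℕ → S3) (t : S3), Tendsto s atTop (𝓝 t) →
          Tendsto (fun n => ⨆ B : {B : Set S2 // MeasurableSet B},
            |(∫ x in Set.univ ×ˢ B.1, f x.1 ∂(Ψ (s n))) -
              ∫ x in Set.univ ×ˢ B.1, f x.1 ∂(Ψ t)|) atTop (𝓝 0)) := by
  constructor
  · intro h
    obtain ⟨F, hc, h1, hdet⟩ := exists_detFamily (S := S1)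
    exact ⟨F, hc, h1, hdet, fun f _ s t hst => h s t hst f⟩
  · rintro ⟨F, _, h1, hdet, hsf⟩
    exact semiUniformFeller_of_family Ψ F h1 hdet hsf
end

section
/- Suppose a stochastic kernel Ψ on S1×S2 given S3 satisfies: its marginal kernel Ψ(S1,·|·) on S2 given S3 is continuous in total variation, and there is a countable set F(S1) of bounded continuous functions on S1 determining weak convergence on P(S1) such that for every f ∈ F(S1) and every sequence s3^(n) → s3 in S3, sup_{B ∈ B(S2)} |∫_{S1} f(s1) Ψ(ds1,B|s3^(n)) − ∫_{S1} f(s1) Ψ(ds1,B|s3)| → 0. Let Φ be a stochastic kernel on S1 given S2×S3 with Ψ(A×B|s3) = ∫_B Φ(A|s2,s3) Ψ(S1,ds2|s3) for all Borel A, B, and all s3. Then for every sequence s3^(n) → s3 there is a subsequence s3^(n_k) such that Φ(·|s2,s3^(n_k)) converges weakly to Φ(·|s2,s3) for Ψ(S1,·|s3)-almost every s2 ∈ S2. -/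
open MeasureTheory ProbabilityTheory Filter Topology

section Aux

variable {α : Type*} [MeasurableSpace α]

lemma aux_integrable_of_abs_le (ρ : Measure α) [IsFiniteMeasure ρ]
    {h : α → ℝ} (hm : Measurable h) {M : ℝ} (hb : ∀ x, |h x| ≤ M) :
    Integrable h ρ :=
  ⟨hm.aestronglyMeasurable, HasFiniteIntegral.of_bounded (C := M)
    (Filter.Eventually.of_forall fun x => by simpa [Real.norm_eq_abs] using hb x)⟩

lemma aux_abs_integral_sub_le_of_le (μ ν : Measure α) [IsFiniteMeasure μ]
    [IsFiniteMeasure ν] (hle : ν ≤ μ) {g : α → ℝ} (hg : Measurable g) {M : ℝ}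
    (hgb : ∀ x, |g x| ≤ M) :
    |∫ x, g x ∂μ - ∫ x, g x ∂ν| ≤ M * ((μ Set.univ).toReal - (ν Set.univ).toReal) := by
  haveI : IsFiniteMeasure (μ - ν) := isFiniteMeasure_of_le μ Measure.sub_le
  have key : μ - ν + ν = μ := Measure.sub_add_cancel_of_le hle
  have h1 : Integrable g (μ - ν) := aux_integrable_of_abs_le _ hg hgb
  have h2 : Integrable g ν := aux_integrable_of_abs_le _ hg hgb
  have hμint : ∫ x, g x ∂μ = ∫ x, g x ∂(μ - ν) + ∫ x, g x ∂ν := by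
    rw [← integral_add_measure h1 h2, key]
  rw [hμint, add_sub_cancel_right]
  calc |∫ x, g x ∂(μ - ν)| ≤ M * ((μ - ν) Set.univ).toReal := by
        simpa [Real.norm_eq_abs, measureReal_def] using
          norm_integral_le_of_norm_le_const (μ := μ - ν) (f := g) (C := M)
            (Filter.Eventually.of_forall fun x => by simpa [Real.norm_eq_abs] using hgb x)
    _ = M * ((μ Set.univ).toReal - (ν Set.univ).toReal) := by
        rw [Measure.sub_apply MeasurableSet.univ hle,
          ENNReal.toReal_sub_of_le (Measure.le_iff'.mp hle Set.univ) (measure_ne_top _ _)]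

lemma aux_abs_setIntegral_sub_le (μ ν : Measure α) [IsFiniteMeasure μ] [IsFiniteMeasure ν]
    {g : α → ℝ} (hg : Measurable g) {M ε : ℝ} (hM : 0 ≤ M) (hgb : ∀ x, |g x| ≤ M)
    (hε : ∀ B : Set α, MeasurableSet B → |(μ B).toReal - (ν B).toReal| ≤ ε)
    {B : Set α} (hB : MeasurableSet B) :
    |∫ x in B, g x ∂μ - ∫ x in B, g x ∂ν| ≤ 2 * (M * ε) := by
  obtain ⟨u, hu, hu1, hu2⟩ := hahn_decomposition (μ := μ) (ν := ν)
  have hBu : MeasurableSet (B ∩ u) := hB.inter hu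
  have hBu' : MeasurableSet (B ∩ uᶜ) := hB.inter hu.compl
  have h1 : ν.restrict (B ∩ u) ≤ μ.restrict (B ∩ u) := by
    rw [Measure.le_iff]
    intro t ht
    rw [Measure.restrict_apply ht, Measure.restrict_apply ht]
    exact hu1 _ (ht.inter hBu) fun x hx => hx.2.2
  have h2 : μ.restrict (B ∩ uᶜ) ≤ ν.restrict (B ∩ uᶜ) := by
    rw [Measure.le_iff]
    intro t ht
    rw [Measure.restrict_apply ht, Measure.restrict_apply ht]
    exact hu2 _ (ht.inter hBu') fun x hx => hx.2.2
  have e1 := aux_abs_integral_sub_le_of_le _ _ h1 hg hgb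
  have e2 := aux_abs_integral_sub_le_of_le _ _ h2 hg hgb
  rw [Measure.restrict_apply_univ, Measure.restrict_apply_univ] at e1 e2
  have hm1 : (μ (B ∩ u)).toReal - (ν (B ∩ u)).toReal ≤ ε :=
    (le_abs_self _).trans (hε _ hBu)
  have hm2 : (ν (B ∩ uᶜ)).toReal - (μ (B ∩ uᶜ)).toReal ≤ ε := by
    have h := hε _ hBu'
    rw [abs_sub_comm] at h
    exact (le_abs_self _).trans h
  have e1' : |∫ x in B ∩ u, g x ∂μ - ∫ x in B ∩ u, g x ∂ν| ≤ M * ε :=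
    e1.trans (mul_le_mul_of_nonneg_left hm1 hM)
  have e2' : |∫ x in B ∩ uᶜ, g x ∂ν - ∫ x in B ∩ uᶜ, g x ∂μ| ≤ M * ε :=
    e2.trans (mul_le_mul_of_nonneg_left hm2 hM)
  have split : ∀ (ρ : Measure α) [IsFiniteMeasure ρ],
      ∫ x in B, g x ∂ρ = ∫ x in B ∩ u, g x ∂ρ + ∫ x in B ∩ uᶜ, g x ∂ρ := by
    intro ρ _
    have hdisj : Disjoint (B ∩ u) (B ∩ uᶜ) :=
      Disjoint.mono inf_le_right inf_le_right disjoint_compl_right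
    rw [← setIntegral_union hdisj hBu'
      ((aux_integrable_of_abs_le ρ hg hgb).integrableOn)
      ((aux_integrable_of_abs_le ρ hg hgb).integrableOn), Set.inter_union_compl]
  rw [split μ, split ν]
  have hring : (∫ x in B ∩ u, g x ∂μ + ∫ x in B ∩ uᶜ, g x ∂μ)
      - (∫ x in B ∩ u, g x ∂ν + ∫ x in B ∩ uᶜ, g x ∂ν)
      = (∫ x in B ∩ u, g x ∂μ - ∫ x in B ∩ u, g x ∂ν)
        - (∫ x in B ∩ uᶜ, g x ∂ν - ∫ x in B ∩ uᶜ, g x ∂μ) := by ring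
  rw [hring]
  calc |(∫ x in B ∩ u, g x ∂μ - ∫ x in B ∩ u, g x ∂ν)
        - (∫ x in B ∩ uᶜ, g x ∂ν - ∫ x in B ∩ uᶜ, g x ∂μ)|
      ≤ |∫ x in B ∩ u, g x ∂μ - ∫ x in B ∩ u, g x ∂ν|
        + |∫ x in B ∩ uᶜ, g x ∂ν - ∫ x in B ∩ uᶜ, g x ∂μ| := abs_sub _ _
    _ ≤ M * ε + M * ε := add_le_add e1' e2'
    _ = 2 * (M * ε) := by ring

end Aux




lemma aux_disint {S1 S2 S3 : Type*} [TopologicalSpace S1] [MeasurableSpace S1]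
    [OpensMeasurableSpace S1] [MeasurableSpace S2] [MeasurableSpace S3]
    (Ψ : Kernel S3 (S1 × S2)) [IsMarkovKernel Ψ] (Φ : Kernel (S2 × S3) S1) [IsMarkovKernel Φ]
    (t : S3)
    (hΦt : ∀ (A : Set S1) (B : Set S2), MeasurableSet A → MeasurableSet B →
      Ψ t (A ×ˢ B) = ∫⁻ s2 in B, Φ (s2, t) A ∂(Measure.map Prod.snd (Ψ t)))
    (f : BoundedContinuousFunction S1 ℝ) {B : Set S2} (hB : MeasurableSet B) :
    ∫ x in Set.univ ×ˢ B, f x.1 ∂(Ψ t)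
      = ∫ s2 in B, (∫ x, f x ∂(Φ (s2, t))) ∂(Measure.map Prod.snd (Ψ t)) := by
  set ν : Measure S2 := Measure.map Prod.snd (Ψ t) with hνdef
  haveI hνp : IsProbabilityMeasure ν := Measure.isProbabilityMeasure_map measurable_snd.aemeasurable
  set κ : Kernel S2 S1 := Φ.comap (fun s2 => (s2, t)) (measurable_id.prodMk measurable_const)
    with hκdef
  haveI : IsMarkovKernel κ := ⟨fun a => by rw [hκdef, Kernel.comap_apply]; infer_instance⟩
  have hswap : Measure.map Prod.swap (Ψ t) = ν.compProd κ := by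
    haveI : IsProbabilityMeasure (Measure.map Prod.swap (Ψ t)) :=
      Measure.isProbabilityMeasure_map measurable_swap.aemeasurable
    refine ext_of_generate_finite _ generateFrom_prod.symm isPiSystem_prod ?_ ?_
    · rintro _ ⟨B', hB', A, hA, rfl⟩
      simp only [Set.mem_setOf_eq] at hB' hA
      rw [Measure.map_apply measurable_swap (hB'.prod hA)]
      have hpre : Prod.swap ⁻¹' (B' ×ˢ A) = A ×ˢ B' := by
        ext x; simp [Set.mem_prod, and_comm]
      rw [hpre, hΦt A B' hA hB', Measure.compProd_apply_prod hB' hA]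
      rfl
    · rw [measure_univ, measure_univ]
  have hfm : StronglyMeasurable (fun y : S2 × S1 => f y.2) :=
    f.continuous.stronglyMeasurable.comp_measurable measurable_snd
  haveI : IsProbabilityMeasure (ν.compProd κ) :=
    ⟨by rw [Measure.compProd_apply_univ]; exact measure_univ⟩
  have hfint : Integrable (fun y : S2 × S1 => f y.2) (ν.compProd κ) :=
    aux_integrable_of_abs_le _ (f.continuous.measurable.comp measurable_snd)
      (M := ‖f‖) (fun y => by simpa [Real.norm_eq_abs] using f.norm_coe_le_norm y.2)
  have hpre2 : Prod.swap ⁻¹' (B ×ˢ (Set.univ : Set S1)) = Set.univ ×ˢ B := by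
    ext x; simp [Set.mem_prod]
  calc ∫ x in Set.univ ×ˢ B, f x.1 ∂(Ψ t)
      = ∫ y in B ×ˢ (Set.univ : Set S1), f y.2 ∂(Measure.map Prod.swap (Ψ t)) := by
        rw [setIntegral_map (hB.prod MeasurableSet.univ) hfm.aestronglyMeasurable
          measurable_swap.aemeasurable, hpre2]
        rfl
    _ = ∫ s2 in B, (∫ x, f x ∂(Φ (s2, t))) ∂ν := by
        rw [hswap, Measure.setIntegral_compProd hB MeasurableSet.univ hfint.integrableOn]
        simp [hκdef, Kernel.comap_apply]

/-- If the marginal of `Ψ` on `S2` is continuous in total variation and the semi-uniform Feller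
convergence property holds for every `f` in a countable set `F` of bounded continuous functions
determining weak convergence on `P(S1)`, then for any disintegrating kernel `Φ` and any sequence
`s3⁽ⁿ⁾ → s3` there is a subsequence along which `Φ(·|s2, s3⁽ⁿᵏ⁾) → Φ(·|s2, s3)` weakly for
`Ψ(S1, ·|s3)`-almost every `s2`. -/
theorem assumptionM_implies_assumptionH
    {S1 S2 S3 : Type*}
    [MetricSpace S1] [TopologicalSpace.SeparableSpace S1] [MeasurableSpace S1] [BorelSpace S1]
    [StandardBorelSpace S1] [Nonempty S1]
    [MetricSpace S2] [TopologicalSpace.SeparableSpace S2] [MeasurableSpace S2] [BorelSpace S2]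
    [StandardBorelSpace S2] [Nonempty S2]
    [MetricSpace S3] [TopologicalSpace.SeparableSpace S3] [MeasurableSpace S3] [BorelSpace S3]
    [StandardBorelSpace S3] [Nonempty S3]
    (Ψ : Kernel S3 (S1 × S2)) [IsMarkovKernel Ψ]
    (hTV : ∀ (s : ℕ → S3) (t : S3), Tendsto s atTop (𝓝 t) →
      Tendsto (fun n => ⨆ B : {B : Set S2 // MeasurableSet B},
        |((Ψ (s n)) ((Set.univ : Set S1) ×ˢ B.1)).toReal -
          ((Ψ t) ((Set.univ : Set S1) ×ˢ B.1)).toReal|) atTop (𝓝 0))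
    (F : Set (BoundedContinuousFunction S1 ℝ)) (hFc : F.Countable)
    (hFdet : ∀ (μ : ℕ → ProbabilityMeasure S1) (μ₀ : ProbabilityMeasure S1),
      Tendsto μ atTop (𝓝 μ₀) ↔
        ∀ f ∈ F, Tendsto (fun n => ∫ x, f x ∂(μ n : Measure S1)) atTop
          (𝓝 (∫ x, f x ∂(μ₀ : Measure S1))))
    (hF : ∀ f ∈ F, ∀ (s : ℕ → S3) (t : S3), Tendsto s atTop (𝓝 t) →
      Tendsto (fun n => ⨆ B : {B : Set S2 // MeasurableSet B},
        |(∫ x in Set.univ ×ˢ B.1, f x.1 ∂(Ψ (s n))) -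
          ∫ x in Set.univ ×ˢ B.1, f x.1 ∂(Ψ t)|) atTop (𝓝 0))
    (Φ : Kernel (S2 × S3) S1) [IsMarkovKernel Φ]
    (hΦ : ∀ (t : S3) (A : Set S1) (B : Set S2), MeasurableSet A → MeasurableSet B →
      Ψ t (A ×ˢ B) = ∫⁻ s2 in B, Φ (s2, t) A ∂(Measure.map Prod.snd (Ψ t))) :
    ∀ (s : ℕ → S3) (t : S3), Tendsto s atTop (𝓝 t) →
      ∃ φ : ℕ → ℕ, StrictMono φ ∧
        ∀ᵐ s2 ∂(Measure.map Prod.snd (Ψ t)), ∀ f : BoundedContinuousFunction S1 ℝ,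
          Tendsto (fun k => ∫ x, f x ∂(Φ (s2, s (φ k)))) atTop
            (𝓝 (∫ x, f x ∂(Φ (s2, t)))) := by
  intro s t hst
  -- notation
  set G : S3 → BoundedContinuousFunction S1 ℝ → S2 → ℝ :=
    fun t' f s2 => ∫ x, f x ∂(Φ (s2, t')) with hG
  set ν : S3 → Measure S2 := fun t' => Measure.map Prod.snd (Ψ t') with hνdef
  haveI hνp : ∀ t', IsProbabilityMeasure (ν t') :=
    fun t' => Measure.isProbabilityMeasure_map measurable_snd.aemeasurable
  -- measurability and bounds for G
  have hGm : ∀ (t' : S3) (f : BoundedContinuousFunction S1 ℝ), Measurable (G t' f) := by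
    intro t' f
    have hsm : StronglyMeasurable (fun p : S2 × S3 => ∫ x, f x ∂(Φ p)) :=
      MeasureTheory.StronglyMeasurable.integral_kernel_prod_right (κ := Φ)
        (f := fun _ y => f y) (f.continuous.stronglyMeasurable.comp_measurable measurable_snd)
    exact hsm.measurable.comp (measurable_id.prodMk measurable_const)
  have hGb : ∀ (t' : S3) (f : BoundedContinuousFunction S1 ℝ) (s2 : S2),
      |G t' f s2| ≤ ‖f‖ := by
    intro t' f s2
    have h := norm_integral_le_of_norm_le_const (μ := Φ (s2, t')) (f := fun x => f x)
      (C := ‖f‖) (Filter.Eventually.of_forall fun x => f.norm_coe_le_norm x)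
    rw [Real.norm_eq_abs] at h
    simpa [hG] using h.trans (by simp)
  -- map identity
  have hmap : ∀ (t' : S3) (B : Set S2), MeasurableSet B →
      ν t' B = Ψ t' ((Set.univ : Set S1) ×ˢ B) := by
    intro t' B hB
    rw [hνdef]
    rw [Measure.map_apply measurable_snd hB]
    congr 1
    ext x
    simp [Set.mem_prod]
  have htoReal1 : ∀ (t' : S3) (D : Set (S1 × S2)), ((Ψ t') D).toReal ≤ 1 := by
    intro t' D
    simpa using ENNReal.toReal_mono ENNReal.one_ne_top prob_le_one
  -- TV part
  have hTVn := hTV s t hst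
  set εTV : ℕ → ℝ := fun n => ⨆ B : {B : Set S2 // MeasurableSet B},
      |((Ψ (s n)) ((Set.univ : Set S1) ×ˢ B.1)).toReal -
        ((Ψ t) ((Set.univ : Set S1) ×ˢ B.1)).toReal| with hεTV
  have hTVB : ∀ (n : ℕ) (B : Set S2), MeasurableSet B →
      |(ν (s n) B).toReal - (ν t B).toReal| ≤ εTV n := by
    intro n B hB
    rw [hmap _ _ hB, hmap _ _ hB]
    have hbdd : BddAbove (Set.range fun B : {B : Set S2 // MeasurableSet B} =>
        |((Ψ (s n)) ((Set.univ : Set S1) ×ˢ B.1)).toReal -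
          ((Ψ t) ((Set.univ : Set S1) ×ˢ B.1)).toReal|) := by
      refine ⟨2, ?_⟩
      rintro x ⟨C, rfl⟩
      have h1 := htoReal1 (s n) ((Set.univ : Set S1) ×ˢ C.1)
      have h2 := htoReal1 t ((Set.univ : Set S1) ×ˢ C.1)
      have h3 : (0:ℝ) ≤ ((Ψ (s n)) ((Set.univ : Set S1) ×ˢ C.1)).toReal := ENNReal.toReal_nonneg
      have h4 : (0:ℝ) ≤ ((Ψ t) ((Set.univ : Set S1) ×ˢ C.1)).toReal := ENNReal.toReal_nonneg
      exact abs_le.mpr ⟨by linarith, by linarith⟩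
    exact le_ciSup hbdd (⟨B, hB⟩ : {B : Set S2 // MeasurableSet B})
  -- main L¹ convergence for each f ∈ F
  have hEnn : ∀ (n : ℕ) (f : BoundedContinuousFunction S1 ℝ),
      0 ≤ ∫ s2, |G (s n) f s2 - G t f s2| ∂(ν t) :=
    fun n f => integral_nonneg fun x => abs_nonneg _
  have hE : ∀ (f : BoundedContinuousFunction S1 ℝ), f ∈ F →
      Tendsto (fun n => ∫ s2, |G (s n) f s2 - G t f s2| ∂(ν t)) atTop (𝓝 0) := by
    intro f hf
    have hMnn : (0:ℝ) ≤ ‖f‖ := norm_nonneg f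
    have hFn := hF f hf s t hst
    set εF : ℕ → ℝ := fun n => ⨆ B : {B : Set S2 // MeasurableSet B},
        |(∫ x in Set.univ ×ˢ B.1, f x.1 ∂(Ψ (s n))) -
          ∫ x in Set.univ ×ˢ B.1, f x.1 ∂(Ψ t)| with hεF
    have hIb : ∀ (t' : S3) (B : Set S2),
        |∫ x in Set.univ ×ˢ B, f x.1 ∂(Ψ t')| ≤ ‖f‖ := by
      intro t' B
      have h := norm_integral_le_of_norm_le_const (μ := (Ψ t').restrict (Set.univ ×ˢ B))
        (f := fun x : S1 × S2 => f x.1) (C := ‖f‖)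
        (Filter.Eventually.of_forall fun x => f.norm_coe_le_norm x.1)
      rw [Real.norm_eq_abs] at h
      refine h.trans ?_
      rw [measureReal_def, Measure.restrict_apply_univ]
      calc ‖f‖ * ((Ψ t') (Set.univ ×ˢ B)).toReal ≤ ‖f‖ * 1 :=
            mul_le_mul_of_nonneg_left (htoReal1 _ _) hMnn
        _ = ‖f‖ := mul_one _
    have hFB : ∀ (n : ℕ) (B : Set S2), MeasurableSet B →
        |(∫ x in Set.univ ×ˢ B, f x.1 ∂(Ψ (s n))) -
          ∫ x in Set.univ ×ˢ B, f x.1 ∂(Ψ t)| ≤ εF n := by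
      intro n B hB
      have hbdd : BddAbove (Set.range fun B : {B : Set S2 // MeasurableSet B} =>
          |(∫ x in Set.univ ×ˢ B.1, f x.1 ∂(Ψ (s n))) -
            ∫ x in Set.univ ×ˢ B.1, f x.1 ∂(Ψ t)|) := by
        refine ⟨2 * ‖f‖, ?_⟩
        rintro x ⟨C, rfl⟩
        have h1 := hIb (s n) C.1
        have h2 := hIb t C.1
        have := abs_sub (∫ x in Set.univ ×ˢ C.1, f x.1 ∂(Ψ (s n)))
          (∫ x in Set.univ ×ˢ C.1, f x.1 ∂(Ψ t))
        linarith
      exact le_ciSup hbdd (⟨B, hB⟩ : {B : Set S2 // MeasurableSet B})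
    -- key per-set estimate
    have hkey : ∀ (n : ℕ) (B : Set S2), MeasurableSet B →
        |∫ s2 in B, G (s n) f s2 ∂(ν t) - ∫ s2 in B, G t f s2 ∂(ν t)|
          ≤ 2 * (‖f‖ * εTV n) + εF n := by
      intro n B hB
      have hA := aux_abs_setIntegral_sub_le (ν (s n)) (ν t) (hGm (s n) f) hMnn
        (hGb (s n) f) (hTVB n) hB
      have hd1 : ∫ s2 in B, G (s n) f s2 ∂(ν (s n))
          = ∫ x in Set.univ ×ˢ B, f x.1 ∂(Ψ (s n)) :=
        (aux_disint Ψ Φ (s n) (hΦ (s n)) f hB).symm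
      have hd2 : ∫ s2 in B, G t f s2 ∂(ν t)
          = ∫ x in Set.univ ×ˢ B, f x.1 ∂(Ψ t) :=
        (aux_disint Ψ Φ t (hΦ t) f hB).symm
      have h2 : |∫ s2 in B, G (s n) f s2 ∂(ν (s n)) - ∫ s2 in B, G t f s2 ∂(ν t)|
          ≤ εF n := by
        rw [hd1, hd2]; exact hFB n B hB
      calc |∫ s2 in B, G (s n) f s2 ∂(ν t) - ∫ s2 in B, G t f s2 ∂(ν t)|
          ≤ |∫ s2 in B, G (s n) f s2 ∂(ν t) - ∫ s2 in B, G (s n) f s2 ∂(ν (s n))|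
            + |∫ s2 in B, G (s n) f s2 ∂(ν (s n)) - ∫ s2 in B, G t f s2 ∂(ν t)| :=
            abs_sub_le _ _ _
        _ ≤ 2 * (‖f‖ * εTV n) + εF n := by
            refine add_le_add ?_ h2
            rw [abs_sub_comm]
            exact hA
    -- pointwise L¹ bound
    have hEb : ∀ n, ∫ s2, |G (s n) f s2 - G t f s2| ∂(ν t)
        ≤ 2 * (2 * (‖f‖ * εTV n) + εF n) := by
      intro n
      set Bn := {s2 : S2 | G t f s2 ≤ G (s n) f s2} with hBndef
      have hBn : MeasurableSet Bn := measurableSet_le (hGm t f) (hGm (s n) f)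
      have hint1 : Integrable (fun s2 => |G (s n) f s2 - G t f s2|) (ν t) := by
        refine aux_integrable_of_abs_le _ (((hGm (s n) f).sub (hGm t f)).abs)
          (M := 2 * ‖f‖) (fun x => ?_)
        rw [abs_abs]
        have h1 := hGb (s n) f x
        have h2 := hGb t f x
        have := abs_sub (G (s n) f x) (G t f x)
        linarith
      have hi : ∀ (t' : S3) (C : Set S2),
          Integrable (fun s2 => G t' f s2) ((ν t).restrict C) :=
        fun t' C => aux_integrable_of_abs_le _ (hGm t' f) (hGb t' f)
      have hsplit : ∫ s2, |G (s n) f s2 - G t f s2| ∂(ν t)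
          = ∫ s2 in Bn, |G (s n) f s2 - G t f s2| ∂(ν t)
            + ∫ s2 in Bnᶜ, |G (s n) f s2 - G t f s2| ∂(ν t) :=
        (integral_add_compl hBn hint1).symm
      have hcongr1 : ∫ s2 in Bn, |G (s n) f s2 - G t f s2| ∂(ν t)
          = ∫ s2 in Bn, (G (s n) f s2 - G t f s2) ∂(ν t) :=
        setIntegral_congr_fun hBn (fun x hx => abs_of_nonneg (sub_nonneg.mpr hx))
      have hcongr2 : ∫ s2 in Bnᶜ, |G (s n) f s2 - G t f s2| ∂(ν t)
          = ∫ s2 in Bnᶜ, (G t f s2 - G (s n) f s2) ∂(ν t) := by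
        refine setIntegral_congr_fun hBn.compl (fun x hx => ?_)
        rw [abs_sub_comm]
        exact abs_of_nonneg (sub_nonneg.mpr (le_of_lt (not_le.mp hx)))
      have e1 : ∫ s2 in Bn, (G (s n) f s2 - G t f s2) ∂(ν t)
          = ∫ s2 in Bn, G (s n) f s2 ∂(ν t) - ∫ s2 in Bn, G t f s2 ∂(ν t) :=
        integral_sub (hi _ _) (hi _ _)
      have e2 : ∫ s2 in Bnᶜ, (G t f s2 - G (s n) f s2) ∂(ν t)
          = ∫ s2 in Bnᶜ, G t f s2 ∂(ν t) - ∫ s2 in Bnᶜ, G (s n) f s2 ∂(ν t) :=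
        integral_sub (hi _ _) (hi _ _)
      have b1 : ∫ s2 in Bn, G (s n) f s2 ∂(ν t) - ∫ s2 in Bn, G t f s2 ∂(ν t)
          ≤ 2 * (‖f‖ * εTV n) + εF n :=
        (le_abs_self _).trans (hkey n Bn hBn)
      have b2 : ∫ s2 in Bnᶜ, G t f s2 ∂(ν t) - ∫ s2 in Bnᶜ, G (s n) f s2 ∂(ν t)
          ≤ 2 * (‖f‖ * εTV n) + εF n := by
        have h := hkey n Bnᶜ hBn.compl
        rw [abs_sub_comm] at h
        exact (le_abs_self _).trans h
      rw [hsplit, hcongr1, hcongr2, e1, e2]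
      linarith
    have hc : Tendsto (fun n => 2 * (2 * (‖f‖ * εTV n) + εF n)) atTop (𝓝 0) := by
      have := (((hTVn.const_mul ‖f‖).const_mul 2).add hFn).const_mul 2
      simpa using this
    exact squeeze_zero (fun n => hEnn n f) hEb hc
  -- enumeration of F
  obtain ⟨e, heF, heE⟩ : ∃ e : ℕ → BoundedContinuousFunction S1 ℝ,
      F ⊆ Set.range e ∧ ∀ j, Tendsto (fun n => ∫ s2, |G (s n) (e j) s2 - G t (e j) s2| ∂(ν t))
        atTop (𝓝 0) := by
    rcases Set.eq_empty_or_nonempty F with hFe | hFne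
    · refine ⟨fun _ => 0, by simp [hFe], fun j => ?_⟩
      have hz : (fun n => ∫ s2, |G (s n) (0 : BoundedContinuousFunction S1 ℝ) s2
          - G t (0 : BoundedContinuousFunction S1 ℝ) s2| ∂(ν t)) = fun _ => (0:ℝ) := by
        funext n
        simp [hG]
      rw [hz]
      exact tendsto_const_nhds
    · obtain ⟨e, he⟩ := hFc.exists_eq_range hFne
      exact ⟨e, he.le, fun j => hE (e j) (by rw [he]; exact Set.mem_range_self j)⟩
  -- choice of the subsequence
  have hNk : ∀ k : ℕ, ∃ N : ℕ, ∀ n ≥ N, ∀ j ≤ k,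
      ∫ s2, |G (s n) (e j) s2 - G t (e j) s2| ∂(ν t) ≤ (1/2 : ℝ)^k := by
    intro k
    have hev : ∀ᶠ n in atTop, ∀ j ∈ Finset.range (k+1),
        ∫ s2, |G (s n) (e j) s2 - G t (e j) s2| ∂(ν t) ≤ (1/2 : ℝ)^k := by
      rw [eventually_all_finset]
      intro j _
      exact (heE j).eventually_le_const (by positivity)
    obtain ⟨N, hN⟩ := eventually_atTop.mp hev
    exact ⟨N, fun n hn j hj => hN n hn j (Finset.mem_range.mpr (Nat.lt_succ_of_le hj))⟩
  choose N hN using hNk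
  set φ : ℕ → ℕ := fun k => k + (Finset.range (k+1)).sup N with hφdef
  have hφmono : StrictMono φ := by
    apply strictMono_nat_of_lt_succ
    intro k
    have hsup : (Finset.range (k+1)).sup N ≤ (Finset.range (k+1+1)).sup N :=
      Finset.sup_mono (Finset.range_subset_range.mpr (by omega))
    simp only [hφdef]
    omega
  have hφge : ∀ k, N k ≤ φ k := fun k =>
    (Finset.le_sup (Finset.self_mem_range_succ k)).trans (Nat.le_add_left _ _)
  have hEφ : ∀ j k, j ≤ k →
      ∫ s2, |G (s (φ k)) (e j) s2 - G t (e j) s2| ∂(ν t) ≤ (1/2 : ℝ)^k :=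
    fun j k hjk => hN k (φ k) (hφge k) j hjk
  -- a.e. convergence along the subsequence, for each j
  have hae : ∀ j : ℕ, ∀ᵐ s2 ∂(ν t),
      Tendsto (fun k => G (s (φ k)) (e j) s2) atTop (𝓝 (G t (e j) s2)) := by
    intro j
    set d : ℕ → S2 → ℝ := fun k s2 => |G (s (φ k)) (e j) s2 - G t (e j) s2| with hd
    have hdm : ∀ k, Measurable (d k) := fun k => ((hGm (s (φ k)) (e j)).sub (hGm t (e j))).abs
    have hdnn : ∀ k s2, 0 ≤ d k s2 := fun k s2 => abs_nonneg _
    have hdb : ∀ k s2, |d k s2| ≤ 2 * ‖e j‖ := by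
      intro k s2
      rw [abs_abs]
      have h1 := hGb (s (φ k)) (e j) s2
      have h2 := hGb t (e j) s2
      have := abs_sub (G (s (φ k)) (e j) s2) (G t (e j) s2)
      linarith
    have hdint : ∀ k, Integrable (d k) (ν t) :=
      fun k => aux_integrable_of_abs_le _ (hdm k) (hdb k)
    have hsum : Summable (fun k => ∫ s2, d k s2 ∂(ν t)) := by
      rw [← summable_nat_add_iff j]
      refine Summable.of_nonneg_of_le (fun k => integral_nonneg fun x => hdnn _ x)
        (fun k => ?_) (summable_geometric_two.mul_right ((1/2 : ℝ)^j))
      have h := hEφ j (k + j) (by omega)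
      calc ∫ s2, d (k + j) s2 ∂(ν t) ≤ (1/2 : ℝ)^(k+j) := h
        _ = (1/2 : ℝ)^k * (1/2 : ℝ)^j := pow_add _ _ _
    have hlt : ∫⁻ s2, ∑' k, ENNReal.ofReal (d k s2) ∂(ν t) < ⊤ := by
      rw [lintegral_tsum (fun k => ((hdm k).ennreal_ofReal).aemeasurable)]
      have heq : ∀ k, ∫⁻ s2, ENNReal.ofReal (d k s2) ∂(ν t)
          = ENNReal.ofReal (∫ s2, d k s2 ∂(ν t)) := fun k =>
        (ofReal_integral_eq_lintegral_ofReal (hdint k)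
          (Filter.Eventually.of_forall (hdnn k))).symm
      rw [tsum_congr heq,
        ← ENNReal.ofReal_tsum_of_nonneg (fun k => integral_nonneg fun x => hdnn _ x) hsum]
      exact ENNReal.ofReal_lt_top
    have hfin : ∀ᵐ s2 ∂(ν t), ∑' k, ENNReal.ofReal (d k s2) < ⊤ :=
      ae_lt_top (Measurable.ennreal_tsum fun k => (hdm k).ennreal_ofReal) hlt.ne
    filter_upwards [hfin] with s2 hs2
    have hsumd : Summable (fun k => d k s2) := by
      have h := ENNReal.summable_toReal hs2.ne
      refine (summable_congr fun k => ?_).mp h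
      exact ENNReal.toReal_ofReal (hdnn k s2)
    have h0 : Tendsto (fun k => d k s2) atTop (𝓝 0) := hsumd.tendsto_atTop_zero
    rw [tendsto_iff_dist_tendsto_zero]
    simpa [Real.dist_eq, hd] using h0
  have hae' : ∀ᵐ s2 ∂(ν t), ∀ j : ℕ,
      Tendsto (fun k => G (s (φ k)) (e j) s2) atTop (𝓝 (G t (e j) s2)) :=
    ae_all_iff.mpr hae
  refine ⟨φ, hφmono, ?_⟩
  filter_upwards [hae'] with s2 hs2
  intro f
  set P : ℕ → ProbabilityMeasure S1 := fun k => ⟨Φ (s2, s (φ k)), inferInstance⟩ with hP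
  set P0 : ProbabilityMeasure S1 := ⟨Φ (s2, t), inferInstance⟩ with hP0
  have hPlim : Tendsto P atTop (𝓝 P0) := by
    rw [hFdet]
    intro f' hf'
    obtain ⟨j, hj⟩ := heF hf'
    exact hj ▸ hs2 j
  exact ProbabilityMeasure.tendsto_iff_forall_integral_tendsto.mp hPlim f
end

section
/- Let P1 be a stochastic kernel on W given W×A and Q1 a stochastic kernel on Y given W×A, and define the stochastic kernel P on W×Y given W×A by P(B×C|w,a) := P1(B|w,a)·Q1(C|w,a) for Borel B ⊆ W and C ⊆ Y. Then P is semi-uniform Feller if and only if P1 is weakly continuous and Q1 is continuous in total variation. -/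
open MeasureTheory ProbabilityTheory Filter Topology

lemma integral_fst_prod_rect {W Y : Type*} [MetricSpace W] [MeasurableSpace W] [BorelSpace W]
    [MeasurableSpace Y]
    (μ : Measure W) [IsProbabilityMeasure μ] (ν : Measure Y) [IsProbabilityMeasure ν]
    (μP : Measure (W × Y))
    (h : ∀ B C, MeasurableSet B → MeasurableSet C → μP (B ×ˢ C) = μ B * ν C)
    (f : BoundedContinuousFunction W ℝ) (B : Set Y) :
    ∫ x in Set.univ ×ˢ B, f x.1 ∂μP = (∫ x, f x ∂μ) * (ν B).toReal := by
  have hprod : μ.prod ν = μP := Measure.prod_eq h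
  have hrest : μP.restrict (Set.univ ×ˢ B) = μ.prod (ν.restrict B) := by
    rw [← hprod, ← Measure.prod_restrict, Measure.restrict_univ]
  rw [show (∫ x in Set.univ ×ˢ B, f x.1 ∂μP) = ∫ x, f x.1 ∂(μP.restrict (Set.univ ×ˢ B)) from rfl,
    hrest]
  have hint : Integrable (fun x : W × Y => f x.1) (μ.prod (ν.restrict B)) := by
    refine Integrable.mono' (integrable_const ‖f‖)
      ((f.continuous.measurable.comp measurable_fst).aestronglyMeasurable) ?_
    exact Eventually.of_forall fun x => f.norm_coe_le_norm x.1
  rw [MeasureTheory.integral_prod _ hint]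
  simp only [integral_const, Measure.restrict_apply_univ, smul_eq_mul]
  rw [MeasureTheory.integral_const_mul, measureReal_def, Measure.restrict_apply_univ]
  ring


/-- For a `POMDP₁` with transition kernel `P(B × C | w, a) = P₁(B | w, a) · Q₁(C | w, a)`, the
kernel `P` is semi-uniform Feller if and only if `P₁` is weakly continuous and `Q₁` is
continuous in total variation. -/
theorem semiUniformFeller_pomdp1
    {W Y A : Type*}
    [MetricSpace W] [TopologicalSpace.SeparableSpace W] [MeasurableSpace W] [BorelSpace W]
    [StandardBorelSpace W] [Nonempty W]
    [MetricSpace Y] [TopologicalSpace.SeparableSpace Y] [MeasurableSpace Y] [BorelSpace Y]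
    [StandardBorelSpace Y] [Nonempty Y]
    [MetricSpace A] [TopologicalSpace.SeparableSpace A] [MeasurableSpace A] [BorelSpace A]
    [StandardBorelSpace A] [Nonempty A]
    (P1 : Kernel (W × A) W) [IsMarkovKernel P1]
    (Q1 : Kernel (W × A) Y) [IsMarkovKernel Q1]
    (P : Kernel (W × A) (W × Y)) [IsMarkovKernel P]
    (hP : ∀ (w : W) (a : A) (B : Set W) (C : Set Y), MeasurableSet B → MeasurableSet C →
      P (w, a) (B ×ˢ C) = P1 (w, a) B * Q1 (w, a) C) :
    SemiUniformFeller P ↔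
      ((∀ (p : ℕ → W × A) (p₀ : W × A), Tendsto p atTop (𝓝 p₀) →
          ∀ f : BoundedContinuousFunction W ℝ,
            Tendsto (fun n => ∫ x, f x ∂(P1 (p n))) atTop (𝓝 (∫ x, f x ∂(P1 p₀)))) ∧
        (∀ (p : ℕ → W × A) (p₀ : W × A), Tendsto p atTop (𝓝 p₀) →
          Tendsto (fun n => ⨆ C : {C : Set Y // MeasurableSet C},
            |((Q1 (p n)) C.1).toReal - ((Q1 p₀) C.1).toReal|) atTop (𝓝 0))) := by
  -- key: rewrite the set integrals
  have key : ∀ (t : W × A) (f : BoundedContinuousFunction W ℝ) (B : Set Y),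
      ∫ x in Set.univ ×ˢ B, f x.1 ∂(P t) = (∫ x, f x ∂(P1 t)) * ((Q1 t) B).toReal := by
    intro t f B
    exact integral_fst_prod_rect (P1 t) (Q1 t) (P t)
      (fun B C hB hC => by rw [show t = (t.1, t.2) from rfl]; exact hP t.1 t.2 B C hB hC) f B
  -- bounds on integrals of f
  have hIle : ∀ (t : W × A) (f : BoundedContinuousFunction W ℝ),
      |∫ x, f x ∂(P1 t)| ≤ ‖f‖ := fun t f => by
    simpa [Real.norm_eq_abs] using f.norm_integral_le_norm (P1 t)
  have hqle : ∀ (t : W × A) (B : Set Y), ((Q1 t) B).toReal ≤ 1 := fun t B => by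
    rw [← ENNReal.toReal_one]
    exact ENNReal.toReal_mono ENNReal.one_ne_top prob_le_one
  have hqnonneg : ∀ (t : W × A) (B : Set Y), 0 ≤ ((Q1 t) B).toReal := fun t B =>
    ENNReal.toReal_nonneg
  -- bddAbove for Feller sup
  have hbddF : ∀ (t t' : W × A) (f : BoundedContinuousFunction W ℝ),
      BddAbove (Set.range fun B : {B : Set Y // MeasurableSet B} =>
        |(∫ x in Set.univ ×ˢ B.1, f x.1 ∂(P t')) - ∫ x in Set.univ ×ˢ B.1, f x.1 ∂(P t)|) := by
    intro t t' f
    refine ⟨2 * ‖f‖, ?_⟩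
    rintro x ⟨B, rfl⟩
    simp only [key]
    have e1 : |(∫ x, f x ∂(P1 t')) * ((Q1 t') B.1).toReal| ≤ ‖f‖ * 1 := by
      rw [abs_mul]
      exact mul_le_mul (hIle _ _)
        (by rw [abs_of_nonneg (hqnonneg _ _)]; exact hqle _ _) (abs_nonneg _) (norm_nonneg _)
    have e2 : |(∫ x, f x ∂(P1 t)) * ((Q1 t) B.1).toReal| ≤ ‖f‖ * 1 := by
      rw [abs_mul]
      exact mul_le_mul (hIle _ _)
        (by rw [abs_of_nonneg (hqnonneg _ _)]; exact hqle _ _) (abs_nonneg _) (norm_nonneg _)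
    calc |(∫ x, f x ∂(P1 t')) * ((Q1 t') B.1).toReal - (∫ x, f x ∂(P1 t)) * ((Q1 t) B.1).toReal|
        ≤ |(∫ x, f x ∂(P1 t')) * ((Q1 t') B.1).toReal| +
          |(∫ x, f x ∂(P1 t)) * ((Q1 t) B.1).toReal| := abs_sub _ _
      _ ≤ ‖f‖ * 1 + ‖f‖ * 1 := add_le_add e1 e2
      _ = 2 * ‖f‖ := by ring
  -- bddAbove for TV sup
  have hbddTV : ∀ (t t' : W × A),
      BddAbove (Set.range fun C : {C : Set Y // MeasurableSet C} =>
        |((Q1 t') C.1).toReal - ((Q1 t) C.1).toReal|) := by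
    intro t t'
    refine ⟨2, ?_⟩
    rintro x ⟨C, rfl⟩
    calc |((Q1 t') C.1).toReal - ((Q1 t) C.1).toReal|
        ≤ |((Q1 t') C.1).toReal| + |((Q1 t) C.1).toReal| := abs_sub _ _
      _ ≤ 1 + 1 := by
          rw [abs_of_nonneg (hqnonneg _ _), abs_of_nonneg (hqnonneg _ _)]
          exact add_le_add (hqle _ _) (hqle _ _)
      _ = 2 := by norm_num
  constructor
  · intro h
    constructor
    · -- weak continuity of P1
      intro p p₀ hp f
      have hs := h p p₀ hp f
      rw [tendsto_iff_dist_tendsto_zero]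
      simp only [Real.dist_eq]
      refine squeeze_zero (fun n => abs_nonneg _) (fun n => ?_) hs
      refine le_trans ?_ (le_ciSup (hbddF p₀ (p n) f) (⟨Set.univ, MeasurableSet.univ⟩ :
        {B : Set Y // MeasurableSet B}))
      rw [key, key]
      simp [measure_univ]
    · -- TV continuity of Q1
      intro p p₀ hp
      have hs := h p p₀ hp 1
      have heq : (fun n => ⨆ B : {B : Set Y // MeasurableSet B},
          |(∫ x in Set.univ ×ˢ B.1, (1 : BoundedContinuousFunction W ℝ) x.1 ∂(P (p n))) -
            ∫ x in Set.univ ×ˢ B.1, (1 : BoundedContinuousFunction W ℝ) x.1 ∂(P p₀)|) =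
          (fun n => ⨆ C : {C : Set Y // MeasurableSet C},
            |((Q1 (p n)) C.1).toReal - ((Q1 p₀) C.1).toReal|) := by
        funext n
        congr 1
        funext B
        rw [key, key]
        simp
      rwa [heq] at hs
  · rintro ⟨h1, h2⟩ s t hst f
    have hI : Tendsto (fun n => |(∫ x, f x ∂(P1 (s n))) - ∫ x, f x ∂(P1 t)|) atTop (𝓝 0) := by
      have := (h1 s t hst f).sub_const (∫ x, f x ∂(P1 t))
      simpa using this.abs
    have hQ := h2 s t hst
    set S : ℕ → ℝ := fun n => ⨆ C : {C : Set Y // MeasurableSet C},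
      |((Q1 (s n)) C.1).toReal - ((Q1 t) C.1).toReal| with hS
    have hbound : ∀ n, (⨆ B : {B : Set Y // MeasurableSet B},
        |(∫ x in Set.univ ×ˢ B.1, f x.1 ∂(P (s n))) - ∫ x in Set.univ ×ˢ B.1, f x.1 ∂(P t)|) ≤
        |(∫ x, f x ∂(P1 (s n))) - ∫ x, f x ∂(P1 t)| + ‖f‖ * S n := by
      intro n
      refine ciSup_le fun B => ?_
      rw [key, key]
      set a' := ∫ x, f x ∂(P1 (s n))
      set a := ∫ x, f x ∂(P1 t)
      set b' := ((Q1 (s n)) B.1).toReal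
      set b := ((Q1 t) B.1).toReal
      have step1 : |a' * b' - a * b| ≤ |a' - a| * |b'| + |a| * |b' - b| := by
        have h0 : a' * b' - a * b = (a' - a) * b' + a * (b' - b) := by ring
        rw [h0]
        calc |(a' - a) * b' + a * (b' - b)| ≤ |(a' - a) * b'| + |a * (b' - b)| := abs_add_le _ _
          _ = |a' - a| * |b'| + |a| * |b' - b| := by rw [abs_mul, abs_mul]
      refine step1.trans ?_
      have t1 : |a' - a| * |b'| ≤ |a' - a| * 1 :=
        mul_le_mul_of_nonneg_left
          (by rw [abs_of_nonneg (hqnonneg _ _)]; exact hqle _ _) (abs_nonneg _)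
      have hbB : |b' - b| ≤ S n := le_ciSup (hbddTV t (s n)) B
      have t2 : |a| * |b' - b| ≤ ‖f‖ * S n :=
        mul_le_mul (hIle _ _) hbB (abs_nonneg _) (norm_nonneg _)
      calc |a' - a| * |b'| + |a| * |b' - b| ≤ |a' - a| * 1 + ‖f‖ * S n := add_le_add t1 t2
        _ = |a' - a| + ‖f‖ * S n := by rw [mul_one]
    refine squeeze_zero (fun n => Real.iSup_nonneg fun B => abs_nonneg _) hbound ?_
    have := hI.add (hQ.const_mul ‖f‖)
    simpa using this
end

section
/- Let P2 be a stochastic kernel on W given W×A and Q2 a stochastic kernel on Y given A×W, and define the stochastic kernel P on W×Y given W×A by P(B×C|w,a) := ∫_B Q2(C|a,w') P2(dw'|w,a) for Borel B ⊆ W and C ⊆ Y. If P2 is weakly continuous and Q2 is continuous in total variation, then P is semi-uniform Feller. -/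
open MeasureTheory ProbabilityTheory Filter Topology

open scoped ENNReal NNReal

open Finset in
theorem partition_aux (ψ : ℕ → ℝ) (m : ℕ) :
    ∑ i ∈ range m, ψ i * ∏ j ∈ range i, (1 - ψ j) = 1 - ∏ j ∈ range m, (1 - ψ j) := by
  induction m with
  | zero => simp
  | succ k ih => rw [Finset.sum_range_succ, Finset.prod_range_succ, ih]; ring

theorem key_lemma {W Y A : Type*}
    [MetricSpace W] [MeasurableSpace W] [BorelSpace W]
    [MetricSpace Y] [MeasurableSpace Y] [BorelSpace Y]
    [MetricSpace A] [MeasurableSpace A] [BorelSpace A]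
    (P2 : Kernel (W × A) W) [IsMarkovKernel P2]
    (Q2 : Kernel (A × W) Y) [IsMarkovKernel Q2]
    (P : Kernel (W × A) (W × Y)) [IsMarkovKernel P]
    (hP : ∀ (w : W) (a : A) (B : Set W) (C : Set Y), MeasurableSet B → MeasurableSet C →
      P (w, a) (B ×ˢ C) = ∫⁻ w' in B, Q2 (a, w') C ∂(P2 (w, a)))
    (f : BoundedContinuousFunction W ℝ) (w : W) (a : A) (B : Set Y) (hB : MeasurableSet B) :
    ∫ x in Set.univ ×ˢ B, f x.1 ∂(P (w, a))
      = ∫ w', f w' * (Q2 (a, w') B).toReal ∂(P2 (w, a)) := by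
  have gmeas : Measurable fun w' => Q2 (a, w') B :=
    (Q2.measurable_coe hB).comp measurable_prodMk_left
  have hres : ((P (w, a)).restrict (Set.univ ×ˢ B)).map Prod.fst
      = (P2 (w, a)).withDensity (fun w' => Q2 (a, w') B) := by
    ext A' hA'
    rw [Measure.map_apply measurable_fst hA', Measure.restrict_apply (measurable_fst hA')]
    have hset : (Prod.fst ⁻¹' A') ∩ (Set.univ ×ˢ B) = A' ×ˢ B := by
      ext ⟨u, v⟩; simp [Set.mem_prod]
    rw [hset, withDensity_apply _ hA']
    exact hP w a A' B hA' hB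
  have h1 : ∫ x in Set.univ ×ˢ B, f x.1 ∂(P (w, a))
      = ∫ w', f w' ∂(((P (w, a)).restrict (Set.univ ×ˢ B)).map Prod.fst) := by
    rw [integral_map measurable_fst.aemeasurable f.continuous.aestronglyMeasurable]
  rw [h1, hres]
  have hcongr : (P2 (w, a)).withDensity (fun w' => Q2 (a, w') B)
      = (P2 (w, a)).withDensity (fun w' => ((Q2 (a, w') B).toNNReal : ℝ≥0∞)) := by
    congr 1
    funext w'
    exact (ENNReal.coe_toNNReal (measure_ne_top _ _)).symm
  rw [hcongr, integral_withDensity_eq_integral_smul gmeas.ennreal_toNNReal]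
  congr 1
  funext w'
  rw [NNReal.smul_def, smul_eq_mul, mul_comm]
  rfl


set_option maxHeartbeats 1000000 in
/-- For a `POMDP₂` with transition kernel `P(B × C | w, a) = ∫_B Q₂(C | a, w') P₂(dw' | w, a)`,
if `P₂` is weakly continuous and `Q₂` is continuous in total variation, then `P` is semi-uniform
Feller. -/
theorem semiUniformFeller_pomdp2_weak_tv
    {W Y A : Type*}
    [MetricSpace W] [TopologicalSpace.SeparableSpace W] [MeasurableSpace W] [BorelSpace W]
    [StandardBorelSpace W] [Nonempty W]
    [MetricSpace Y] [TopologicalSpace.SeparableSpace Y] [MeasurableSpace Y] [BorelSpace Y]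
    [StandardBorelSpace Y] [Nonempty Y]
    [MetricSpace A] [TopologicalSpace.SeparableSpace A] [MeasurableSpace A] [BorelSpace A]
    [StandardBorelSpace A] [Nonempty A]
    (P2 : Kernel (W × A) W) [IsMarkovKernel P2]
    (Q2 : Kernel (A × W) Y) [IsMarkovKernel Q2]
    (P : Kernel (W × A) (W × Y)) [IsMarkovKernel P]
    (hP : ∀ (w : W) (a : A) (B : Set W) (C : Set Y), MeasurableSet B → MeasurableSet C →
      P (w, a) (B ×ˢ C) = ∫⁻ w' in B, Q2 (a, w') C ∂(P2 (w, a)))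
    (hP2 : ∀ (p : ℕ → W × A) (p₀ : W × A), Tendsto p atTop (𝓝 p₀) →
      ∀ f : BoundedContinuousFunction W ℝ,
        Tendsto (fun n => ∫ x, f x ∂(P2 (p n))) atTop (𝓝 (∫ x, f x ∂(P2 p₀))))
    (hQ2 : ∀ (p : ℕ → A × W) (p₀ : A × W), Tendsto p atTop (𝓝 p₀) →
      Tendsto (fun n => ⨆ C : {C : Set Y // MeasurableSet C},
        |((Q2 (p n)) C.1).toReal - ((Q2 p₀) C.1).toReal|) atTop (𝓝 0)) :
    SemiUniformFeller P := by
  intro s t hst f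
  have hsa : Tendsto (fun n => (s n).2) atTop (𝓝 t.2) :=
    (continuous_snd.continuousAt.tendsto).comp hst
  set M : ℝ := ‖f‖ with hM_def
  have hM0 : (0 : ℝ) ≤ M := norm_nonneg f
  have hfM : ∀ w : W, |f w| ≤ M := fun w => by
    rw [← Real.norm_eq_abs]; exact f.norm_coe_le_norm w
  have hκ0 : ∀ (q : A × W) (C : Set Y), (0:ℝ) ≤ (Q2 q C).toReal := fun _ _ => ENNReal.toReal_nonneg
  have hκ1 : ∀ (q : A × W) (C : Set Y), (Q2 q C).toReal ≤ 1 := fun q C => by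
    simpa using ENNReal.toReal_mono ENNReal.one_ne_top (prob_le_one (μ := Q2 q) (s := C))
  have hbddS : ∀ p q : A × W, BddAbove (Set.range fun C : {C : Set Y // MeasurableSet C} =>
      |(Q2 p C.1).toReal - (Q2 q C.1).toReal|) := by
    intro p q
    refine ⟨1, ?_⟩
    rintro x ⟨C, rfl⟩
    rw [abs_sub_le_iff]
    constructor <;> [skip; skip] <;>
      linarith [hκ1 p C.1, hκ1 q C.1, hκ0 p C.1, hκ0 q C.1]
  have hleS : ∀ (p q : A × W) (C : Set Y) (hC : MeasurableSet C),
      |(Q2 p C).toReal - (Q2 q C).toReal| ≤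
        ⨆ C : {C : Set Y // MeasurableSet C}, |(Q2 p C.1).toReal - (Q2 q C.1).toReal| :=
    fun p q C hC => le_ciSup (hbddS p q) ⟨C, hC⟩
  -- claim A : local-in-w uniform (in B) closeness of Q2 along the sequence
  have claimA : ∀ (x : W) (ε : ℝ), 0 < ε → ∃ δ : ℝ, ∃ N : ℕ, 0 < δ ∧
      ∀ n, N ≤ n → ∀ w, dist w x < δ → ∀ B : Set Y, MeasurableSet B →
        |(Q2 ((s n).2, w) B).toReal - (Q2 (t.2, w) B).toReal| ≤ ε := by
    intro x ε hε
    by_contra hcon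
    push_neg at hcon
    have H : ∀ k : ℕ, ∃ n, k ≤ n ∧ ∃ w, dist w x < 1/(k+1) ∧ ∃ B : Set Y,
        MeasurableSet B ∧ ε < |(Q2 ((s n).2, w) B).toReal - (Q2 (t.2, w) B).toReal| := by
      intro k
      rcases hcon (1/(k+1)) k (by positivity) with ⟨n, hn, w, hw, B, hB, hgt⟩
      exact ⟨n, hn, w, hw, B, hB, hgt⟩
    choose n hn w hw B hBm hBgt using H
    have hnt : Tendsto n atTop atTop := tendsto_atTop_mono hn tendsto_id
    have hwt : Tendsto w atTop (𝓝 x) :=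
      tendsto_iff_dist_tendsto_zero.mpr (squeeze_zero (fun k => dist_nonneg)
        (fun k => (hw k).le) tendsto_one_div_add_atTop_nhds_zero_nat)
    have hS1 := hQ2 (fun k => ((s (n k)).2, w k)) (t.2, x)
      ((hsa.comp hnt).prodMk_nhds hwt)
    have hS2 := hQ2 (fun k => (t.2, w k)) (t.2, x)
      (tendsto_const_nhds.prodMk_nhds hwt)
    obtain ⟨k, hk1, hk2⟩ :=
      ((hS1.eventually_lt_const (half_pos hε)).and (hS2.eventually_lt_const (half_pos hε))).exists
    have t1 := hleS ((s (n k)).2, w k) (t.2, x) (B k) (hBm k)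
    have t2 := hleS (t.2, w k) (t.2, x) (B k) (hBm k)
    have tri := abs_sub_le ((Q2 ((s (n k)).2, w k) (B k)).toReal)
      ((Q2 (t.2, x) (B k)).toReal) ((Q2 (t.2, w k) (B k)).toReal)
    have := hBgt k
    rw [abs_sub_comm ((Q2 (t.2, w k) (B k)).toReal)] at t2
    linarith
  -- claim B : TV-continuity of w ↦ Q2 (t.2, w) plus continuity of f, locally at x
  have claimB : ∀ (x : W) (ε : ℝ), 0 < ε → ∃ δ : ℝ, 0 < δ ∧
      ∀ w, dist w x < δ →
        (∀ B : Set Y, MeasurableSet B →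
          |(Q2 (t.2, w) B).toReal - (Q2 (t.2, x) B).toReal| ≤ ε) ∧ |f w - f x| ≤ ε := by
    intro x ε hε
    have hfc : ∃ δf : ℝ, 0 < δf ∧ ∀ w, dist w x < δf → |f w - f x| ≤ ε := by
      rcases Metric.continuousAt_iff.mp (f.continuous.continuousAt (x := x)) ε hε with
        ⟨δf, hδf, hf⟩
      exact ⟨δf, hδf, fun w hwx => by
        have := hf hwx
        rw [Real.dist_eq] at this
        exact this.le⟩
    have htv : ∃ δt : ℝ, 0 < δt ∧ ∀ w, dist w x < δt → ∀ B : Set Y, MeasurableSet B →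
        |(Q2 (t.2, w) B).toReal - (Q2 (t.2, x) B).toReal| ≤ ε := by
      by_contra hcon
      push_neg at hcon
      have H : ∀ k : ℕ, ∃ w, dist w x < 1/(k+1) ∧ ∃ B : Set Y,
          MeasurableSet B ∧ ε < |(Q2 (t.2, w) B).toReal - (Q2 (t.2, x) B).toReal| := by
        intro k
        rcases hcon (1/(k+1)) (by positivity) with ⟨w, hw, B, hB, hgt⟩
        exact ⟨w, hw, B, hB, hgt⟩
      choose w hw B hBm hBgt using H
      have hwt : Tendsto w atTop (𝓝 x) :=
        tendsto_iff_dist_tendsto_zero.mpr (squeeze_zero (fun k => dist_nonneg)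
          (fun k => (hw k).le) tendsto_one_div_add_atTop_nhds_zero_nat)
      have hS := hQ2 (fun k => (t.2, w k)) (t.2, x) (tendsto_const_nhds.prodMk_nhds hwt)
      obtain ⟨k, hk⟩ := (hS.eventually_lt_const hε).exists
      have t1 := hleS (t.2, w k) (t.2, x) (B k) (hBm k)
      linarith [hBgt k]
    rcases hfc with ⟨δf, hδf, hf⟩
    rcases htv with ⟨δt, hδt, ht⟩
    refine ⟨min δf δt, lt_min hδf hδt, fun w hwx => ⟨ht w (hwx.trans_le (min_le_right _ _)), ?_⟩⟩
    exact hf w (hwx.trans_le (min_le_left _ _))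
  -- the integrand functions and their properties
  have hκmeas : ∀ (b : A) (B : Set Y), MeasurableSet B →
      Measurable fun w : W => (Q2 (b, w) B).toReal := fun b B hB =>
    ((Q2.measurable_coe hB).comp measurable_prodMk_left).ennreal_toReal
  have hHint : ∀ (ν : Measure W), IsProbabilityMeasure ν → ∀ (b : A) (B : Set Y),
      MeasurableSet B → Integrable (fun w => f w * (Q2 (b, w) B).toReal) ν := by
    intro ν hν b B hB
    refine Integrable.mono' (integrable_const M)
      ((f.continuous.measurable.mul (hκmeas b B hB)).aestronglyMeasurable) ?_
    filter_upwards with w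
    rw [Real.norm_eq_abs, abs_mul]
    calc |f w| * |(Q2 (b, w) B).toReal| ≤ M * 1 := by
          apply mul_le_mul (hfM w) _ (abs_nonneg _) hM0
          rw [abs_of_nonneg (hκ0 _ _)]; exact hκ1 _ _
      _ = M := mul_one M
  have key : ∀ (p : W × A) (B : Set Y), MeasurableSet B →
      ∫ x in Set.univ ×ˢ B, f x.1 ∂(P p)
        = ∫ w', f w' * (Q2 (p.2, w') B).toReal ∂(P2 p) := fun p B hB =>
    key_lemma P2 Q2 P hP f p.1 p.2 B hB
  -- main estimate
  rw [NormedAddCommGroup.tendsto_nhds_zero]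
  intro ε' hε'
  set ε : ℝ := min 1 (ε' / (20 * (M + 1))) with hε_def
  have hε : 0 < ε := lt_min one_pos (by positivity)
  have hε1 : ε ≤ 1 := min_le_left _ _
  have hεε' : ε * (20 * (M + 1)) ≤ ε' := by
    have h1 : ε ≤ ε' / (20 * (M + 1)) := min_le_right _ _
    have h2 : (0:ℝ) < 20 * (M + 1) := by positivity
    calc ε * (20 * (M + 1)) ≤ (ε' / (20 * (M + 1))) * (20 * (M + 1)) :=
          mul_le_mul_of_nonneg_right h1 h2.le
      _ = ε' := div_mul_cancel₀ _ h2.ne'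
  -- combine the claims at tolerance ε
  have claim : ∀ x : W, ∃ δ : ℝ, ∃ N : ℕ, 0 < δ ∧
      (∀ n, N ≤ n → ∀ w, dist w x < δ → ∀ B : Set Y, MeasurableSet B →
        |(Q2 ((s n).2, w) B).toReal - (Q2 (t.2, w) B).toReal| ≤ ε) ∧
      (∀ w, dist w x < δ →
        (∀ B : Set Y, MeasurableSet B →
          |(Q2 (t.2, w) B).toReal - (Q2 (t.2, x) B).toReal| ≤ ε) ∧ |f w - f x| ≤ ε) := by
    intro x
    obtain ⟨δ1, N, hδ1, h1⟩ := claimA x ε hε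
    obtain ⟨δ2, hδ2, h2⟩ := claimB x ε hε
    refine ⟨min δ1 δ2, N, lt_min hδ1 hδ2, fun n hn w hwx => h1 n hn w
      (hwx.trans_le (min_le_left _ _)), fun w hwx => h2 w (hwx.trans_le (min_le_right _ _))⟩
  choose δ N hδ hlocA hlocB using claim
  -- countable cover by balls of half radius
  have : SecondCountableTopology W := UniformSpace.secondCountable_of_separable W
  obtain ⟨c, hcc, hcov⟩ := TopologicalSpace.countable_cover_nhds
    (f := fun x => Metric.ball x (δ x / 2)) (fun x => Metric.ball_mem_nhds x (half_pos (hδ x)))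
  obtain ⟨e, he⟩ := ((hcc.insert (Classical.arbitrary W)).exists_eq_range
    (Set.insert_nonempty _ _))
  have hcover : (⋃ i, Metric.ball (e i) (δ (e i) / 2)) = Set.univ := by
    apply Set.eq_univ_of_forall
    intro x
    have hx : x ∈ ⋃ y ∈ c, Metric.ball y (δ y / 2) := by rw [hcov]; trivial
    simp only [Set.mem_iUnion] at hx ⊢
    obtain ⟨y, hyc, hxy⟩ := hx
    have hy : y ∈ Set.range e := by rw [← he]; exact Set.mem_insert_of_mem _ hyc
    obtain ⟨i, rfl⟩ := hy
    exact ⟨i, hxy⟩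
  -- choose m with large mass
  have hGmono : Monotone (fun m => ⋃ i ∈ Finset.range m, Metric.ball (e i) (δ (e i) / 2)) := by
    intro p q hpq x hx
    simp only [Set.mem_iUnion, Finset.mem_range] at hx ⊢
    obtain ⟨i, hi, hxi⟩ := hx
    exact ⟨i, lt_of_lt_of_le hi hpq, hxi⟩
  have hGunion : (⋃ m, ⋃ i ∈ Finset.range m, Metric.ball (e i) (δ (e i) / 2)) = Set.univ := by
    apply Set.eq_univ_of_univ_subset
    rw [← hcover]
    intro x hx
    simp only [Set.mem_iUnion] at hx ⊢
    obtain ⟨i, hxi⟩ := hx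
    exact ⟨i + 1, i, Finset.mem_range.mpr (Nat.lt_succ_self i), hxi⟩
  have hμtend : Tendsto (fun m => P2 t (⋃ i ∈ Finset.range m, Metric.ball (e i) (δ (e i) / 2)))
      atTop (𝓝 1) := by
    have := MeasureTheory.tendsto_measure_iUnion_atTop (μ := P2 t) hGmono
    rwa [hGunion, measure_univ] at this
  have hsub1 : (1 : ℝ≥0∞) - ENNReal.ofReal ε < 1 :=
    ENNReal.sub_lt_self ENNReal.one_ne_top one_ne_zero
      (by simpa [ENNReal.ofReal_pos] using hε)
  obtain ⟨m, hm⟩ := (hμtend.eventually_const_lt hsub1).exists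
  -- the partition of unity
  set G : Set W := ⋃ i ∈ Finset.range m, Metric.ball (e i) (δ (e i) / 2) with hG_def
  set ψ : ℕ → W → ℝ := fun i w => min 1 (max 0 (2 - 2 * dist w (e i) / δ (e i))) with hψ_def
  have hψ01 : ∀ i w, 0 ≤ ψ i w ∧ ψ i w ≤ 1 := by
    intro i w
    constructor
    · exact le_min one_pos.le (le_max_left _ _)
    · exact min_le_left _ _
  have hψcont : ∀ i, Continuous (ψ i) := by
    intro i
    apply Continuous.min continuous_const
    apply Continuous.max continuous_const
    exact (continuous_const.sub (((continuous_const.mul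
      (continuous_id.dist continuous_const)).div_const _)))
  have hψeq1 : ∀ i w, dist w (e i) < δ (e i) / 2 → ψ i w = 1 := by
    intro i w hw
    have h0 : 0 < δ (e i) := hδ (e i)
    have : (1:ℝ) ≤ 2 - 2 * dist w (e i) / δ (e i) := by
      rw [le_sub_iff_add_le]
      have : 2 * dist w (e i) / δ (e i) ≤ 1 := by
        rw [div_le_one h0]; linarith
      linarith
    simp only [hψ_def]
    rw [max_eq_right (by linarith [dist_nonneg (x := w) (y := e i)] : (0:ℝ) ≤ _), min_eq_left this]
  have hψne0 : ∀ i w, ψ i w ≠ 0 → dist w (e i) < δ (e i) := by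
    intro i w hne
    by_contra hge
    push_neg at hge
    apply hne
    have h0 : 0 < δ (e i) := hδ (e i)
    have : 2 - 2 * dist w (e i) / δ (e i) ≤ 0 := by
      have : (2:ℝ) ≤ 2 * dist w (e i) / δ (e i) := by
        rw [le_div_iff₀ h0]; linarith
      linarith
    simp only [hψ_def]
    rw [max_eq_left this, min_eq_right zero_le_one]
  set φ : ℕ → W → ℝ := fun i w => ψ i w * ∏ j ∈ Finset.range i, (1 - ψ j w) with hφ_def
  set Φ : W → ℝ := fun w => ∑ i ∈ Finset.range m, φ i w with hΦ_def
  have hΦeq : ∀ w, Φ w = 1 - ∏ i ∈ Finset.range m, (1 - ψ i w) := fun w =>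
    partition_aux (fun i => ψ i w) m
  have hprod01 : ∀ (k : ℕ) (w : W), 0 ≤ ∏ j ∈ Finset.range k, (1 - ψ j w) ∧
      ∏ j ∈ Finset.range k, (1 - ψ j w) ≤ 1 := by
    intro k w
    constructor
    · exact Finset.prod_nonneg (fun j _ => by linarith [(hψ01 j w).2])
    · exact Finset.prod_le_one (fun j _ => by linarith [(hψ01 j w).2])
        (fun j _ => by linarith [(hψ01 j w).1])
  have hφ01 : ∀ i w, 0 ≤ φ i w ∧ φ i w ≤ 1 := by
    intro i w
    constructor
    · exact mul_nonneg (hψ01 i w).1 (hprod01 i w).1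
    · calc ψ i w * ∏ j ∈ Finset.range i, (1 - ψ j w) ≤ 1 * 1 :=
            mul_le_mul (hψ01 i w).2 (hprod01 i w).2 (hprod01 i w).1 one_pos.le
        _ = 1 := mul_one 1
  have hΦ01 : ∀ w, 0 ≤ Φ w ∧ Φ w ≤ 1 := by
    intro w
    rw [hΦeq w]
    constructor <;> [linarith [(hprod01 m w).2]; linarith [(hprod01 m w).1]]
  have hΦG : ∀ w ∈ G, Φ w = 1 := by
    intro w hw
    rw [hΦeq w]
    simp only [hG_def, Set.mem_iUnion] at hw
    obtain ⟨i, hi, hwi⟩ := hw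
    rw [Finset.prod_eq_zero hi]
    · ring
    · rw [hψeq1 i w (by simpa using hwi)]; ring
  have hΦsupp : ∀ w, Φ w ≠ 0 → ∃ i, i ∈ Finset.range m ∧ dist w (e i) < δ (e i) := by
    intro w hw
    obtain ⟨i, hi, hφi⟩ := Finset.exists_ne_zero_of_sum_ne_zero hw
    refine ⟨i, hi, hψne0 i w ?_⟩
    intro h0
    exact hφi (by simp [hφ_def, h0])
  have hφsupp : ∀ i w, φ i w ≠ 0 → dist w (e i) < δ (e i) := by
    intro i w hne
    refine hψne0 i w ?_
    intro h0
    exact hne (by simp [hφ_def, h0])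
  -- bounded continuous versions of the φ i
  have hφcont : ∀ i, Continuous (φ i) := by
    intro i
    exact (hψcont i).mul (continuous_finset_prod _ (fun j _ => continuous_const.sub (hψcont j)))
  set φB : ℕ → BoundedContinuousFunction W ℝ := fun i =>
    BoundedContinuousFunction.ofNormedAddCommGroup (φ i) (hφcont i) 1
      (fun w => by rw [Real.norm_eq_abs, abs_of_nonneg (hφ01 i w).1]; exact (hφ01 i w).2)
    with hφB_def
  have hφBcoe : ∀ i (w : W), φB i w = φ i w := fun i w => rfl
  have hφint : ∀ (ν : Measure W), IsProbabilityMeasure ν → ∀ i, Integrable (φ i) ν := by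
    intro ν hν i
    have := (φB i).integrable ν
    exact this
  have hΦint : ∀ (ν : Measure W), IsProbabilityMeasure ν → Integrable Φ ν := by
    intro ν hν
    simp only [hΦ_def]
    exact integrable_finset_sum _ (fun i _ => hφint ν hν i)
  -- convergence of the integrals of φ i and of Φ
  have hφtend : ∀ i, Tendsto (fun n => ∫ w, φ i w ∂(P2 (s n))) atTop
      (𝓝 (∫ w, φ i w ∂(P2 t))) := by
    intro i
    have := hP2 s t hst (φB i)
    simpa [hφBcoe] using this
  have hΦtend : Tendsto (fun n => ∫ w, Φ w ∂(P2 (s n))) atTop (𝓝 (∫ w, Φ w ∂(P2 t))) := by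
    have h1 : ∀ (ν : Measure W), IsProbabilityMeasure ν →
        ∫ w, Φ w ∂ν = ∑ i ∈ Finset.range m, ∫ w, φ i w ∂ν := by
      intro ν hν
      simp only [hΦ_def]
      exact integral_finset_sum _ (fun i _ => hφint ν hν i)
    have hconv : Tendsto (fun n => ∑ i ∈ Finset.range m, ∫ w, φ i w ∂(P2 (s n))) atTop
        (𝓝 (∑ i ∈ Finset.range m, ∫ w, φ i w ∂(P2 t))) :=
      tendsto_finset_sum _ (fun i _ => hφtend i)
    rw [h1 (P2 t) inferInstance]
    refine hconv.congr (fun n => ?_)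
    rw [h1 (P2 (s n)) inferInstance]
  set cΦ : ℝ := ∫ w, Φ w ∂(P2 t) with hcΦ_def
  have hGmeas : MeasurableSet G := by
    apply MeasurableSet.biUnion (Finset.countable_toSet _)
    intro i _
    exact Metric.isOpen_ball.measurableSet
  have hcΦ_big : 1 - ε < cΦ := by
    have h1 : ((P2 t) G).toReal ≤ cΦ := by
      have h2 : ∫ w in G, Φ w ∂(P2 t) ≤ cΦ :=
        setIntegral_le_integral (hΦint (P2 t) inferInstance)
          (Filter.Eventually.of_forall (fun w => (hΦ01 w).1))
      have h3 : ∫ w in G, Φ w ∂(P2 t) = ((P2 t) G).toReal := by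
        rw [setIntegral_congr_fun hGmeas (fun w hw => hΦG w hw)]
        simp; rfl
      linarith
    have h4 : (1 : ℝ) - ε < ((P2 t) G).toReal := by
      have h5 : ((1 : ℝ≥0∞) - ENNReal.ofReal ε).toReal < ((P2 t) G).toReal := by
        apply ENNReal.toReal_strict_mono (measure_ne_top _ _) hm
      rw [ENNReal.toReal_sub_of_le (ENNReal.ofReal_le_one.mpr hε1) ENNReal.one_ne_top] at h5
      rw [ENNReal.toReal_one, ENNReal.toReal_ofReal hε.le] at h5
      exact h5
    linarith
  -- the error terms
  set E : ℕ → ℝ := fun n =>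
    ∑ i ∈ Finset.range m, |∫ w, φ i w ∂(P2 (s n)) - ∫ w, φ i w ∂(P2 t)| with hE_def
  have hEtend : Tendsto E atTop (𝓝 0) := by
    have : Tendsto (fun n => ∑ i ∈ Finset.range m,
        |∫ w, φ i w ∂(P2 (s n)) - ∫ w, φ i w ∂(P2 t)|) atTop
        (𝓝 (∑ i ∈ Finset.range m, |∫ w, φ i w ∂(P2 t) - ∫ w, φ i w ∂(P2 t)|)) := by
      apply tendsto_finset_sum
      intro i _
      exact (((hφtend i).sub tendsto_const_nhds).abs)
    simpa using this
  set N₀ : ℕ := Finset.sup (Finset.range m) (fun i => N (e i)) with hN₀_def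
  -- the main per-B bound
  have main : ∀ n, N₀ ≤ n → E n < ε →
      1 - ∫ w, Φ w ∂(P2 (s n)) < 2 * ε →
      ∀ B : Set Y, MeasurableSet B →
        |(∫ x in Set.univ ×ˢ B, f x.1 ∂(P (s n))) - ∫ x in Set.univ ×ˢ B, f x.1 ∂(P t)|
          ≤ ε * (11 * M + 2) := by
    intro n hn hEn hcn B hB
    have hprobn : IsProbabilityMeasure ((P2 (s n) : Measure W)) := inferInstance
    have hprob : IsProbabilityMeasure ((P2 t : Measure W)) := inferInstance
    rw [key (s n) B hB, key t B hB]
    have habs_int : ∀ (ν : Measure W) (g : W → ℝ), |∫ w, g w ∂ν| ≤ ∫ w, |g w| ∂ν := by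
      intro ν g
      simpa [Real.norm_eq_abs] using norm_integral_le_integral_norm (μ := ν) g
    set κn : W → ℝ := fun w => (Q2 ((s n).2, w) B).toReal with hκn_def
    set κz : W → ℝ := fun w => (Q2 (t.2, w) B).toReal with hκz_def
    set ρ : W → ℝ := fun w =>
      ∑ i ∈ Finset.range m, (f (e i) * κz (e i)) * φ i w with hρ_def
    set cn : ℝ := ∫ w, Φ w ∂(P2 (s n)) with hcn_def
    -- pointwise bound A
    have hptA : ∀ w, |κn w - κz w| ≤ ε + 2 * (1 - Φ w) := by
      intro w
      by_cases hw : Φ w = 0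
      · rw [hw]
        have h1 : |κn w - κz w| ≤ 1 := by
          rw [abs_sub_le_iff]
          constructor <;>
            linarith [hκ1 ((s n).2, w) B, hκ1 (t.2, w) B, hκ0 ((s n).2, w) B, hκ0 (t.2, w) B]
        linarith
      · obtain ⟨i, hi, hdist⟩ := hΦsupp w hw
        have hNi : N (e i) ≤ n := le_trans (Finset.le_sup (f := fun i => N (e i)) hi) hn
        have := hlocA (e i) n hNi w hdist B hB
        have hΦle := (hΦ01 w).2
        calc |κn w - κz w| ≤ ε := this
          _ ≤ ε + 2 * (1 - Φ w) := by linarith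
    -- pointwise bound B
    have hptB : ∀ w, |f w * κz w - ρ w| ≤ (M + 1) * ε + M * (1 - Φ w) := by
      intro w
      have hexp : f w * κz w - ρ w =
          (∑ i ∈ Finset.range m, (f w * κz w - f (e i) * κz (e i)) * φ i w)
            + (f w * κz w) * (1 - Φ w) := by
        simp only [hρ_def, hΦ_def, sub_mul, Finset.sum_sub_distrib, ← Finset.mul_sum]
        ring
      rw [hexp]
      have hterm : ∀ i ∈ Finset.range m,
          |(f w * κz w - f (e i) * κz (e i)) * φ i w| ≤ ((M + 1) * ε) * φ i w := by
        intro i _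
        by_cases hzero : φ i w = 0
        · rw [hzero]; simp
        · have hdist := hφsupp i w hzero
          obtain ⟨hB1, hB2⟩ := hlocB (e i) w hdist
          have hdiff : |f w * κz w - f (e i) * κz (e i)| ≤ (M + 1) * ε := by
            have hre : f w * κz w - f (e i) * κz (e i)
                = f w * (κz w - κz (e i)) + (f w - f (e i)) * κz (e i) := by ring
            rw [hre]
            calc |f w * (κz w - κz (e i)) + (f w - f (e i)) * κz (e i)|
                ≤ |f w * (κz w - κz (e i))| + |(f w - f (e i)) * κz (e i)| := abs_add_le _ _
              _ = |f w| * |κz w - κz (e i)| + |f w - f (e i)| * |κz (e i)| := by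
                  rw [abs_mul, abs_mul]
              _ ≤ M * ε + ε * 1 := by
                  apply add_le_add
                  · exact mul_le_mul (hfM w) (hB1 B hB) (abs_nonneg _) hM0
                  · apply mul_le_mul hB2 _ (abs_nonneg _) hε.le
                    rw [abs_of_nonneg (hκ0 _ _)]; exact hκ1 _ _
              _ ≤ (M + 1) * ε := by ring_nf; linarith
          rw [abs_mul, abs_of_nonneg (hφ01 i w).1]
          exact mul_le_mul_of_nonneg_right hdiff (hφ01 i w).1
      have hsum : |∑ i ∈ Finset.range m, (f w * κz w - f (e i) * κz (e i)) * φ i w|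
          ≤ ((M + 1) * ε) * Φ w := by
        calc |∑ i ∈ Finset.range m, (f w * κz w - f (e i) * κz (e i)) * φ i w|
            ≤ ∑ i ∈ Finset.range m, |(f w * κz w - f (e i) * κz (e i)) * φ i w| :=
              Finset.abs_sum_le_sum_abs _ _
          _ ≤ ∑ i ∈ Finset.range m, ((M + 1) * ε) * φ i w := Finset.sum_le_sum hterm
          _ = ((M + 1) * ε) * Φ w := by rw [hΦ_def, ← Finset.mul_sum]
      have hlast : |(f w * κz w) * (1 - Φ w)| ≤ M * (1 - Φ w) := by
        rw [abs_mul, abs_of_nonneg (by linarith [(hΦ01 w).2] : (0:ℝ) ≤ 1 - Φ w)]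
        apply mul_le_mul_of_nonneg_right _ (by linarith [(hΦ01 w).2])
        rw [abs_mul]
        calc |f w| * |κz w| ≤ M * 1 := by
              apply mul_le_mul (hfM w) _ (abs_nonneg _) hM0
              rw [abs_of_nonneg (hκ0 _ _)]; exact hκ1 _ _
          _ = M := mul_one M
      have hΦle1 := (hΦ01 w).2
      have hMε : (0:ℝ) ≤ (M + 1) * ε := by positivity
      calc |(∑ i ∈ Finset.range m, (f w * κz w - f (e i) * κz (e i)) * φ i w)
            + (f w * κz w) * (1 - Φ w)|
          ≤ |∑ i ∈ Finset.range m, (f w * κz w - f (e i) * κz (e i)) * φ i w|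
            + |(f w * κz w) * (1 - Φ w)| := abs_add_le _ _
        _ ≤ ((M + 1) * ε) * Φ w + M * (1 - Φ w) := add_le_add hsum hlast
        _ ≤ (M + 1) * ε + M * (1 - Φ w) := by nlinarith
    -- integrability facts
    have hκnmeas : Measurable κn := hκmeas ((s n).2) B hB
    have hκzmeas : Measurable κz := hκmeas (t.2) B hB
    have hHn_int : Integrable (fun w => f w * κn w) (P2 (s n)) := hHint _ hprobn _ B hB
    have hH0_intn : Integrable (fun w => f w * κz w) (P2 (s n)) := hHint _ hprobn _ B hB
    have hH0_int : Integrable (fun w => f w * κz w) (P2 t) := hHint _ hprob _ B hB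
    have hρ_int : ∀ (ν : Measure W), IsProbabilityMeasure ν → Integrable ρ ν := by
      intro ν hν
      simp only [hρ_def]
      exact integrable_finset_sum _ (fun i _ => (hφint ν hν i).const_mul _)
    -- Term 1
    have hT1 : |(∫ w, f w * κn w ∂(P2 (s n))) - ∫ w, f w * κz w ∂(P2 (s n))|
        ≤ M * ε + 2 * M - 2 * M * cn := by
      rw [← integral_sub hHn_int hH0_intn]
      have habs : |∫ w, (f w * κn w - f w * κz w) ∂(P2 (s n))|
          ≤ ∫ w, |f w * κn w - f w * κz w| ∂(P2 (s n)) := habs_int _ _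
      refine habs.trans ?_
      have hbint : Integrable (fun w => (M * ε + 2 * M) - (2 * M) * Φ w) (P2 (s n)) :=
        (integrable_const _).sub ((hΦint _ hprobn).const_mul _)
      have hmono : ∫ w, |f w * κn w - f w * κz w| ∂(P2 (s n))
          ≤ ∫ w, ((M * ε + 2 * M) - (2 * M) * Φ w) ∂(P2 (s n)) := by
        apply integral_mono_of_nonneg (Filter.Eventually.of_forall fun w => abs_nonneg _) hbint
        filter_upwards with w
        have h1 : |f w * κn w - f w * κz w| = |f w| * |κn w - κz w| := by
          rw [← abs_mul]; ring_nf
        rw [h1]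
        calc |f w| * |κn w - κz w| ≤ M * (ε + 2 * (1 - Φ w)) :=
              mul_le_mul (hfM w) (hptA w) (abs_nonneg _) hM0
          _ = (M * ε + 2 * M) - (2 * M) * Φ w := by ring
      refine hmono.trans ?_
      rw [integral_sub (integrable_const _) ((hΦint _ hprobn).const_mul _),
        integral_const, integral_const_mul]
      simp [hcn_def]
    -- Term 2
    have hT2gen : ∀ (ν : Measure W), (hν : IsProbabilityMeasure ν) →
        |(∫ w, f w * κz w ∂ν) - ∫ w, ρ w ∂ν|
          ≤ (M + 1) * ε + M - M * ∫ w, Φ w ∂ν := by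
      intro ν hν
      rw [← integral_sub (hHint _ hν _ B hB) (hρ_int ν hν)]
      refine (habs_int _ _).trans ?_
      have hbint : Integrable (fun w => ((M + 1) * ε + M) - M * Φ w) ν :=
        (integrable_const _).sub ((hΦint _ hν).const_mul _)
      have hmono : ∫ w, |f w * κz w - ρ w| ∂ν
          ≤ ∫ w, (((M + 1) * ε + M) - M * Φ w) ∂ν := by
        apply integral_mono_of_nonneg (Filter.Eventually.of_forall fun w => abs_nonneg _) hbint
        filter_upwards with w
        calc |f w * κz w - ρ w| ≤ (M + 1) * ε + M * (1 - Φ w) := hptB w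
          _ = ((M + 1) * ε + M) - M * Φ w := by ring
      refine hmono.trans ?_
      rw [integral_sub (integrable_const _) ((hΦint _ hν).const_mul _),
        integral_const, integral_const_mul]
      simp
    -- Term 3
    have hT3 : |(∫ w, ρ w ∂(P2 (s n))) - ∫ w, ρ w ∂(P2 t)| ≤ M * E n := by
      have hρint_eq : ∀ (ν : Measure W), (hν : IsProbabilityMeasure ν) →
          ∫ w, ρ w ∂ν = ∑ i ∈ Finset.range m, (f (e i) * κz (e i)) * ∫ w, φ i w ∂ν := by
        intro ν hν
        simp only [hρ_def]
        rw [integral_finset_sum _ (fun i _ => (hφint ν hν i).const_mul _)]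
        exact Finset.sum_congr rfl (fun i _ => integral_const_mul _ _)
      rw [hρint_eq _ hprobn, hρint_eq _ hprob, ← Finset.sum_sub_distrib]
      calc |∑ i ∈ Finset.range m, ((f (e i) * κz (e i)) * ∫ w, φ i w ∂(P2 (s n))
              - (f (e i) * κz (e i)) * ∫ w, φ i w ∂(P2 t))|
          ≤ ∑ i ∈ Finset.range m, |(f (e i) * κz (e i)) * ∫ w, φ i w ∂(P2 (s n))
              - (f (e i) * κz (e i)) * ∫ w, φ i w ∂(P2 t)| := Finset.abs_sum_le_sum_abs _ _
        _ ≤ ∑ i ∈ Finset.range m, M * |(∫ w, φ i w ∂(P2 (s n))) - ∫ w, φ i w ∂(P2 t)| := by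
            apply Finset.sum_le_sum
            intro i _
            rw [← mul_sub, abs_mul]
            apply mul_le_mul_of_nonneg_right _ (abs_nonneg _)
            rw [abs_mul]
            calc |f (e i)| * |κz (e i)| ≤ M * 1 := by
                  apply mul_le_mul (hfM _) _ (abs_nonneg _) hM0
                  rw [abs_of_nonneg (hκ0 _ _)]; exact hκ1 _ _
              _ = M := mul_one M
        _ = M * E n := by rw [hE_def, Finset.mul_sum]
    -- combine
    have hT2 := hT2gen (P2 (s n)) hprobn
    have hT4 := hT2gen (P2 t) hprob
    rw [← hcn_def] at hT2
    rw [← hcΦ_def] at hT4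
    have p1 : 2 * M - 2 * M * cn ≤ 4 * M * ε := by nlinarith
    have p2 : M - M * cn ≤ 2 * M * ε := by nlinarith
    have p3 : M - M * cΦ ≤ M * ε := by nlinarith [hcΦ_big]
    have p4 : M * E n ≤ M * ε := mul_le_mul_of_nonneg_left hEn.le hM0
    have tri1 := abs_sub_le (∫ w, f w * κn w ∂(P2 (s n))) (∫ w, f w * κz w ∂(P2 (s n)))
      (∫ w, f w * κz w ∂(P2 t))
    have tri2 := abs_sub_le (∫ w, f w * κz w ∂(P2 (s n))) (∫ w, ρ w ∂(P2 (s n)))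
      (∫ w, f w * κz w ∂(P2 t))
    have tri3 := abs_sub_le (∫ w, ρ w ∂(P2 (s n))) (∫ w, ρ w ∂(P2 t))
      (∫ w, f w * κz w ∂(P2 t))
    have habs4 : |(∫ w, ρ w ∂(P2 t)) - ∫ w, f w * κz w ∂(P2 t)|
        = |(∫ w, f w * κz w ∂(P2 t)) - ∫ w, ρ w ∂(P2 t)| := abs_sub_comm _ _
    linarith [hT1, hT2, hT3, hT4]
  -- conclude
  have hfinal : ∀ᶠ n in atTop,
      ‖⨆ B : {B : Set Y // MeasurableSet B},
        |(∫ x in Set.univ ×ˢ B.1, f x.1 ∂(P (s n))) - ∫ x in Set.univ ×ˢ B.1, f x.1 ∂(P t)|‖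
        < ε' := by
    have hev1 : ∀ᶠ n in atTop, E n < ε := hEtend.eventually_lt_const hε
    have hev2 : ∀ᶠ n in atTop, 1 - ∫ w, Φ w ∂(P2 (s n)) < 2 * ε := by
      have h1 : Tendsto (fun n => 1 - ∫ w, Φ w ∂(P2 (s n))) atTop (𝓝 (1 - cΦ)) :=
        tendsto_const_nhds.sub hΦtend
      exact h1.eventually_lt_const (by linarith)
    have hev3 : ∀ᶠ n in atTop, N₀ ≤ n := eventually_ge_atTop N₀
    filter_upwards [hev1, hev2, hev3] with n h1 h2 h3
    have hsup_le : (⨆ B : {B : Set Y // MeasurableSet B},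
        |(∫ x in Set.univ ×ˢ B.1, f x.1 ∂(P (s n))) - ∫ x in Set.univ ×ˢ B.1, f x.1 ∂(P t)|)
        ≤ ε * (11 * M + 2) := by
      have : Nonempty {B : Set Y // MeasurableSet B} := ⟨⟨∅, MeasurableSet.empty⟩⟩
      exact ciSup_le (fun B => main n h3 h1 h2 B.1 B.2)
    have hsup_nonneg : (0:ℝ) ≤ ⨆ B : {B : Set Y // MeasurableSet B},
        |(∫ x in Set.univ ×ˢ B.1, f x.1 ∂(P (s n))) - ∫ x in Set.univ ×ˢ B.1, f x.1 ∂(P t)| :=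
      Real.iSup_nonneg (fun B => abs_nonneg _)
    rw [Real.norm_of_nonneg hsup_nonneg]
    have h5 : ε * (11 * M + 2) < ε * (20 * (M + 1)) := by
      apply mul_lt_mul_of_pos_left _ hε
      linarith
    linarith
  exact hfinal
end
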